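/- arXiv:2407.09664 — 5 statements merged into one kernel-verified Lean document; each statement's English description precedes it below -/
import Mathlib

section
/- Combinatorial Hoeffding inequality (version II, product matrices): let a_1,…,a_N and b_1,…,b_N be real numbers with means ā = N⁻¹Σ_i a_i and b̄ = N⁻¹Σ_j b_j, and let Y = Σ_{i=1}^N a_i b_{π(i)} for a uniform random permutation π of [N]. Define σ̄² = max_{s ∈ S_N} Σ_{i=1}^N (a_i − ā)² (b_{s(i)} − b̄)² (maximum over all permutations s of [N]) and σ² = (N−1)⁻¹ (Σ_{i=1}^N (a_i − ā)²)(Σ_{j=1}^N (b_j − b̄)²). Then for every t ≥ 0: P( Y − E[Y] ≥ t ) ≤ exp( −t² / (4 σ̄² + 4 σ²) ). -/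
open Finset
open scoped Classical

section Auxiliary

-- sinh v ≤ v cosh v for v ≥ 0
lemma sinh_le_mul_cosh {v : ℝ} (hv : 0 ≤ v) : Real.sinh v ≤ v * Real.cosh v := by
  have h : MonotoneOn (fun v : ℝ => v * Real.cosh v - Real.sinh v) (Set.Ici 0) := by
    have hd : ∀ x : ℝ, HasDerivAt (fun v : ℝ => v * Real.cosh v - Real.sinh v)
        (x * Real.sinh x) x := by
      intro x
      have h1 : HasDerivAt (fun v : ℝ => v * Real.cosh v)
          (1 * Real.cosh x + x * Real.sinh x) x :=
        (hasDerivAt_id x).mul (Real.hasDerivAt_cosh x)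
      have := h1.fun_sub (Real.hasDerivAt_sinh x)
      exact this.congr_deriv (by ring)
    apply monotoneOn_of_deriv_nonneg (convex_Ici 0)
    · exact (Continuous.continuousOn (by continuity))
    · intro x _
      exact (hd x).differentiableAt.differentiableWithinAt
    · intro x hx
      rw [(hd x).deriv]
      have hx' : 0 < x := by simpa using hx
      exact mul_nonneg hx'.le (Real.sinh_nonneg_iff.2 hx'.le)
  have := h (Set.self_mem_Ici) (Set.mem_Ici.2 hv) hv
  simpa using this

-- elementary exponential inequalities
lemma exp_helper {u : ℝ} (hu : 0 ≤ u) : Real.exp u - 1 ≤ u / 2 * (Real.exp u + 1) := by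
  have h := sinh_le_mul_cosh (v := u / 2) (by linarith)
  rw [Real.sinh_eq, Real.cosh_eq] at h
  have hE : Real.exp (u / 2) * Real.exp (u / 2) = Real.exp u := by
    rw [← Real.exp_add]; ring_nf
  have hEpos := Real.exp_pos (u / 2)
  rw [Real.exp_neg] at h
  have h2 : Real.exp (u/2) - (Real.exp (u/2))⁻¹ ≤ u / 2 * (Real.exp (u/2) + (Real.exp (u/2))⁻¹) := by
    linarith
  have h3 := mul_le_mul_of_nonneg_left h2 hEpos.le
  have hinv : Real.exp (u/2) * (Real.exp (u/2))⁻¹ = 1 := mul_inv_cancel₀ hEpos.ne'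
  nlinarith [h3, hE, hinv]

lemma exp_diff_le' {l x y : ℝ} (hl : 0 ≤ l) (hxy : y ≤ x) :
    (x - y) * (Real.exp (l * x) - Real.exp (l * y))
      ≤ l / 2 * (x - y) ^ 2 * (Real.exp (l * x) + Real.exp (l * y)) := by
  have hu : 0 ≤ l * (x - y) := mul_nonneg hl (by linarith)
  have h := exp_helper hu
  have hxid : Real.exp (l * x) = Real.exp (l * y) * Real.exp (l * (x - y)) := by
    rw [← Real.exp_add]; ring_nf
  have hEy := Real.exp_pos (l * y)
  have h2 := mul_le_mul_of_nonneg_left h (mul_nonneg (by linarith : (0:ℝ) ≤ x - y) hEy.le)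
  rw [hxid]
  nlinarith [h2]

lemma exp_diff_le {l x y : ℝ} (hl : 0 ≤ l) :
    (x - y) * (Real.exp (l * x) - Real.exp (l * y))
      ≤ l / 2 * (x - y) ^ 2 * (Real.exp (l * x) + Real.exp (l * y)) := by
  rcases le_total y x with h | h
  · exact exp_diff_le' hl h
  · have e1 : (x - y) * (Real.exp (l * x) - Real.exp (l * y))
        = (y - x) * (Real.exp (l * y) - Real.exp (l * x)) := by ring
    have e2 : l / 2 * (x - y) ^ 2 * (Real.exp (l * x) + Real.exp (l * y))
        = l / 2 * (y - x) ^ 2 * (Real.exp (l * y) + Real.exp (l * x)) := by ring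
    rw [e1, e2]
    exact exp_diff_le' hl h

variable {N : ℕ}


lemma swap_identity (c d : Fin N → ℝ) (π : Equiv.Perm (Fin N)) (i j : Fin N) :
    (∑ k, c k * d ((π * Equiv.swap i j) k))
      = (∑ k, c k * d (π k)) - (c i - c j) * (d (π i) - d (π j)) := by
  by_cases hij : i = j
  · subst hij
    simp [Equiv.swap_self]
  · have h : ∀ k ∈ (univ : Finset (Fin N)), k ∉ ({i, j} : Finset (Fin N)) →
        c k * d ((π * Equiv.swap i j) k) - c k * d (π k) = 0 := by
      intro k _ hk
      simp only [mem_insert, mem_singleton, not_or] at hk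
      rw [Equiv.Perm.mul_apply, Equiv.swap_apply_of_ne_of_ne hk.1 hk.2]
      ring
    have hsub : ({i, j} : Finset (Fin N)) ⊆ univ := Finset.subset_univ _
    have key : (∑ k, (c k * d ((π * Equiv.swap i j) k) - c k * d (π k)))
        = ∑ k ∈ ({i, j} : Finset (Fin N)),
            (c k * d ((π * Equiv.swap i j) k) - c k * d (π k)) :=
      (Finset.sum_subset hsub (fun k hk1 hk2 => h k hk1 hk2)).symm
    rw [Finset.sum_sub_distrib, Finset.sum_pair hij] at key
    simp only [Equiv.Perm.mul_apply, Equiv.swap_apply_left, Equiv.swap_apply_right] at key ⊢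
    linear_combination key

lemma sum_perm_mul (σ : Equiv.Perm (Fin N)) (g : Equiv.Perm (Fin N) → ℝ) :
    ∑ π : Equiv.Perm (Fin N), g (π * σ) = ∑ π : Equiv.Perm (Fin N), g π :=
  Equiv.sum_comp (Equiv.mulRight σ) g

lemma dsum1 (f g : Fin N → ℝ) :
    ∑ i : Fin N, ∑ j : Fin N, (f i * g i + f j * g j) = 2 * N * ∑ k, f k * g k := by
  simp_rw [Finset.sum_add_distrib, Finset.sum_const, Finset.card_univ, Fintype.card_fin,
    nsmul_eq_mul]
  rw [← Finset.mul_sum]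
  ring

lemma dsum2 (f g : Fin N → ℝ) :
    ∑ i : Fin N, ∑ j : Fin N, (f i * g j + f j * g i) = 2 * (∑ k, f k) * (∑ k, g k) := by
  simp_rw [Finset.sum_add_distrib]
  rw [← Finset.sum_mul_sum, Finset.sum_comm, ← Finset.sum_mul_sum]
  ring

lemma dsum_add (F G : Fin N → Fin N → ℝ) :
    ∑ i, ∑ j, (F i j + G i j) = (∑ i, ∑ j, F i j) + (∑ i, ∑ j, G i j) := by
  rw [← Finset.sum_add_distrib]
  exact Finset.sum_congr rfl fun i _ => Finset.sum_add_distrib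

lemma lin_identity (c e : Fin N → ℝ) (hc : ∑ k, c k = 0) (he : ∑ k, e k = 0) :
    ∑ i, ∑ j, (c i - c j) * (e i - e j) = 2 * N * (∑ k, c k * e k) := by
  have h : ∀ i j : Fin N, (c i - c j) * (e i - e j)
      = (c i * e i + c j * e j) - (c i * e j + c j * e i) := fun i j => by ring
  simp_rw [h, Finset.sum_sub_distrib]
  rw [dsum1, dsum2, hc]
  ring

lemma quad_bound (c e : Fin N → ℝ) :
    ∑ i, ∑ j, ((c i - c j) * (e i - e j)) ^ 2
      ≤ 8 * N * (∑ k, (c k) ^ 2 * (e k) ^ 2) + 8 * (∑ k, (c k) ^ 2) * (∑ k, (e k) ^ 2) := by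
  have step1 : ∀ i j : Fin N, ((c i - c j) * (e i - e j)) ^ 2
      ≤ (2 * (c i) ^ 2 + 2 * (c j) ^ 2) * (2 * (e i) ^ 2 + 2 * (e j) ^ 2) := by
    intro i j
    have h1 : (c i - c j) ^ 2 ≤ 2 * (c i) ^ 2 + 2 * (c j) ^ 2 := by nlinarith [sq_nonneg (c i + c j)]
    have h2 : (e i - e j) ^ 2 ≤ 2 * (e i) ^ 2 + 2 * (e j) ^ 2 := by nlinarith [sq_nonneg (e i + e j)]
    calc ((c i - c j) * (e i - e j)) ^ 2 = (c i - c j) ^ 2 * (e i - e j) ^ 2 := by ring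
      _ ≤ (2 * (c i) ^ 2 + 2 * (c j) ^ 2) * (2 * (e i) ^ 2 + 2 * (e j) ^ 2) :=
          mul_le_mul h1 h2 (sq_nonneg _) (by positivity)
  calc ∑ i, ∑ j, ((c i - c j) * (e i - e j)) ^ 2
      ≤ ∑ i, ∑ j, (2 * (c i) ^ 2 + 2 * (c j) ^ 2) * (2 * (e i) ^ 2 + 2 * (e j) ^ 2) :=
        Finset.sum_le_sum (fun i _ => Finset.sum_le_sum (fun j _ => step1 i j))
    _ = 8 * N * (∑ k, (c k) ^ 2 * (e k) ^ 2) + 8 * (∑ k, (c k) ^ 2) * (∑ k, (e k) ^ 2) := by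
        have h : ∀ i j : Fin N, (2 * (c i) ^ 2 + 2 * (c j) ^ 2) * (2 * (e i) ^ 2 + 2 * (e j) ^ 2)
            = 4 * (((c i) ^ 2 * (e i) ^ 2 + (c j) ^ 2 * (e j) ^ 2)
                + ((c i) ^ 2 * (e j) ^ 2 + (c j) ^ 2 * (e i) ^ 2)) := fun i j => by ring
        simp_rw [h, ← Finset.mul_sum]
        rw [dsum_add, dsum1 (fun k => (c k) ^ 2) (fun k => (e k) ^ 2),
          dsum2 (fun k => (c k) ^ 2) (fun k => (e k) ^ 2)]
        ring


lemma sum_rotate {α β γ : Type*} [Fintype α] [Fintype β] [Fintype γ] (f : α → β → γ → ℝ) :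
    ∑ i, ∑ j, ∑ k, f i j k = ∑ k, ∑ i, ∑ j, f i j k :=
  (Finset.sum_congr rfl fun i _ => Finset.sum_comm).trans Finset.sum_comm

lemma deriv_ineq (hN : 0 < N) (c d : Fin N → ℝ) (hc : ∑ k, c k = 0) (hd : ∑ k, d k = 0)
    (K : ℝ) (hK : ∀ s : Equiv.Perm (Fin N), ∑ i, (c i) ^ 2 * (d (s i)) ^ 2 ≤ K)
    (μ : ℝ) (hμ : 0 ≤ μ) :
    ∑ π : Equiv.Perm (Fin N), (∑ i, c i * d (π i)) * Real.exp (μ * ∑ i, c i * d (π i))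
      ≤ μ * (2 * K + 2 * (∑ k, (c k) ^ 2) * (∑ k, (d k) ^ 2) / N)
          * ∑ π : Equiv.Perm (Fin N), Real.exp (μ * ∑ i, c i * d (π i)) := by
  classical
  set F : Equiv.Perm (Fin N) → ℝ := fun π => ∑ i, c i * d (π i) with hF
  have he : ∀ π : Equiv.Perm (Fin N), ∑ i, d (π i) = 0 := fun π => by
    rw [Equiv.sum_comp π d]; exact hd
  have hBe : ∀ π : Equiv.Perm (Fin N), ∑ i, (d (π i)) ^ 2 = ∑ k, (d k) ^ 2 := fun π =>
    Equiv.sum_comp π (fun k => (d k) ^ 2)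
  -- step 1 : 2N F π = ∑ i ∑ j (F π - F (π * swap i j))
  have step1 : ∀ π : Equiv.Perm (Fin N),
      (2 * N) * F π = ∑ i, ∑ j, (F π - F (π * Equiv.swap i j)) := by
    intro π
    have h1 : ∀ i j : Fin N, F π - F (π * Equiv.swap i j)
        = (c i - c j) * (d (π i) - d (π j)) := by
      intro i j
      rw [hF]
      simp only []
      rw [swap_identity c d π i j]
      ring
    simp_rw [h1]
    rw [lin_identity c (fun i => d (π i)) hc (he π)]
  -- step 2 : rearrange the full sum
  have step2 : (2 * N) * ∑ π : Equiv.Perm (Fin N), F π * Real.exp (μ * F π)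
      = ∑ i, ∑ j, ∑ π : Equiv.Perm (Fin N),
          (F π - F (π * Equiv.swap i j)) * Real.exp (μ * F π) := by
    rw [Finset.mul_sum]
    have h1 : ∀ π : Equiv.Perm (Fin N), 2 * ↑N * (F π * Real.exp (μ * F π))
        = ∑ i, ∑ j, (F π - F (π * Equiv.swap i j)) * Real.exp (μ * F π) := by
      intro π
      rw [show 2 * ↑N * (F π * Real.exp (μ * F π)) = ((2 * ↑N) * F π) * Real.exp (μ * F π) by ring,
        step1 π, Finset.sum_mul]
      exact Finset.sum_congr rfl fun i _ => Finset.sum_mul _ _ _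
    rw [Finset.sum_congr rfl fun π _ => h1 π]
    rw [Finset.sum_comm]
    exact Finset.sum_congr rfl fun i _ => Finset.sum_comm
  -- step 3 : per (i,j) symmetrization and bound
  have step3 : ∀ i j : Fin N,
      ∑ π : Equiv.Perm (Fin N), (F π - F (π * Equiv.swap i j)) * Real.exp (μ * F π)
        ≤ μ / 2 * ∑ π : Equiv.Perm (Fin N),
            (F π - F (π * Equiv.swap i j)) ^ 2 * Real.exp (μ * F π) := by
    intro i j
    set τ := Equiv.swap i j with hτ
    have hττ : ∀ π : Equiv.Perm (Fin N), π * τ * τ = π := by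
      intro π
      rw [mul_assoc, Equiv.swap_mul_self, mul_one]
    -- S2 = -T1
    have sym1 : ∑ π : Equiv.Perm (Fin N), (F π - F (π * τ)) * Real.exp (μ * F (π * τ))
        = -∑ π : Equiv.Perm (Fin N), (F π - F (π * τ)) * Real.exp (μ * F π) := by
      have h2 := sum_perm_mul τ (fun ρ => (F ρ - F (ρ * τ)) * Real.exp (μ * F (ρ * τ)))
      rw [← h2, ← Finset.sum_neg_distrib]
      refine Finset.sum_congr rfl fun π _ => ?_
      rw [hττ π]
      ring
    -- Q2 = Q1
    have sym2 : ∑ π : Equiv.Perm (Fin N), (F π - F (π * τ)) ^ 2 * Real.exp (μ * F (π * τ))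
        = ∑ π : Equiv.Perm (Fin N), (F π - F (π * τ)) ^ 2 * Real.exp (μ * F π) := by
      have h2 := sum_perm_mul τ (fun ρ => (F ρ - F (ρ * τ)) ^ 2 * Real.exp (μ * F (ρ * τ)))
      rw [← h2]
      refine Finset.sum_congr rfl fun π _ => ?_
      rw [hττ π]
      ring
    have twoT : 2 * ∑ π : Equiv.Perm (Fin N), (F π - F (π * τ)) * Real.exp (μ * F π)
        = ∑ π : Equiv.Perm (Fin N),
            (F π - F (π * τ)) * (Real.exp (μ * F π) - Real.exp (μ * F (π * τ))) := by
      have : ∑ π : Equiv.Perm (Fin N),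
          (F π - F (π * τ)) * (Real.exp (μ * F π) - Real.exp (μ * F (π * τ)))
        = (∑ π : Equiv.Perm (Fin N), (F π - F (π * τ)) * Real.exp (μ * F π))
          - ∑ π : Equiv.Perm (Fin N), (F π - F (π * τ)) * Real.exp (μ * F (π * τ)) := by
        rw [← Finset.sum_sub_distrib]
        exact Finset.sum_congr rfl fun π _ => by ring
      rw [this, sym1]
      ring
    have bound : ∑ π : Equiv.Perm (Fin N),
          (F π - F (π * τ)) * (Real.exp (μ * F π) - Real.exp (μ * F (π * τ)))
        ≤ μ / 2 * (∑ π : Equiv.Perm (Fin N), (F π - F (π * τ)) ^ 2 * Real.exp (μ * F π)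
            + ∑ π : Equiv.Perm (Fin N), (F π - F (π * τ)) ^ 2 * Real.exp (μ * F (π * τ))) := by
      rw [← Finset.sum_add_distrib, Finset.mul_sum]
      refine Finset.sum_le_sum fun π _ => ?_
      have := exp_diff_le (l := μ) (x := F π) (y := F (π * τ)) hμ
      nlinarith [this]
    rw [sym2] at bound
    linarith [twoT, bound]
  -- pointwise quadratic bound
  have hptwise : ∀ π : Equiv.Perm (Fin N),
      ∑ i, ∑ j, (F π - F (π * Equiv.swap i j)) ^ 2
        ≤ 8 * N * K + 8 * (∑ k, (c k) ^ 2) * (∑ k, (d k) ^ 2) := by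
    intro π
    have h1 : ∀ i j : Fin N, (F π - F (π * Equiv.swap i j)) ^ 2
        = ((c i - c j) * (d (π i) - d (π j))) ^ 2 := by
      intro i j
      rw [hF]
      simp only []
      rw [swap_identity c d π i j]
      ring
    simp_rw [h1]
    have hq := quad_bound c (fun i => d (π i))
    rw [hBe π] at hq
    have hS := hK π
    have hN0 : (0:ℝ) ≤ N := by positivity
    nlinarith [hq, hS, hN0]
  -- combine
  have step4 : (2 * (N:ℝ)) * ∑ π : Equiv.Perm (Fin N), F π * Real.exp (μ * F π)
      ≤ μ / 2 * ((8 * N * K + 8 * (∑ k, (c k) ^ 2) * (∑ k, (d k) ^ 2))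
          * ∑ π : Equiv.Perm (Fin N), Real.exp (μ * F π)) := by
    rw [step2]
    have hA : ∑ i, ∑ j, ∑ π : Equiv.Perm (Fin N),
          (F π - F (π * Equiv.swap i j)) * Real.exp (μ * F π)
        ≤ ∑ i, ∑ j, (μ / 2 * ∑ π : Equiv.Perm (Fin N),
            (F π - F (π * Equiv.swap i j)) ^ 2 * Real.exp (μ * F π)) :=
      Finset.sum_le_sum fun i _ => Finset.sum_le_sum fun j _ => step3 i j
    have hB : ∑ i, ∑ j, (μ / 2 * ∑ π : Equiv.Perm (Fin N),
            (F π - F (π * Equiv.swap i j)) ^ 2 * Real.exp (μ * F π))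
        = μ / 2 * ∑ π : Equiv.Perm (Fin N),
            (∑ i, ∑ j, (F π - F (π * Equiv.swap i j)) ^ 2) * Real.exp (μ * F π) := by
      simp_rw [← Finset.mul_sum]
      congr 1
      rw [sum_rotate (fun i j π => (F π - F (π * Equiv.swap i j)) ^ 2 * Real.exp (μ * F π))]
      refine Finset.sum_congr rfl fun π _ => ?_
      rw [Finset.sum_mul]
      exact Finset.sum_congr rfl fun i _ => (Finset.sum_mul _ _ _).symm
    have hC : ∑ π : Equiv.Perm (Fin N),
          (∑ i, ∑ j, (F π - F (π * Equiv.swap i j)) ^ 2) * Real.exp (μ * F π)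
        ≤ ∑ π : Equiv.Perm (Fin N),
            (8 * N * K + 8 * (∑ k, (c k) ^ 2) * (∑ k, (d k) ^ 2)) * Real.exp (μ * F π) :=
      Finset.sum_le_sum fun π _ =>
        mul_le_mul_of_nonneg_right (hptwise π) (Real.exp_pos _).le
    calc ∑ i, ∑ j, ∑ π : Equiv.Perm (Fin N),
          (F π - F (π * Equiv.swap i j)) * Real.exp (μ * F π)
        ≤ μ / 2 * ∑ π : Equiv.Perm (Fin N),
            (∑ i, ∑ j, (F π - F (π * Equiv.swap i j)) ^ 2) * Real.exp (μ * F π) := by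
          rw [← hB]; exact hA
      _ ≤ μ / 2 * ((8 * N * K + 8 * (∑ k, (c k) ^ 2) * (∑ k, (d k) ^ 2))
            * ∑ π : Equiv.Perm (Fin N), Real.exp (μ * F π)) := by
          rw [← Finset.mul_sum] at hC
          exact mul_le_mul_of_nonneg_left hC (by linarith)
  have hNR : (0:ℝ) < N := by exact_mod_cast hN
  have h2N : (0:ℝ) < 2 * N := by linarith
  have heq : μ / 2 * ((8 * N * K + 8 * (∑ k, (c k) ^ 2) * (∑ k, (d k) ^ 2))
        * ∑ π : Equiv.Perm (Fin N), Real.exp (μ * F π))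
      = (2 * (N:ℝ)) * (μ * (2 * K + 2 * (∑ k, (c k) ^ 2) * (∑ k, (d k) ^ 2) / N)
          * ∑ π : Equiv.Perm (Fin N), Real.exp (μ * F π)) := by
    field_simp
    ring
  rw [heq] at step4
  exact le_of_mul_le_mul_left step4 h2N

lemma mgf_bound (hN : 0 < N) (c d : Fin N → ℝ) (hc : ∑ k, c k = 0) (hd : ∑ k, d k = 0)
    (K : ℝ) (hK : ∀ s : Equiv.Perm (Fin N), ∑ i, (c i) ^ 2 * (d (s i)) ^ 2 ≤ K)
    (l : ℝ) (hl : 0 ≤ l) :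
    ∑ π : Equiv.Perm (Fin N), Real.exp (l * ∑ i, c i * d (π i))
      ≤ (Nat.factorial N : ℝ) * Real.exp
          ((2 * K + 2 * (∑ k, (c k) ^ 2) * (∑ k, (d k) ^ 2) / N) * l ^ 2 / 2) := by
  classical
  set C : ℝ := 2 * K + 2 * (∑ k, (c k) ^ 2) * (∑ k, (d k) ^ 2) / N with hC
  set F : Equiv.Perm (Fin N) → ℝ := fun π => ∑ i, c i * d (π i) with hF
  set g : ℝ → ℝ := fun μ => (∑ π : Equiv.Perm (Fin N), Real.exp (μ * F π))
      * Real.exp (-(C * μ ^ 2 / 2)) with hg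
  have hderiv : ∀ μ : ℝ, HasDerivAt g
      ((∑ π : Equiv.Perm (Fin N), F π * Real.exp (μ * F π)) * Real.exp (-(C * μ ^ 2 / 2))
        + (∑ π : Equiv.Perm (Fin N), Real.exp (μ * F π))
            * (Real.exp (-(C * μ ^ 2 / 2)) * (-(C * μ)))) μ := by
    intro μ
    have h1 : HasDerivAt (fun μ : ℝ => ∑ π : Equiv.Perm (Fin N), Real.exp (μ * F π))
        (∑ π : Equiv.Perm (Fin N), F π * Real.exp (μ * F π)) μ := by
      have : ∀ π ∈ (univ : Finset (Equiv.Perm (Fin N))),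
          HasDerivAt (fun μ : ℝ => Real.exp (μ * F π)) (F π * Real.exp (μ * F π)) μ := by
        intro π _
        have := ((hasDerivAt_id μ).mul_const (F π)).exp
        simpa [id_eq, one_mul, mul_comm] using this
      have := HasDerivAt.fun_sum this
      convert this using 1
    have h2 : HasDerivAt (fun μ : ℝ => Real.exp (-(C * μ ^ 2 / 2)))
        (Real.exp (-(C * μ ^ 2 / 2)) * (-(C * μ))) μ := by
      have hp : HasDerivAt (fun μ : ℝ => -(C * μ ^ 2 / 2)) (-(C * μ)) μ := by
        have := (((hasDerivAt_pow 2 μ).const_mul C).div_const 2).fun_neg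
        exact this.congr_deriv (by push_cast; ring)
      exact hp.exp
    exact h1.mul h2
  have hanti : AntitoneOn g (Set.Ici 0) := by
    apply antitoneOn_of_deriv_nonpos (convex_Ici 0)
    · exact Continuous.continuousOn (by
        apply Continuous.mul
        · exact continuous_finset_sum _ fun π _ => (continuous_id.mul continuous_const).rexp
        · exact ((continuous_const.mul (continuous_pow 2)).div_const 2).neg.rexp)
    · intro μ _
      exact (hderiv μ).differentiableAt.differentiableWithinAt
    · intro μ hμ
      rw [interior_Ici, Set.mem_Ioi] at hμ
      rw [(hderiv μ).deriv]
      have hkey := deriv_ineq hN c d hc hd K hK μ hμ.le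
      have hE := Real.exp_pos (-(C * μ ^ 2 / 2))
      have : (∑ π : Equiv.Perm (Fin N), F π * Real.exp (μ * F π))
          ≤ μ * C * ∑ π : Equiv.Perm (Fin N), Real.exp (μ * F π) := hkey
      nlinarith [this, hE.le,
        mul_le_mul_of_nonneg_right this hE.le]
  have hg0 : g 0 = (Nat.factorial N : ℝ) := by
    rw [hg]
    simp [Real.exp_zero, Finset.card_univ, Fintype.card_perm, Fintype.card_fin]
  have := hanti (Set.self_mem_Ici) (Set.mem_Ici.2 hl) hl
  rw [hg0] at this
  -- g l ≤ N! ; unfold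
  have hgl : g l = (∑ π : Equiv.Perm (Fin N), Real.exp (l * F π))
      * Real.exp (-(C * l ^ 2 / 2)) := rfl
  rw [hgl] at this
  have hEpos := Real.exp_pos (-(C * l ^ 2 / 2))
  have h2 := mul_le_mul_of_nonneg_right this (Real.exp_pos (C * l ^ 2 / 2)).le
  rw [mul_assoc, ← Real.exp_add] at h2
  simp only [neg_add_cancel, Real.exp_zero, mul_one] at h2
  exact h2

lemma final_aux (N : ℕ) (hN : 0 < N) (c d : Fin N → ℝ) (hc : ∑ k, c k = 0) (hd : ∑ k, d k = 0)
    (K : ℝ) (hK : ∀ s : Equiv.Perm (Fin N), ∑ i, (c i) ^ 2 * (d (s i)) ^ 2 ≤ K) (hK0 : 0 ≤ K)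
    (D : ℝ) (hD : 4 * K + 4 * (∑ k, (c k) ^ 2) * (∑ k, (d k) ^ 2) / N ≤ D)
    (t : ℝ) (ht : 0 < t) :
    (∑ π : Equiv.Perm (Fin N), if t ≤ ∑ i, c i * d (π i) then (1 : ℝ) else 0)
        / (Nat.factorial N : ℝ)
      ≤ Real.exp (-(t ^ 2) / D) := by
  classical
  have hNR : (0:ℝ) < N := by exact_mod_cast hN
  have hfac : (0:ℝ) < (Nat.factorial N : ℝ) := by exact_mod_cast N.factorial_pos
  have hA0 : (0:ℝ) ≤ ∑ k, (c k) ^ 2 := Finset.sum_nonneg fun k _ => sq_nonneg _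
  have hB0 : (0:ℝ) ≤ ∑ k, (d k) ^ 2 := Finset.sum_nonneg fun k _ => sq_nonneg _
  by_cases hAB : (∑ k, (c k) ^ 2) * (∑ k, (d k) ^ 2) = 0
  · have hF0 : ∀ π : Equiv.Perm (Fin N), (∑ i, c i * d (π i)) = 0 := by
      rcases mul_eq_zero.1 hAB with h | h
      · have hz : ∀ i, c i = 0 := fun i =>
          (pow_eq_zero_iff two_ne_zero).mp
            ((Finset.sum_eq_zero_iff_of_nonneg fun k _ => sq_nonneg (c k)).1 h i (mem_univ i))
        intro π; simp [hz]
      · have hz : ∀ i, d i = 0 := fun i =>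
          (pow_eq_zero_iff two_ne_zero).mp
            ((Finset.sum_eq_zero_iff_of_nonneg fun k _ => sq_nonneg (d k)).1 h i (mem_univ i))
        intro π; simp [hz]
    have hzero : ∀ π : Equiv.Perm (Fin N),
        (if t ≤ ∑ i, c i * d (π i) then (1:ℝ) else 0) = 0 := by
      intro π
      rw [hF0 π, if_neg (by linarith)]
    rw [Finset.sum_congr rfl fun π _ => hzero π, Finset.sum_const_zero, zero_div]
    exact (Real.exp_pos _).le
  · have hABpos : 0 < (∑ k, (c k) ^ 2) * (∑ k, (d k) ^ 2) :=
      lt_of_le_of_ne (mul_nonneg hA0 hB0) (Ne.symm hAB)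
    set C : ℝ := 2 * K + 2 * (∑ k, (c k) ^ 2) * (∑ k, (d k) ^ 2) / N with hCdef
    have hCpos : 0 < C := by
      have h1 : 0 < 2 * (∑ k, (c k) ^ 2) * (∑ k, (d k) ^ 2) / (N:ℝ) :=
        div_pos (by nlinarith [hABpos]) hNR
      rw [hCdef]; linarith
    have h2CD : 2 * C ≤ D := by
      have h2 : 2 * C = 4 * K + 4 * (∑ k, (c k) ^ 2) * (∑ k, (d k) ^ 2) / (N:ℝ) := by
        rw [hCdef]; ring
      rw [h2]; exact hD
    have hD0 : 0 < D := by linarith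
    set l : ℝ := t / C with hldef
    have hl0 : 0 < l := div_pos ht hCpos
    have markov : (∑ π : Equiv.Perm (Fin N), if t ≤ ∑ i, c i * d (π i) then (1:ℝ) else 0)
        ≤ ∑ π : Equiv.Perm (Fin N), Real.exp (l * ((∑ i, c i * d (π i)) - t)) := by
      refine Finset.sum_le_sum fun π _ => ?_
      by_cases h : t ≤ ∑ i, c i * d (π i)
      · rw [if_pos h]
        exact Real.one_le_exp (mul_nonneg hl0.le (by linarith))
      · rw [if_neg h]
        exact (Real.exp_pos _).le
    have expand : ∑ π : Equiv.Perm (Fin N), Real.exp (l * ((∑ i, c i * d (π i)) - t))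
        = Real.exp (-(l * t)) * ∑ π : Equiv.Perm (Fin N), Real.exp (l * ∑ i, c i * d (π i)) := by
      rw [Finset.mul_sum]
      refine Finset.sum_congr rfl fun π _ => ?_
      rw [← Real.exp_add]
      ring_nf
    have hmgf := mgf_bound hN c d hc hd K hK l hl0.le
    have chain : (∑ π : Equiv.Perm (Fin N), if t ≤ ∑ i, c i * d (π i) then (1:ℝ) else 0)
        ≤ (Nat.factorial N : ℝ) * Real.exp (C * l ^ 2 / 2 - l * t) := by
      calc (∑ π : Equiv.Perm (Fin N), if t ≤ ∑ i, c i * d (π i) then (1:ℝ) else 0)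
          ≤ Real.exp (-(l * t)) * ∑ π : Equiv.Perm (Fin N),
              Real.exp (l * ∑ i, c i * d (π i)) := by rw [← expand]; exact markov
        _ ≤ Real.exp (-(l * t)) * ((Nat.factorial N : ℝ) * Real.exp (C * l ^ 2 / 2)) := by
            exact mul_le_mul_of_nonneg_left hmgf (Real.exp_pos _).le
        _ = (Nat.factorial N : ℝ) * Real.exp (C * l ^ 2 / 2 - l * t) := by
            rw [Real.exp_sub, Real.exp_neg]
            field_simp [Real.exp_ne_zero]
    have hval : C * l ^ 2 / 2 - l * t = -(t ^ 2) / (2 * C) := by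
      rw [hldef]
      field_simp
      ring
    have hmono : -(t ^ 2) / (2 * C) ≤ -(t ^ 2) / D := by
      rw [neg_div, neg_div, neg_le_neg_iff]
      exact div_le_div_of_nonneg_left (sq_nonneg t) (by linarith) h2CD
    rw [div_le_iff₀ hfac]
    calc (∑ π : Equiv.Perm (Fin N), if t ≤ ∑ i, c i * d (π i) then (1:ℝ) else 0)
        ≤ (Nat.factorial N : ℝ) * Real.exp (C * l ^ 2 / 2 - l * t) := chain
      _ ≤ Real.exp (-(t ^ 2) / D) * (Nat.factorial N : ℝ) := by
          rw [hval, mul_comm]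
          exact mul_le_mul_of_nonneg_right (Real.exp_le_exp.2 hmono) hfac.le


end Auxiliary

/-- Probability of an event under the uniform random permutation of `[N]`. -/
noncomputable def permProb (N : ℕ) (p : Equiv.Perm (Fin N) → Prop) : ℝ :=
  (∑ π : Equiv.Perm (Fin N), if p π then (1 : ℝ) else 0) / (Nat.factorial N : ℝ)

/-- Combinatorial Hoeffding inequality, version II (product matrices `a_{i,j} = a_i b_j`). -/
theorem combinatorial_hoeffding_II
    (N : ℕ) (hN : 1 ≤ N) (a b : Fin N → ℝ) (t : ℝ) (ht : 0 ≤ t) :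
    permProb N (fun π =>
        t ≤ (∑ i, a i * b (π i)) - ((∑ i, a i) * (∑ j, b j)) / (N : ℝ))
      ≤ Real.exp (-(t ^ 2) /
          (4 * (⨆ s : Equiv.Perm (Fin N),
              ∑ i, (a i - (∑ k, a k) / (N : ℝ)) ^ 2 * (b (s i) - (∑ k, b k) / (N : ℝ)) ^ 2)
           + 4 * ((∑ i, (a i - (∑ k, a k) / (N : ℝ)) ^ 2)
                * (∑ j, (b j - (∑ k, b k) / (N : ℝ)) ^ 2) / ((N : ℝ) - 1)))) := by
  classical
  have hN0 : 0 < N := hN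
  have hNR : (0:ℝ) < N := by exact_mod_cast hN0
  have hfac : (0:ℝ) < (Nat.factorial N : ℝ) := by exact_mod_cast N.factorial_pos
  rcases eq_or_lt_of_le ht with ht0 | htpos
  · -- t = 0 : RHS is 1, LHS ≤ 1
    rw [← ht0]
    have hrhs : Real.exp (-((0:ℝ) ^ 2) /
        (4 * (⨆ s : Equiv.Perm (Fin N),
            ∑ i, (a i - (∑ k, a k) / (N : ℝ)) ^ 2 * (b (s i) - (∑ k, b k) / (N : ℝ)) ^ 2)
         + 4 * ((∑ i, (a i - (∑ k, a k) / (N : ℝ)) ^ 2)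
              * (∑ j, (b j - (∑ k, b k) / (N : ℝ)) ^ 2) / ((N : ℝ) - 1)))) = 1 := by
      norm_num
    rw [hrhs]
    unfold permProb
    rw [div_le_one hfac]
    calc (∑ π : Equiv.Perm (Fin N), if (0:ℝ) ≤ (∑ i, a i * b (π i))
            - ((∑ i, a i) * (∑ j, b j)) / (N : ℝ) then (1:ℝ) else 0)
        ≤ ∑ _π : Equiv.Perm (Fin N), (1:ℝ) := by
          refine Finset.sum_le_sum fun π _ => ?_
          split <;> norm_num
      _ = (Nat.factorial N : ℝ) := by
          simp [Finset.card_univ, Fintype.card_perm, Fintype.card_fin]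
  · -- t > 0 : main argument
    have hcenter : ∀ π : Equiv.Perm (Fin N),
        (∑ i, a i * b (π i)) - ((∑ i, a i) * (∑ j, b j)) / (N:ℝ)
          = ∑ i, (a i - (∑ k, a k) / (N:ℝ)) * (b (π i) - (∑ k, b k) / (N:ℝ)) := by
      intro π
      have hb : ∑ i, b (π i) = ∑ j, b j := Equiv.sum_comp π b
      have h : ∀ i : Fin N, (a i - (∑ k, a k) / (N:ℝ)) * (b (π i) - (∑ k, b k) / (N:ℝ))
          = a i * b (π i) - ((∑ k, a k) / (N:ℝ)) * b (π i)
            - ((∑ k, b k) / (N:ℝ)) * a i + ((∑ k, a k) / (N:ℝ)) * ((∑ k, b k) / (N:ℝ)) :=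
        fun i => by ring
      rw [Finset.sum_congr rfl fun i _ => h i]
      rw [Finset.sum_add_distrib, Finset.sum_sub_distrib, Finset.sum_sub_distrib,
        ← Finset.mul_sum, ← Finset.mul_sum, hb, Finset.sum_const, Finset.card_univ,
        Fintype.card_fin, nsmul_eq_mul]
      field_simp
      ring
    have hc : ∑ i, (a i - (∑ k, a k) / (N:ℝ)) = 0 := by
      rw [Finset.sum_sub_distrib, Finset.sum_const, Finset.card_univ, Fintype.card_fin,
        nsmul_eq_mul]
      field_simp
      ring
    have hd : ∑ j, (b j - (∑ k, b k) / (N:ℝ)) = 0 := by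
      rw [Finset.sum_sub_distrib, Finset.sum_const, Finset.card_univ, Fintype.card_fin,
        nsmul_eq_mul]
      field_simp
      ring
    set K : ℝ := ⨆ s : Equiv.Perm (Fin N),
        ∑ i, (a i - (∑ k, a k) / (N : ℝ)) ^ 2 * (b (s i) - (∑ k, b k) / (N : ℝ)) ^ 2 with hKdef
    have hbdd : BddAbove (Set.range (fun s : Equiv.Perm (Fin N) =>
        ∑ i, (a i - (∑ k, a k) / (N : ℝ)) ^ 2 * (b (s i) - (∑ k, b k) / (N : ℝ)) ^ 2)) :=
      Set.Finite.bddAbove (Set.finite_range _)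
    have hK : ∀ s : Equiv.Perm (Fin N),
        (∑ i, (a i - (∑ k, a k) / (N : ℝ)) ^ 2 * (b (s i) - (∑ k, b k) / (N : ℝ)) ^ 2) ≤ K :=
      fun s => le_ciSup hbdd s
    have hK0 : 0 ≤ K :=
      le_trans (Finset.sum_nonneg fun i _ => mul_nonneg (sq_nonneg _) (sq_nonneg _)) (hK 1)
    have hA0 : (0:ℝ) ≤ ∑ i, (a i - (∑ k, a k) / (N:ℝ)) ^ 2 :=
      Finset.sum_nonneg fun i _ => sq_nonneg _
    have hB0 : (0:ℝ) ≤ ∑ j, (b j - (∑ k, b k) / (N:ℝ)) ^ 2 :=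
      Finset.sum_nonneg fun j _ => sq_nonneg _
    have hD : 4 * K + 4 * (∑ i, (a i - (∑ k, a k) / (N:ℝ)) ^ 2)
          * (∑ j, (b j - (∑ k, b k) / (N:ℝ)) ^ 2) / (N:ℝ)
        ≤ 4 * K + 4 * ((∑ i, (a i - (∑ k, a k) / (N:ℝ)) ^ 2)
            * (∑ j, (b j - (∑ k, b k) / (N:ℝ)) ^ 2) / ((N : ℝ) - 1)) := by
      rcases eq_or_lt_of_le hN with h1 | h2
      · -- N = 1
        have hNe : N = 1 := h1.symm
        subst hNe
        have hA : (∑ i, (a i - (∑ k, a k) / ((1:ℕ):ℝ)) ^ 2) = 0 := by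
          norm_num [Fin.sum_univ_one]
        rw [hA]
        norm_num
      · -- 2 ≤ N
        have hN1 : (0:ℝ) < (N:ℝ) - 1 := by
          have : (2:ℝ) ≤ N := by exact_mod_cast h2
          linarith
        have hmono : (∑ i, (a i - (∑ k, a k) / (N:ℝ)) ^ 2)
              * (∑ j, (b j - (∑ k, b k) / (N:ℝ)) ^ 2) / (N:ℝ)
            ≤ (∑ i, (a i - (∑ k, a k) / (N:ℝ)) ^ 2)
              * (∑ j, (b j - (∑ k, b k) / (N:ℝ)) ^ 2) / ((N:ℝ) - 1) :=
          div_le_div_of_nonneg_left (mul_nonneg hA0 hB0) hN1 (by linarith)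
        have e1 : 4 * (∑ i, (a i - (∑ k, a k) / (N:ℝ)) ^ 2)
              * (∑ j, (b j - (∑ k, b k) / (N:ℝ)) ^ 2) / (N:ℝ)
            = 4 * ((∑ i, (a i - (∑ k, a k) / (N:ℝ)) ^ 2)
              * (∑ j, (b j - (∑ k, b k) / (N:ℝ)) ^ 2) / (N:ℝ)) := by ring
        rw [e1]
        linarith [hmono]
    have main := final_aux N hN0 (fun i => a i - (∑ k, a k) / (N:ℝ))
      (fun j => b j - (∑ k, b k) / (N:ℝ)) hc hd K hK hK0
      (4 * K + 4 * ((∑ i, (a i - (∑ k, a k) / (N:ℝ)) ^ 2)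
          * (∑ j, (b j - (∑ k, b k) / (N:ℝ)) ^ 2) / ((N : ℝ) - 1))) hD t htpos
    unfold permProb
    have hrw : (fun π : Equiv.Perm (Fin N) =>
        t ≤ (∑ i, a i * b (π i)) - ((∑ i, a i) * (∑ j, b j)) / (N : ℝ))
        = (fun π : Equiv.Perm (Fin N) =>
            t ≤ ∑ i, (a i - (∑ k, a k) / (N:ℝ)) * (b (π i) - (∑ k, b k) / (N:ℝ))) :=
      funext fun π => congrArg (t ≤ ·) (hcenter π)
    rw [hrw]
    exact main
end

section
/- Combinatorial Bernstein inequality: for every N ≥ 1, every real N×N matrix A = (a_{i,j}) with normalized matrix D = (d_{i,j}), and every t ≥ 0, the combinatorial sum Y = Σ_{i=1}^N a_{i,π(i)} for a uniform random permutation π of [N] satisfies P( Y − E[Y] ≥ t ) ≤ exp( −t² / (12 σ_A² + 4√2 · B_A · t) ), where B_A = max_{i,j} |d_{i,j}| and σ_A² = (N−1)⁻¹ Σ_{i,j} d_{i,j}². -/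
open Finset
open scoped Classical

/-- Normalized matrix `d_{i,j} = a_{i,j} − N⁻¹Σ_k a_{k,j} − N⁻¹Σ_ℓ a_{i,ℓ} + N⁻²Σ_{k,ℓ} a_{k,ℓ}`. -/
noncomputable def dmat (N : ℕ) (a : Fin N → Fin N → ℝ) (i j : Fin N) : ℝ :=
  a i j - (∑ k, a k j) / (N : ℝ) - (∑ l, a i l) / (N : ℝ) + (∑ k, ∑ l, a k l) / ((N : ℝ) ^ 2)

/-- `μ_A = E[Y] = N⁻¹ Σ_{i,j} a_{i,j}`. -/
noncomputable def muA (N : ℕ) (a : Fin N → Fin N → ℝ) : ℝ :=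
  (∑ i, ∑ j, a i j) / (N : ℝ)

/-- `σ_A² = (N−1)⁻¹ Σ_{i,j} d_{i,j}²`. -/
noncomputable def sigmaA2 (N : ℕ) (a : Fin N → Fin N → ℝ) : ℝ :=
  (∑ i, ∑ j, (dmat N a i j) ^ 2) / ((N : ℝ) - 1)

/-- `B_A = max_{i,j∈[N]} |d_{i,j}|`. -/
noncomputable def BA (N : ℕ) (a : Fin N → Fin N → ℝ) : ℝ :=
  ⨆ i : Fin N, ⨆ j : Fin N, |dmat N a i j|

/-- The combinatorial sum `Y(π) = Σ_{i=1}^N a_{i,π(i)}`. -/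
noncomputable def combSum (N : ℕ) (a : Fin N → Fin N → ℝ) (π : Equiv.Perm (Fin N)) : ℝ :=
  ∑ i, a i (π i)

namespace CB

lemma exp_pair_core {s : ℝ} (hs : 0 ≤ s) : 2 * (Real.exp s - 1) ≤ s * (Real.exp s + 1) := by
  set G : ℝ → ℝ := fun s => s * (Real.exp s + 1) - 2 * Real.exp s + 2 with hG
  have hder : ∀ x : ℝ, HasDerivAt G (1 * (Real.exp x + 1) + x * Real.exp x - 2 * Real.exp x) x := by
    intro x
    have h1 : HasDerivAt (fun y : ℝ => y * (Real.exp y + 1))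
        (1 * (Real.exp x + 1) + x * Real.exp x) x :=
      (hasDerivAt_id' (x := x)).mul ((Real.hasDerivAt_exp x).add_const 1)
    have h2 : HasDerivAt (fun y : ℝ => 2 * Real.exp y) (2 * Real.exp x) x :=
      (Real.hasDerivAt_exp x).const_mul 2
    exact (h1.sub h2).add_const 2
  have hmono : MonotoneOn G (Set.Ici (0 : ℝ)) := by
    apply monotoneOn_of_deriv_nonneg (convex_Ici 0)
    · exact fun x _ => (hder x).continuousAt.continuousWithinAt
    · exact fun x _ => (hder x).differentiableAt.differentiableWithinAt
    · intro x hx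
      rw [(hder x).deriv]
      have h3 : (1 - x) * Real.exp x ≤ Real.exp (-x) * Real.exp x := by
        apply mul_le_mul_of_nonneg_right _ (Real.exp_pos x).le
        have := Real.add_one_le_exp (-x)
        linarith
      rw [← Real.exp_add] at h3
      simp only [neg_add_cancel, Real.exp_zero] at h3
      nlinarith [h3]
  have h0 : G 0 ≤ G s := hmono (Set.mem_Ici.mpr le_rfl) (Set.mem_Ici.mpr hs) hs
  simp only [hG, Real.exp_zero] at h0
  nlinarith [h0]

lemma exp_convex_pair (x y : ℝ) :
    (x - y) * (Real.exp x - Real.exp y) ≤ (x - y) ^ 2 * (Real.exp x + Real.exp y) / 2 := by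
  wlog h : y ≤ x with H
  · have h2 := H y x (le_of_not_ge h)
    nlinarith [h2]
  · have hs : 0 ≤ x - y := sub_nonneg.mpr h
    have hx : Real.exp x = Real.exp (x - y) * Real.exp y := by
      rw [← Real.exp_add]; ring_nf
    have hcore := exp_pair_core hs
    have hmul := mul_le_mul_of_nonneg_left hcore
      (show 0 ≤ (x - y) * Real.exp y / 2 by positivity)
    rw [hx]
    nlinarith [hmul]

lemma exp_convex_pair_scaled {θ : ℝ} (hθ : 0 ≤ θ) (u v : ℝ) :
    (u - v) * (Real.exp (θ * u) - Real.exp (θ * v)) ≤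
      θ / 2 * (u - v) ^ 2 * (Real.exp (θ * u) + Real.exp (θ * v)) := by
  rcases eq_or_lt_of_le hθ with h0 | hpos
  · rw [← h0]; simp
  · have hc := exp_convex_pair (θ * u) (θ * v)
    have h2 : θ * ((u - v) * (Real.exp (θ * u) - Real.exp (θ * v))) ≤
        θ * (θ / 2 * (u - v) ^ 2 * (Real.exp (θ * u) + Real.exp (θ * v))) := by
      nlinarith [hc]
    exact le_of_mul_le_mul_left h2 hpos

lemma exp_three_half : Real.exp ((3:ℝ)/2) ≤ 4.5 := by
  have h1 : Real.exp 1 ≤ 2.7182818286 := Real.exp_one_lt_d9.le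
  have h3 : Real.exp 3 ≤ 20.25 := by
    have he : Real.exp 3 = Real.exp 1 ^ 3 := by
      rw [← Real.exp_nat_mul]; norm_num
    have hp : Real.exp 1 ^ 3 ≤ 2.7182818286 ^ 3 :=
      pow_le_pow_left₀ (Real.exp_pos 1).le h1 3
    rw [he]
    calc Real.exp 1 ^ 3 ≤ 2.7182818286 ^ 3 := hp
      _ ≤ 20.25 := by norm_num
  have h2 : Real.exp ((3:ℝ)/2) ^ 2 = Real.exp 3 := by
    rw [← Real.exp_nat_mul]; norm_num
  nlinarith [Real.exp_pos ((3:ℝ)/2), h2, h3]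



variable {N : ℕ}

noncomputable def S (d : Fin N → Fin N → ℝ) (π : Equiv.Perm (Fin N)) : ℝ := ∑ i, d i (π i)

noncomputable def Dl (d : Fin N → Fin N → ℝ) (i j : Fin N) (π : Equiv.Perm (Fin N)) : ℝ :=
  d i (π i) + d j (π j) - d i (π j) - d j (π i)

lemma sum_perm_mul (e : Equiv.Perm (Fin N)) (F : Equiv.Perm (Fin N) → ℝ) :
    ∑ π : Equiv.Perm (Fin N), F (π * e) = ∑ π : Equiv.Perm (Fin N), F π :=
  Fintype.sum_equiv (Equiv.mulRight e) _ _ (fun _ => rfl)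

lemma reindex (π : Equiv.Perm (Fin N)) (f : Fin N → ℝ) : ∑ j, f (π j) = ∑ j, f j :=
  Equiv.sum_comp π f

lemma comm3 (X : Equiv.Perm (Fin N) → Fin N → Fin N → ℝ) :
    ∑ π : Equiv.Perm (Fin N), ∑ i, ∑ j, X π i j
      = ∑ i, ∑ j, ∑ π : Equiv.Perm (Fin N), X π i j := by
  rw [Finset.sum_comm]
  exact Finset.sum_congr rfl fun i _ => Finset.sum_comm

lemma S_swap (d : Fin N → Fin N → ℝ) (i j : Fin N) (π : Equiv.Perm (Fin N)) :
    S d (π * Equiv.swap i j) = S d π - Dl d i j π := by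
  have key : S d (π * Equiv.swap i j) - S d π = - Dl d i j π := by
    unfold S
    rw [← Finset.sum_sub_distrib]
    rcases eq_or_ne i j with rfl | hij
    · have hz : ∀ k : Fin N, d k ((π * Equiv.swap i i) k) - d k (π k) = 0 := by
        intro k; simp [Equiv.swap_self]
      rw [Finset.sum_congr rfl fun k _ => hz k]
      simp [Dl]
    · rw [← Finset.sum_subset (Finset.subset_univ ({i, j} : Finset (Fin N)))]
      · rw [Finset.sum_pair hij]
        simp only [Equiv.Perm.mul_apply, Equiv.swap_apply_left, Equiv.swap_apply_right]
        unfold Dl; ring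
      · intro k _ hk
        simp only [Finset.mem_insert, Finset.mem_singleton] at hk
        push_neg at hk
        rw [Equiv.Perm.mul_apply, Equiv.swap_apply_of_ne_of_ne hk.1 hk.2]
        ring
  linarith [key]

lemma Dl_swap (d : Fin N → Fin N → ℝ) (i j : Fin N) (π : Equiv.Perm (Fin N)) :
    Dl d i j (π * Equiv.swap i j) = - Dl d i j π := by
  simp only [Dl, Equiv.Perm.mul_apply, Equiv.swap_apply_left, Equiv.swap_apply_right]
  ring

lemma Dl_abs (d : Fin N → Fin N → ℝ) (B : ℝ) (hB : ∀ i j, |d i j| ≤ B)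
    (i j : Fin N) (π : Equiv.Perm (Fin N)) : |Dl d i j π| ≤ 4 * B := by
  unfold Dl
  have a1 := abs_le.mp (hB i (π i)); have a2 := abs_le.mp (hB j (π j))
  have a3 := abs_le.mp (hB i (π j)); have a4 := abs_le.mp (hB j (π i))
  rw [abs_le]
  constructor <;> linarith [a1.1, a1.2, a2.1, a2.2, a3.1, a3.2, a4.1, a4.2]

lemma sum_Dl (d : Fin N → Fin N → ℝ) (hrow : ∀ i, ∑ j, d i j = 0) (π : Equiv.Perm (Fin N)) :
    ∑ i, ∑ j, Dl d i j π = 2 * N * S d π := by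
  have h0 : ∀ i : Fin N, ∑ j, d i (π j) = 0 := fun i => (reindex π (d i)).trans (hrow i)
  have hcol : ∑ i, (∑ j, d j (π i)) = 0 := by
    rw [reindex π (fun c => ∑ j, d j c), Finset.sum_comm]
    simp [hrow]
  have hinner : ∀ i, ∑ j, Dl d i j π
      = (N : ℝ) * d i (π i) + S d π - 0 - ∑ j, d j (π i) := by
    intro i
    unfold Dl
    simp only [Finset.sum_sub_distrib, Finset.sum_add_distrib, Finset.sum_const,
      Finset.card_univ, Fintype.card_fin, nsmul_eq_mul, h0 i]
    unfold S
    ring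
  rw [Finset.sum_congr rfl fun i _ => hinner i]
  simp only [Finset.sum_sub_distrib, Finset.sum_add_distrib, Finset.sum_const,
    Finset.card_univ, Fintype.card_fin, nsmul_eq_mul, hcol]
  rw [← Finset.mul_sum]
  unfold S
  ring

/-- The central differential inequality. -/
lemma key_ineq (d : Fin N → Fin N → ℝ) (B : ℝ)
    (hB : ∀ i j, |d i j| ≤ B) (hrow : ∀ i, ∑ j, d i j = 0)
    {θ : ℝ} (hθ : 0 ≤ θ) :
    (N : ℝ) * ∑ π : Equiv.Perm (Fin N), S d π * Real.exp (θ * S d π) ≤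
      2 * θ * (∑ i, ∑ j, d i j ^ 2) * (1 + Real.exp (4 * θ * B)) *
        ∑ π : Equiv.Perm (Fin N), Real.exp (θ * S d π) := by
  set V : ℝ := ∑ i, ∑ j, d i j ^ 2 with hV
  set m : ℝ := ∑ π : Equiv.Perm (Fin N), Real.exp (θ * S d π) with hm
  set T : ℝ := ∑ π : Equiv.Perm (Fin N), S d π * Real.exp (θ * S d π) with hT
  have hP1 : ∑ π : Equiv.Perm (Fin N), ∑ i, ∑ j, Dl d i j π * Real.exp (θ * S d π)
      = 2 * N * T := by
    rw [hT, Finset.mul_sum]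
    apply Finset.sum_congr rfl
    intro π _
    have hpull : ∑ i, ∑ j, Dl d i j π * Real.exp (θ * S d π)
        = (∑ i, ∑ j, Dl d i j π) * Real.exp (θ * S d π) := by
      rw [Finset.sum_mul]
      exact Finset.sum_congr rfl fun i _ => (Finset.sum_mul _ _ _).symm
    rw [hpull, sum_Dl d hrow π]
    ring
  have hP2 : ∑ π : Equiv.Perm (Fin N), ∑ i, ∑ j,
        Dl d i j π * Real.exp (θ * S d (π * Equiv.swap i j))
      = - ∑ π : Equiv.Perm (Fin N), ∑ i, ∑ j, Dl d i j π * Real.exp (θ * S d π) := by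
    rw [comm3, comm3]
    rw [← Finset.sum_neg_distrib]
    apply Finset.sum_congr rfl
    intro i _
    rw [← Finset.sum_neg_distrib]
    apply Finset.sum_congr rfl
    intro j _
    have hsub := sum_perm_mul (Equiv.swap i j)
      (fun ρ => - Dl d i j ρ * Real.exp (θ * S d ρ))
    calc ∑ π : Equiv.Perm (Fin N), Dl d i j π * Real.exp (θ * S d (π * Equiv.swap i j))
        = ∑ π : Equiv.Perm (Fin N),
            - Dl d i j (π * Equiv.swap i j) * Real.exp (θ * S d (π * Equiv.swap i j)) := by
          apply Finset.sum_congr rfl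
          intro π _
          rw [Dl_swap]
          ring
      _ = ∑ π : Equiv.Perm (Fin N), - Dl d i j π * Real.exp (θ * S d π) := hsub
      _ = - ∑ π : Equiv.Perm (Fin N), Dl d i j π * Real.exp (θ * S d π) := by
          rw [← Finset.sum_neg_distrib]
          exact Finset.sum_congr rfl fun π _ => by ring
  have hQ2 : ∑ π : Equiv.Perm (Fin N), ∑ i, ∑ j,
        (Dl d i j π) ^ 2 * Real.exp (θ * S d (π * Equiv.swap i j))
      = ∑ π : Equiv.Perm (Fin N), ∑ i, ∑ j, (Dl d i j π) ^ 2 * Real.exp (θ * S d π) := by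
    rw [comm3, comm3]
    apply Finset.sum_congr rfl
    intro i _
    apply Finset.sum_congr rfl
    intro j _
    have hsub := sum_perm_mul (Equiv.swap i j)
      (fun ρ => (Dl d i j ρ) ^ 2 * Real.exp (θ * S d ρ))
    calc ∑ π : Equiv.Perm (Fin N), (Dl d i j π) ^ 2 * Real.exp (θ * S d (π * Equiv.swap i j))
        = ∑ π : Equiv.Perm (Fin N),
            (Dl d i j (π * Equiv.swap i j)) ^ 2 * Real.exp (θ * S d (π * Equiv.swap i j)) := by
          apply Finset.sum_congr rfl
          intro π _
          rw [Dl_swap]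
          ring
      _ = ∑ π : Equiv.Perm (Fin N), (Dl d i j π) ^ 2 * Real.exp (θ * S d π) := hsub
  have hstep : 4 * (N : ℝ) * T ≤
      θ * ∑ π : Equiv.Perm (Fin N), (∑ i, ∑ j, (Dl d i j π) ^ 2) * Real.exp (θ * S d π) := by
    have hpoint : ∀ (π : Equiv.Perm (Fin N)) (i j : Fin N),
        Dl d i j π * Real.exp (θ * S d π)
          - Dl d i j π * Real.exp (θ * S d (π * Equiv.swap i j))
        ≤ θ / 2 * (Dl d i j π) ^ 2 *
            (Real.exp (θ * S d π) + Real.exp (θ * S d (π * Equiv.swap i j))) := by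
      intro π i j
      have hsw := S_swap d i j π
      have huv := exp_convex_pair_scaled hθ (S d π) (S d (π * Equiv.swap i j))
      rw [hsw] at huv ⊢
      have hDeq : S d π - (S d π - Dl d i j π) = Dl d i j π := by ring
      rw [hDeq] at huv
      nlinarith [huv]
    have hsum : (∑ π : Equiv.Perm (Fin N), ∑ i, ∑ j, Dl d i j π * Real.exp (θ * S d π))
        - (∑ π : Equiv.Perm (Fin N), ∑ i, ∑ j,
            Dl d i j π * Real.exp (θ * S d (π * Equiv.swap i j)))
        ≤ θ / 2 * ((∑ π : Equiv.Perm (Fin N), ∑ i, ∑ j,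
              (Dl d i j π) ^ 2 * Real.exp (θ * S d π))
          + ∑ π : Equiv.Perm (Fin N), ∑ i, ∑ j,
              (Dl d i j π) ^ 2 * Real.exp (θ * S d (π * Equiv.swap i j))) := by
      rw [← Finset.sum_sub_distrib, ← Finset.sum_add_distrib, Finset.mul_sum]
      apply Finset.sum_le_sum
      intro π _
      rw [← Finset.sum_sub_distrib, ← Finset.sum_add_distrib, Finset.mul_sum]
      apply Finset.sum_le_sum
      intro i _
      rw [← Finset.sum_sub_distrib, ← Finset.sum_add_distrib, Finset.mul_sum]
      apply Finset.sum_le_sum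
      intro j _
      have := hpoint π i j
      nlinarith [this]
    rw [hP1, hP2, hP1, hQ2] at hsum
    have hQ1pull : ∑ π : Equiv.Perm (Fin N), ∑ i, ∑ j, (Dl d i j π) ^ 2 * Real.exp (θ * S d π)
        = ∑ π : Equiv.Perm (Fin N), (∑ i, ∑ j, (Dl d i j π) ^ 2) * Real.exp (θ * S d π) := by
      apply Finset.sum_congr rfl
      intro π _
      rw [Finset.sum_mul]
      exact Finset.sum_congr rfl fun i _ => (Finset.sum_mul _ _ _).symm
    rw [hQ1pull] at hsum
    linarith [hsum]
  have hQbound : ∀ π : Equiv.Perm (Fin N),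
      ∑ i, ∑ j, (Dl d i j π) ^ 2 ≤ 8 * N * (∑ i, d i (π i) ^ 2) + 8 * V := by
    intro π
    have hpt : ∀ i j : Fin N, (Dl d i j π) ^ 2
        ≤ 4 * (d i (π i) ^ 2 + d j (π j) ^ 2 + d i (π j) ^ 2 + d j (π i) ^ 2) := by
      intro i j
      unfold Dl
      nlinarith [sq_nonneg (d i (π i) - d j (π j)), sq_nonneg (d i (π j) - d j (π i)),
        sq_nonneg (d i (π i) + d j (π j) + d i (π j) + d j (π i)),
        sq_nonneg (d i (π i) + d j (π j) - d i (π j) - d j (π i))]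
    have e1 : ∀ i : Fin N, ∑ j, d i (π j) ^ 2 = ∑ j, d i j ^ 2 :=
      fun i => reindex π (fun c => d i c ^ 2)
    have e2 : ∑ i, (∑ j, d j (π i) ^ 2) = V := by
      rw [reindex π (fun c => ∑ j, d j c ^ 2), Finset.sum_comm]
    have einner : ∀ i : Fin N, ∑ j : Fin N,
        (4:ℝ) * (d i (π i) ^ 2 + d j (π j) ^ 2 + d i (π j) ^ 2 + d j (π i) ^ 2)
        = 4 * ((N:ℝ) * d i (π i) ^ 2 + (∑ j, d j (π j) ^ 2) + (∑ j, d i j ^ 2)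
            + (∑ j, d j (π i) ^ 2)) := by
      intro i
      rw [← Finset.mul_sum]
      congr 1
      simp only [Finset.sum_add_distrib, Finset.sum_const, Finset.card_univ, Fintype.card_fin,
        nsmul_eq_mul, e1 i]
    calc ∑ i, ∑ j, (Dl d i j π) ^ 2
        ≤ ∑ i : Fin N, ∑ j : Fin N,
            (4:ℝ) * (d i (π i) ^ 2 + d j (π j) ^ 2 + d i (π j) ^ 2 + d j (π i) ^ 2) := by
          apply Finset.sum_le_sum; intro i _
          apply Finset.sum_le_sum; intro j _
          exact hpt i j
      _ = 8 * N * (∑ i, d i (π i) ^ 2) + 8 * V := by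
          rw [Finset.sum_congr rfl fun i _ => einner i]
          rw [← Finset.mul_sum]
          simp only [Finset.sum_add_distrib, Finset.sum_const, Finset.card_univ,
            Fintype.card_fin, nsmul_eq_mul]
          rw [← Finset.mul_sum, e2, ← hV]
          have hW2 : ∑ i : Fin N, d i (π i) ^ 2 = ∑ j : Fin N, d j (π j) ^ 2 := rfl
          rw [← hW2]
          ring
  have hW : (N:ℝ) * ∑ π : Equiv.Perm (Fin N), (∑ i, d i (π i) ^ 2) * Real.exp (θ * S d π)
      ≤ Real.exp (4 * θ * B) * V * m := by
    have hswap : ∑ π : Equiv.Perm (Fin N), (∑ i, d i (π i) ^ 2) * Real.exp (θ * S d π)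
        = ∑ i, ∑ π : Equiv.Perm (Fin N), d i (π i) ^ 2 * Real.exp (θ * S d π) := by
      rw [← Finset.sum_comm]
      exact Finset.sum_congr rfl fun π _ => Finset.sum_mul _ _ _
    rw [hswap, Finset.mul_sum]
    have hI : ∀ i : Fin N,
        (N:ℝ) * ∑ π : Equiv.Perm (Fin N), d i (π i) ^ 2 * Real.exp (θ * S d π)
        ≤ Real.exp (4 * θ * B) * (∑ j, d i j ^ 2) * m := by
      intro i
      have hconst : (N:ℝ) * ∑ π : Equiv.Perm (Fin N), d i (π i) ^ 2 * Real.exp (θ * S d π)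
          = ∑ j : Fin N, ∑ π : Equiv.Perm (Fin N), d i (π i) ^ 2 * Real.exp (θ * S d π) := by
        rw [Finset.sum_const, Finset.card_univ, Fintype.card_fin, nsmul_eq_mul]
      rw [hconst]
      have hIJ : ∀ j : Fin N,
          ∑ π : Equiv.Perm (Fin N), d i (π i) ^ 2 * Real.exp (θ * S d π)
          ≤ Real.exp (4 * θ * B) * ∑ π : Equiv.Perm (Fin N),
              d i (π j) ^ 2 * Real.exp (θ * S d π) := by
        intro j
        have hsub := sum_perm_mul (Equiv.swap i j)
          (fun ρ => d i (ρ i) ^ 2 * Real.exp (θ * S d ρ))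
        rw [← hsub]
        rw [Finset.mul_sum]
        apply Finset.sum_le_sum
        intro π _
        have happ : (π * Equiv.swap i j) i = π j := by
          rw [Equiv.Perm.mul_apply, Equiv.swap_apply_left]
        rw [happ, S_swap]
        have hexp : Real.exp (θ * (S d π - Dl d i j π))
            ≤ Real.exp (θ * S d π) * Real.exp (4 * θ * B) := by
          rw [← Real.exp_add]
          apply Real.exp_le_exp.mpr
          have habs := Dl_abs d B hB i j π
          have h1 : - Dl d i j π ≤ 4 * B := by
            have := abs_le.mp habs
            linarith [this.1]
          nlinarith [h1, hθ]
        calc d i (π j) ^ 2 * Real.exp (θ * (S d π - Dl d i j π))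
            ≤ d i (π j) ^ 2 * (Real.exp (θ * S d π) * Real.exp (4 * θ * B)) :=
              mul_le_mul_of_nonneg_left hexp (sq_nonneg _)
          _ = Real.exp (4 * θ * B) * (d i (π j) ^ 2 * Real.exp (θ * S d π)) := by ring
      calc ∑ j : Fin N, ∑ π : Equiv.Perm (Fin N), d i (π i) ^ 2 * Real.exp (θ * S d π)
          ≤ ∑ j : Fin N, Real.exp (4 * θ * B) *
              ∑ π : Equiv.Perm (Fin N), d i (π j) ^ 2 * Real.exp (θ * S d π) := by
            apply Finset.sum_le_sum
            intro j _
            exact hIJ j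
        _ = Real.exp (4 * θ * B) * ∑ π : Equiv.Perm (Fin N),
              (∑ j, d i (π j) ^ 2) * Real.exp (θ * S d π) := by
            rw [← Finset.mul_sum]
            congr 1
            rw [Finset.sum_comm]
            exact Finset.sum_congr rfl fun π _ => (Finset.sum_mul _ _ _).symm
        _ = Real.exp (4 * θ * B) * ((∑ j, d i j ^ 2) * m) := by
            congr 1
            rw [hm, Finset.mul_sum]
            exact Finset.sum_congr rfl fun π _ => by
              rw [reindex π (fun c => d i c ^ 2)]
        _ = Real.exp (4 * θ * B) * (∑ j, d i j ^ 2) * m := by ring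
    calc ∑ i : Fin N, (N:ℝ) * ∑ π : Equiv.Perm (Fin N), d i (π i) ^ 2 * Real.exp (θ * S d π)
        ≤ ∑ i : Fin N, Real.exp (4 * θ * B) * (∑ j, d i j ^ 2) * m :=
          Finset.sum_le_sum fun i _ => hI i
      _ = Real.exp (4 * θ * B) * V * m := by
          rw [hV, ← Finset.sum_mul, ← Finset.mul_sum]
  -- final assembly
  have hEm : ∀ π : Equiv.Perm (Fin N), 0 ≤ Real.exp (θ * S d π) := fun π => (Real.exp_pos _).le
  have h1 : ∑ π : Equiv.Perm (Fin N), (∑ i, ∑ j, (Dl d i j π) ^ 2) * Real.exp (θ * S d π)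
      ≤ ∑ π : Equiv.Perm (Fin N),
          (8 * N * (∑ i, d i (π i) ^ 2) + 8 * V) * Real.exp (θ * S d π) :=
    Finset.sum_le_sum fun π _ => mul_le_mul_of_nonneg_right (hQbound π) (hEm π)
  have h2 : ∑ π : Equiv.Perm (Fin N),
        (8 * (N:ℝ) * (∑ i, d i (π i) ^ 2) + 8 * V) * Real.exp (θ * S d π)
      = 8 * (N:ℝ) * (∑ π : Equiv.Perm (Fin N), (∑ i, d i (π i) ^ 2) * Real.exp (θ * S d π))
        + 8 * V * m := by
    have hptw : ∀ π : Equiv.Perm (Fin N),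
        (8 * (N:ℝ) * (∑ i, d i (π i) ^ 2) + 8 * V) * Real.exp (θ * S d π)
        = 8 * (N:ℝ) * ((∑ i, d i (π i) ^ 2) * Real.exp (θ * S d π))
          + 8 * V * Real.exp (θ * S d π) := fun π => by ring
    rw [Finset.sum_congr rfl fun π _ => hptw π, Finset.sum_add_distrib,
      ← Finset.mul_sum, ← Finset.mul_sum, hm]
  have h3 := hstep.trans (mul_le_mul_of_nonneg_left (h1.trans_eq h2) hθ)
  have h4 := mul_le_mul_of_nonneg_left hW (show (0:ℝ) ≤ 8 * θ by positivity)
  nlinarith [h3, h4]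


/-- Moment generating function bound. -/
lemma mgf_le (hN : 1 ≤ N) (d : Fin N → Fin N → ℝ) (B : ℝ)
    (hB : ∀ i j, |d i j| ≤ B) (hrow : ∀ i, ∑ j, d i j = 0) (hBnn : 0 ≤ B)
    {θ₀ : ℝ} (hθ₀ : 0 ≤ θ₀) :
    ∑ π : Equiv.Perm (Fin N), Real.exp (θ₀ * S d π) ≤
      (Nat.factorial N : ℝ) *
        Real.exp ((∑ i, ∑ j, d i j ^ 2) / N * (1 + Real.exp (4 * θ₀ * B)) * θ₀ ^ 2) := by
  have hNpos : (0:ℝ) < N := by exact_mod_cast Nat.lt_of_lt_of_le Nat.zero_lt_one hN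
  have hfact : (0:ℝ) < (Nat.factorial N : ℝ) := by exact_mod_cast Nat.factorial_pos N
  set c : ℝ := (∑ i, ∑ j, d i j ^ 2) / N * (1 + Real.exp (4 * θ₀ * B)) with hc
  have hVnn : (0:ℝ) ≤ ∑ i, ∑ j, d i j ^ 2 := by positivity
  have hcnn : 0 ≤ c := by
    rw [hc]
    have : (0:ℝ) ≤ 1 + Real.exp (4 * θ₀ * B) := by positivity
    positivity
  set mf : ℝ → ℝ := fun θ => ∑ π : Equiv.Perm (Fin N), Real.exp (θ * S d π) with hmf
  have hmpos : ∀ θ : ℝ, 0 < mf θ := by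
    intro θ
    apply Finset.sum_pos (fun π _ => Real.exp_pos _)
    exact ⟨1, Finset.mem_univ 1⟩
  have hm0 : mf 0 = (Nat.factorial N : ℝ) := by
    simp only [hmf, zero_mul, Real.exp_zero, Finset.sum_const, Finset.card_univ,
      Fintype.card_perm, Fintype.card_fin, nsmul_eq_mul, mul_one]
  have hmder : ∀ θ : ℝ, HasDerivAt mf
      (∑ π : Equiv.Perm (Fin N), S d π * Real.exp (θ * S d π)) θ := by
    intro θ
    apply HasDerivAt.fun_sum
    intro π _
    have h := (Real.hasDerivAt_exp (θ * S d π)).comp θ (hasDerivAt_mul_const (S d π))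
    simpa [mul_comm, Function.comp_def] using h
  set h : ℝ → ℝ := fun θ => Real.log (mf θ) - c * θ ^ 2 with hh
  have hhder : ∀ θ : ℝ, HasDerivAt h
      ((∑ π : Equiv.Perm (Fin N), S d π * Real.exp (θ * S d π)) / mf θ - c * (2 * θ)) θ := by
    intro θ
    have h1 := (hmder θ).log (ne_of_gt (hmpos θ))
    have h2 : HasDerivAt (fun θ : ℝ => c * θ ^ 2) (c * (2 * θ)) θ := by
      simpa using (hasDerivAt_pow 2 θ).const_mul c
    exact h1.sub h2
  have hanti : AntitoneOn h (Set.Icc 0 θ₀) := by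
    apply antitoneOn_of_deriv_nonpos (convex_Icc 0 θ₀)
    · exact fun x _ => (hhder x).continuousAt.continuousWithinAt
    · intro x hx
      exact (hhder x).differentiableAt.differentiableWithinAt
    · intro x hx
      rw [interior_Icc] at hx
      rw [(hhder x).deriv]
      have hx0 : 0 ≤ x := hx.1.le
      have hkey := key_ineq d B hB hrow hx0
      have hmono : Real.exp (4 * x * B) ≤ Real.exp (4 * θ₀ * B) := by
        apply Real.exp_le_exp.mpr
        nlinarith [hx.2.le, hBnn, hx0]
      have hfac : 2 * x * (∑ i, ∑ j, d i j ^ 2) * (1 + Real.exp (4 * x * B))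
          ≤ 2 * x * (∑ i, ∑ j, d i j ^ 2) * (1 + Real.exp (4 * θ₀ * B)) := by
        apply mul_le_mul_of_nonneg_left (by linarith) (by positivity)
      have hkey2 : (N:ℝ) * (∑ π : Equiv.Perm (Fin N), S d π * Real.exp (x * S d π))
          ≤ (N:ℝ) * (c * (2 * x) * mf x) := by
        calc (N:ℝ) * (∑ π : Equiv.Perm (Fin N), S d π * Real.exp (x * S d π))
            ≤ 2 * x * (∑ i, ∑ j, d i j ^ 2) * (1 + Real.exp (4 * x * B)) * mf x := hkey
          _ ≤ 2 * x * (∑ i, ∑ j, d i j ^ 2) * (1 + Real.exp (4 * θ₀ * B)) * mf x :=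
              mul_le_mul_of_nonneg_right hfac (hmpos x).le
          _ = (N:ℝ) * (c * (2 * x) * mf x) := by
              have hNne : (N:ℝ) ≠ 0 := ne_of_gt hNpos
              have hNc : (N:ℝ) * c
                  = (∑ i, ∑ j, d i j ^ 2) * (1 + Real.exp (4 * θ₀ * B)) := by
                rw [hc]; field_simp
              linear_combination (-(2 * x * mf x)) * hNc
      have hkey3 : (∑ π : Equiv.Perm (Fin N), S d π * Real.exp (x * S d π))
          ≤ c * (2 * x) * mf x := le_of_mul_le_mul_left hkey2 hNpos
      have hdiv : (∑ π : Equiv.Perm (Fin N), S d π * Real.exp (x * S d π)) / mf x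
          ≤ c * (2 * x) := (div_le_iff₀ (hmpos x)).mpr hkey3
      linarith [hdiv]
  rcases eq_or_lt_of_le hθ₀ with h0 | hpos
  · rw [← h0]
    rw [show c * (0:ℝ) ^ 2 = 0 by ring, Real.exp_zero, mul_one]
    exact le_of_eq hm0
  · have h1 : h θ₀ ≤ h 0 :=
      hanti (Set.left_mem_Icc.mpr hθ₀) (Set.right_mem_Icc.mpr hθ₀) hθ₀
    simp only [hh] at h1
    rw [hm0] at h1
    have h2 : Real.log (mf θ₀) ≤ Real.log (Nat.factorial N : ℝ) + c * θ₀ ^ 2 := by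
      nlinarith [h1]
    have h3 : mf θ₀ ≤ (Nat.factorial N : ℝ) * Real.exp (c * θ₀ ^ 2) := by
      calc mf θ₀ = Real.exp (Real.log (mf θ₀)) := (Real.exp_log (hmpos θ₀)).symm
        _ ≤ Real.exp (Real.log (Nat.factorial N : ℝ) + c * θ₀ ^ 2) := Real.exp_le_exp.mpr h2
        _ = (Nat.factorial N : ℝ) * Real.exp (c * θ₀ ^ 2) := by
            rw [Real.exp_add, Real.exp_log hfact]
    calc (∑ π : Equiv.Perm (Fin N), Real.exp (θ₀ * S d π)) = mf θ₀ := rfl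
      _ ≤ (Nat.factorial N : ℝ) * Real.exp (c * θ₀ ^ 2) := h3
      _ = (Nat.factorial N : ℝ) *
          Real.exp ((∑ i, ∑ j, d i j ^ 2) / N * (1 + Real.exp (4 * θ₀ * B)) * θ₀ ^ 2) := by
            rw [hc]

end CB

set_option maxHeartbeats 2000000 in
/-- Combinatorial Bernstein inequality. -/
theorem combinatorial_bernstein
    (N : ℕ) (hN : 1 ≤ N) (a : Fin N → Fin N → ℝ) (t : ℝ) (ht : 0 ≤ t) :
    permProb N (fun π => t ≤ combSum N a π - muA N a)
      ≤ Real.exp (-(t ^ 2) / (12 * sigmaA2 N a + 4 * Real.sqrt 2 * BA N a * t)) := by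
  classical
  have hNpos : (0:ℝ) < N := by exact_mod_cast Nat.lt_of_lt_of_le Nat.zero_lt_one hN
  have hNne : (N:ℝ) ≠ 0 := ne_of_gt hNpos
  have hfact : (0:ℝ) < (Nat.factorial N : ℝ) := by exact_mod_cast Nat.factorial_pos N
  set d : Fin N → Fin N → ℝ := dmat N a with hd
  -- row sums vanish
  have hrow : ∀ i, ∑ j, d i j = 0 := by
    intro i
    have hGcomm : ∑ j : Fin N, ∑ k, a k j = ∑ k : Fin N, ∑ l, a k l := Finset.sum_comm
    simp only [hd, dmat]
    rw [Finset.sum_add_distrib, Finset.sum_sub_distrib, Finset.sum_sub_distrib,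
      ← Finset.sum_div, ← Finset.sum_div, Finset.sum_const, Finset.card_univ,
      Fintype.card_fin, nsmul_eq_mul, hGcomm]
    simp only [Finset.sum_const, Finset.card_univ, Fintype.card_fin, nsmul_eq_mul]
    field_simp
    ring
  -- the centered sum equals combSum - muA
  have hS : ∀ π : Equiv.Perm (Fin N), combSum N a π - muA N a = CB.S d π := by
    intro π
    have e2 : ∑ i : Fin N, (∑ k, a k (π i)) = ∑ k : Fin N, ∑ l, a k l := by
      rw [CB.reindex π (fun c => ∑ k, a k c)]
      exact Finset.sum_comm
    have e1 : CB.S d π = combSum N a π - (∑ i : Fin N, (∑ k, a k (π i))) / N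
        - (∑ i : Fin N, ∑ l, a i l) / N + (N:ℝ) * ((∑ k : Fin N, ∑ l, a k l) / (N:ℝ) ^ 2) := by
      simp only [CB.S, hd, dmat, combSum]
      rw [Finset.sum_add_distrib, Finset.sum_sub_distrib, Finset.sum_sub_distrib,
        ← Finset.sum_div, ← Finset.sum_div, Finset.sum_const, Finset.card_univ,
        Fintype.card_fin, nsmul_eq_mul]
    rw [e1, e2]
    simp only [muA]
    field_simp
    ring
  -- bound on entries
  have hB : ∀ i j, |d i j| ≤ BA N a := by
    have hBAeq : BA N a = ⨆ i' : Fin N, ⨆ j' : Fin N, |d i' j'| := by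
      simp only [BA, ← hd]
    intro i j
    have h1 : |d i j| ≤ ⨆ j' : Fin N, |d i j'| :=
      le_ciSup (f := fun j' => |d i j'|) (Set.Finite.bddAbove (Set.finite_range _)) j
    have h2 : (⨆ j' : Fin N, |d i j'|) ≤ ⨆ i' : Fin N, ⨆ j' : Fin N, |d i' j'| :=
      le_ciSup (f := fun i' => ⨆ j' : Fin N, |d i' j'|)
        (Set.Finite.bddAbove (Set.finite_range _)) i
    rw [hBAeq]
    exact h1.trans h2
  have hBnn : 0 ≤ BA N a := le_trans (abs_nonneg _) (hB ⟨0, hN⟩ ⟨0, hN⟩)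
  -- variance facts
  set V : ℝ := ∑ i, ∑ j, d i j ^ 2 with hV
  have hVnn : 0 ≤ V := by rw [hV]; positivity
  have hsig : sigmaA2 N a = V / ((N:ℝ) - 1) := by rw [sigmaA2, hV, hd]
  have hVN : V / (N:ℝ) ≤ sigmaA2 N a ∧ 0 ≤ sigmaA2 N a := by
    rcases eq_or_lt_of_le hN with h1 | h2
    · -- N = 1
      have hNe : N = 1 := h1.symm
      have hall : ∀ j j' : Fin N, j = j' := by
        intro j j'
        apply Fin.ext
        have hl1 := j.isLt
        have hl2 := j'.isLt
        omega
      have hd0 : ∀ i j : Fin N, d i j = 0 := by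
        intro i j
        have hr := hrow i
        have hconst : ∀ j' : Fin N, d i j' = d i j := fun j' => by rw [hall j' j]
        rw [Finset.sum_congr rfl fun x _ => hconst x, Finset.sum_const, Finset.card_univ,
          Fintype.card_fin, hNe, one_smul] at hr
        exact hr
      have hV0 : V = 0 := by
        rw [hV]
        simp [hd0]
      rw [hV0, hsig, hV0]
      norm_num
    · -- N ≥ 2
      have h2' : (2:ℝ) ≤ (N:ℝ) := by exact_mod_cast h2
      have hden : (0:ℝ) < (N:ℝ) - 1 := by linarith
      constructor
      · rw [hsig]
        apply div_le_div_of_nonneg_left hVnn hden (by linarith)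
      · rw [hsig]
        exact div_nonneg hVnn hden.le
  obtain ⟨hVNle, hsignn⟩ := hVN
  -- sqrt 2 facts
  have hs2sq : Real.sqrt 2 * Real.sqrt 2 = 2 := Real.mul_self_sqrt (by norm_num)
  have hs2nn : (0:ℝ) ≤ Real.sqrt 2 := Real.sqrt_nonneg 2
  have hs2l : (1.414213562 : ℝ) ≤ Real.sqrt 2 := by nlinarith [hs2sq, hs2nn]
  -- main case split
  set D0 : ℝ := 6 * sigmaA2 N a + 2 * Real.sqrt 2 * BA N a * t with hD0
  have hBtnn : 0 ≤ BA N a * t := mul_nonneg hBnn ht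
  have hD0nn : 0 ≤ D0 := by
    rw [hD0]
    nlinarith [hsig, hsignn, hs2nn, hBtnn]
  rcases eq_or_lt_of_le hD0nn with hDz | hDpos
  · -- degenerate: D0 = 0
    have hz : sigmaA2 N a = 0 ∧ Real.sqrt 2 * (BA N a * t) = 0 := by
      constructor <;> nlinarith [hsignn, hs2nn, hBtnn, hDz.symm, mul_nonneg hs2nn hBtnn]
    rcases eq_or_lt_of_le ht with ht0 | htpos
    · -- t = 0
      rw [← ht0]
      have hexp : -((0:ℝ) ^ 2) / (12 * sigmaA2 N a + 4 * Real.sqrt 2 * BA N a * 0) = 0 := by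
        norm_num
      rw [hexp, Real.exp_zero]
      unfold permProb
      rw [div_le_one hfact]
      calc ∑ π : Equiv.Perm (Fin N), (if (0:ℝ) ≤ combSum N a π - muA N a then (1:ℝ) else 0)
          ≤ ∑ π : Equiv.Perm (Fin N), (1:ℝ) := by
            apply Finset.sum_le_sum
            intro π _
            split <;> norm_num
        _ = (Nat.factorial N : ℝ) := by
            simp [Finset.card_univ, Fintype.card_perm]
    · -- t > 0 : B = 0 and hence all entries vanish
      have hB0 : BA N a = 0 := by
        by_contra hne
        have hBpos : 0 < BA N a := lt_of_le_of_ne hBnn (Ne.symm hne)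
        nlinarith [hz.2, hs2l, htpos]
      have hd0 : ∀ i j, d i j = 0 := by
        intro i j
        have := (hB i j).trans (le_of_eq hB0)
        have h2 := abs_nonneg (d i j)
        exact abs_eq_zero.mp (le_antisymm this h2)
      have hSz : ∀ π : Equiv.Perm (Fin N), combSum N a π - muA N a = 0 := by
        intro π
        rw [hS π]
        simp [CB.S, hd0]
      unfold permProb
      have hnum : ∑ π : Equiv.Perm (Fin N),
          (if t ≤ combSum N a π - muA N a then (1:ℝ) else 0) = 0 := by
        apply Finset.sum_eq_zero
        intro π _
        rw [if_neg]
        rw [hSz π]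
        linarith
      rw [hnum, zero_div]
      exact (Real.exp_pos _).le
  · -- main case: D0 > 0
    set θ : ℝ := t / D0 with hθdef
    have hθ : 0 ≤ θ := div_nonneg ht hDpos.le
    -- Chernoff bound
    have hpoint : ∀ π : Equiv.Perm (Fin N),
        (if t ≤ combSum N a π - muA N a then (1:ℝ) else 0)
          ≤ Real.exp (-(θ * t)) * Real.exp (θ * CB.S d π) := by
      intro π
      rw [← Real.exp_add]
      split_ifs with hcond
      · have h2 : 0 ≤ θ * (CB.S d π - t) := by
          apply mul_nonneg hθ
          have := hS π
          linarith [this ▸ hcond]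
        calc (1:ℝ) ≤ Real.exp (θ * (CB.S d π - t)) := Real.one_le_exp h2
          _ = Real.exp (-(θ * t) + θ * CB.S d π) := by ring_nf
      · exact (Real.exp_pos _).le
    have hcher : permProb N (fun π => t ≤ combSum N a π - muA N a)
        ≤ Real.exp (-(θ * t)) * ((∑ π : Equiv.Perm (Fin N), Real.exp (θ * CB.S d π))
            / (Nat.factorial N : ℝ)) := by
      unfold permProb
      rw [show Real.exp (-(θ * t)) * ((∑ π : Equiv.Perm (Fin N), Real.exp (θ * CB.S d π))
            / (Nat.factorial N : ℝ))
          = (∑ π : Equiv.Perm (Fin N), Real.exp (-(θ * t)) * Real.exp (θ * CB.S d π))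
            / (Nat.factorial N : ℝ) by rw [← Finset.mul_sum]; ring]
      gcongr with π hπ
      exact hpoint π
    -- apply the MGF bound
    have hmgf := CB.mgf_le hN d (BA N a) hB hrow hBnn hθ
    have hmgf2 : (∑ π : Equiv.Perm (Fin N), Real.exp (θ * CB.S d π)) / (Nat.factorial N : ℝ)
        ≤ Real.exp (V / N * (1 + Real.exp (4 * θ * BA N a)) * θ ^ 2) := by
      rw [div_le_iff₀ hfact]
      calc (∑ π : Equiv.Perm (Fin N), Real.exp (θ * CB.S d π))
          ≤ (Nat.factorial N : ℝ) *
              Real.exp ((∑ i, ∑ j, d i j ^ 2) / N * (1 + Real.exp (4 * θ * BA N a)) * θ ^ 2) :=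
            hmgf
        _ = Real.exp (V / N * (1 + Real.exp (4 * θ * BA N a)) * θ ^ 2) *
              (Nat.factorial N : ℝ) := by rw [hV]; ring
    have hstep2 : permProb N (fun π => t ≤ combSum N a π - muA N a)
        ≤ Real.exp (-(θ * t) + V / N * (1 + Real.exp (4 * θ * BA N a)) * θ ^ 2) := by
      rw [Real.exp_add]
      calc permProb N (fun π => t ≤ combSum N a π - muA N a)
          ≤ Real.exp (-(θ * t)) * ((∑ π : Equiv.Perm (Fin N), Real.exp (θ * CB.S d π))
              / (Nat.factorial N : ℝ)) := hcher
        _ ≤ Real.exp (-(θ * t)) *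
              Real.exp (V / N * (1 + Real.exp (4 * θ * BA N a)) * θ ^ 2) :=
            mul_le_mul_of_nonneg_left hmgf2 (Real.exp_pos _).le
    -- final numeric comparison
    apply hstep2.trans
    apply Real.exp_le_exp.mpr
    -- abbreviations
    set E : ℝ := Real.exp (4 * θ * BA N a) with hE
    have hEnn : (0:ℝ) < E := Real.exp_pos _
    have hq : 4 * θ * BA N a = 4 * (BA N a * t) / D0 := by rw [hθdef]; ring
    -- claim : sigma2 * (1 + E) ≤ D0 / 2
    have hclaim : sigmaA2 N a * (1 + E) ≤ D0 / 2 := by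
      by_cases hr : BA N a * t ≤ 2 * sigmaA2 N a
      · -- small Bt regime: exponent below log 2
        have hqle : 4 * θ * BA N a ≤ 0.6931471803 := by
          rw [hq, div_le_iff₀ hDpos, hD0]
          nlinarith [hs2l, hBtnn, hsignn, hr,
            mul_nonneg (sub_nonneg.mpr hs2l) hBtnn]
        have hE2 : E ≤ 2 := by
          rw [hE]
          calc Real.exp (4 * θ * BA N a) ≤ Real.exp (Real.log 2) :=
                Real.exp_le_exp.mpr (hqle.trans Real.log_two_gt_d9.le)
            _ = 2 := Real.exp_log (by norm_num)
        rw [hD0]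
        nlinarith [hsignn, mul_nonneg hs2nn hBtnn,
          mul_le_mul_of_nonneg_left hE2 hsignn]
      · -- large Bt regime
        push_neg at hr
        have hq32 : 4 * θ * BA N a ≤ 3 / 2 := by
          rw [hq, div_le_iff₀ hDpos, hD0]
          nlinarith [hs2l, hBtnn, hsignn, mul_nonneg (sub_nonneg.mpr hs2l) hBtnn]
        have hE45 : E ≤ 4.5 := by
          rw [hE]
          exact (Real.exp_le_exp.mpr hq32).trans CB.exp_three_half
        rw [hD0]
        nlinarith [hsignn, hs2l, hr.le, hBtnn,
          mul_le_mul_of_nonneg_left hE45 hsignn,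
          mul_le_mul_of_nonneg_left hr.le hs2nn,
          mul_nonneg (sub_nonneg.mpr hs2l) hsignn]
    -- put everything together
    have hVq : V / N * (1 + E) * θ ^ 2 ≤ sigmaA2 N a * (1 + E) * θ ^ 2 := by
      have h1 : V / N * (1 + E) ≤ sigmaA2 N a * (1 + E) :=
        mul_le_mul_of_nonneg_right hVNle (by positivity)
      exact mul_le_mul_of_nonneg_right h1 (sq_nonneg _)
    have hVq2 : sigmaA2 N a * (1 + E) * θ ^ 2 ≤ D0 / 2 * θ ^ 2 :=
      mul_le_mul_of_nonneg_right hclaim (sq_nonneg _)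
    have hfinal : -(θ * t) + D0 / 2 * θ ^ 2
        = -(t ^ 2) / (12 * sigmaA2 N a + 4 * Real.sqrt 2 * BA N a * t) := by
      have h2D : 12 * sigmaA2 N a + 4 * Real.sqrt 2 * BA N a * t = 2 * D0 := by
        rw [hD0]; ring
      rw [h2D, hθdef]
      field_simp
      ring
    linarith [hVq, hVq2, hfinal.le, hfinal.ge]
end

section
/- Hoeffding's convex ordering inequality: let 𝒵 be a real vector space, let z_1,…,z_N ∈ 𝒵 be arbitrary (not necessarily distinct) points, let f : 𝒵 → ℝ be convex, and let n ∈ {1,…,N}. Then the expectation of f applied to the sum of a size-n sample drawn uniformly without replacement is at most that for sampling with replacement; explicitly, (1/N!) · Σ_{σ ∈ S_N} f( Σ_{i=1}^n z_{σ(i)} ) ≤ (1/N^n) · Σ_{j : [n] → [N]} f( Σ_{i=1}^n z_{j(i)} ), where the right-hand sum ranges over all N^n functions j from [n] to [N]. -/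
open Finset

section HoeffdingAux

variable {𝒵 : Type*} [AddCommGroup 𝒵] [Module ℝ 𝒵]

/-- The averaged functional `w ↦ ∑_σ f (∑ i w i • z (σ i))`. -/
noncomputable def hoeffPhi (N : ℕ) (z : Fin N → 𝒵) (f : 𝒵 → ℝ) (w : Fin N → ℝ) : ℝ :=
  ∑ σ : Equiv.Perm (Fin N), f (∑ i : Fin N, w i • z (σ i))

lemma hoeffPhi_perm (N : ℕ) (z : Fin N → 𝒵) (f : 𝒵 → ℝ) (π : Equiv.Perm (Fin N))
    (w : Fin N → ℝ) : hoeffPhi N z f (w ∘ π) = hoeffPhi N z f w := by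
  unfold hoeffPhi
  refine Fintype.sum_equiv (Equiv.mulRight π⁻¹) _ _ fun σ => ?_
  congr 1
  refine Fintype.sum_equiv π _ _ fun i => ?_
  simp [Equiv.Perm.mul_apply]

lemma hoeffPhi_merge (N : ℕ) (z : Fin N → 𝒵) (f : 𝒵 → ℝ) (hf : ConvexOn ℝ Set.univ f)
    (p q : Fin N) (hpq : p ≠ q) (u : Fin N → ℝ) (hp : 0 ≤ u p) (hq : 0 ≤ u q) :
    hoeffPhi N z f u
      ≤ hoeffPhi N z f (Function.update (Function.update u p (u p + u q)) q 0) := by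
  rcases eq_or_lt_of_le (add_nonneg hp hq) with hs | hs
  · have hup : u p = 0 := by nlinarith
    have huq : u q = 0 := by nlinarith
    have : Function.update (Function.update u p (u p + u q)) q 0 = u := by
      funext k
      rcases eq_or_ne k q with rfl | hkq
      · simp [Function.update, huq]
      · rcases eq_or_ne k p with rfl | hkp
        · simp [Function.update, hkq, hup, huq]
        · simp [Function.update, hkq, hkp]
    rw [this]
  · set s := u p + u q with hsdef
    set a := u p / s with hadef
    set b := u q / s with hbdef
    have ha : 0 ≤ a := div_nonneg hp hs.le
    have hb : 0 ≤ b := div_nonneg hq hs.le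
    have hab : a + b = 1 := by
      rw [hadef, hbdef, ← add_div, hsdef]
      exact div_self (ne_of_gt hs)
    set U := Function.update (Function.update u p s) q 0 with hU
    set V := Function.update (Function.update u p 0) q s with hV
    have hUp : U p = s := by
      rw [hU, Function.update_of_ne hpq, Function.update_self]
    have hUq : U q = 0 := by rw [hU, Function.update_self]
    have hVp : V p = 0 := by
      rw [hV, Function.update_of_ne hpq, Function.update_self]
    have hVq : V q = s := by rw [hV, Function.update_self]
    have hcomb : ∀ k, u k = a * U k + b * V k := by
      intro k
      rcases eq_or_ne k q with rfl | hkq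
      · rw [hUq, hVq, hbdef]
        field_simp
        ring
      · rcases eq_or_ne k p with rfl | hkp
        · rw [hUp, hVp, hadef]
          field_simp
          ring
        · have h1 : U k = u k := by
            rw [hU, Function.update_of_ne hkq, Function.update_of_ne hkp]
          have h2 : V k = u k := by
            rw [hV, Function.update_of_ne hkq, Function.update_of_ne hkp]
          rw [h1, h2, ← add_mul, hab, one_mul]
    have hswap : V = U ∘ (Equiv.swap p q) := by
      funext k
      rcases eq_or_ne k q with rfl | hkq
      · rw [Function.comp_apply, Equiv.swap_apply_right, hVq, hUp]
      · rcases eq_or_ne k p with rfl | hkp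
        · rw [Function.comp_apply, Equiv.swap_apply_left, hVp, hUq]
        · rw [Function.comp_apply, Equiv.swap_apply_of_ne_of_ne hkp hkq, hV, hU,
            Function.update_of_ne hkq, Function.update_of_ne hkp,
            Function.update_of_ne hkq, Function.update_of_ne hkp]
    have hVU : hoeffPhi N z f V = hoeffPhi N z f U := by
      rw [hswap, hoeffPhi_perm]
    have key : hoeffPhi N z f u ≤ a * hoeffPhi N z f U + b * hoeffPhi N z f V := by
      unfold hoeffPhi
      rw [Finset.mul_sum, Finset.mul_sum, ← Finset.sum_add_distrib]
      refine Finset.sum_le_sum fun σ _ => ?_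
      have hsum : (∑ i : Fin N, u i • z (σ i))
          = a • (∑ i : Fin N, U i • z (σ i)) + b • (∑ i : Fin N, V i • z (σ i)) := by
        rw [Finset.smul_sum, Finset.smul_sum, ← Finset.sum_add_distrib]
        refine Finset.sum_congr rfl fun i _ => ?_
        rw [hcomb i, add_smul, mul_smul, mul_smul]
      rw [hsum]
      have := hf.2 (Set.mem_univ (∑ i : Fin N, U i • z (σ i)))
        (Set.mem_univ (∑ i : Fin N, V i • z (σ i))) ha hb hab
      simpa using this
    calc hoeffPhi N z f u ≤ a * hoeffPhi N z f U + b * hoeffPhi N z f V := key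
      _ = hoeffPhi N z f U := by rw [hVU, ← add_mul, hab, one_mul]

/-- `{x : Fin N | x < n}` as a mapped finset. -/
lemma hoeff_filter_lt (N n : ℕ) (hnN : n ≤ N) :
    (univ.filter (fun x : Fin N => (x : ℕ) < n)) = univ.map (Fin.castLEEmb hnN) := by
  ext x
  simp only [mem_filter, mem_univ, true_and, Finset.mem_map, Fin.castLEEmb_apply]
  constructor
  · intro hx
    exact ⟨⟨(x : ℕ), hx⟩, Fin.ext rfl⟩
  · rintro ⟨a, rfl⟩
    exact a.2

lemma hoeff_card_filter_lt (N n : ℕ) (hnN : n ≤ N) :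
    (univ.filter (fun x : Fin N => (x : ℕ) < n)).card = n := by
  rw [hoeff_filter_lt N n hnN, Finset.card_map, Finset.card_univ, Fintype.card_fin]

/-- Base case: a 0-1 weight vector with exactly `n` ones gives the same `hoeffPhi`
value as the standard first-`n` indicator. -/
lemma hoeffPhi_zero_one (N n : ℕ) (hnN : n ≤ N) (z : Fin N → 𝒵) (f : 𝒵 → ℝ)
    (w : Fin N → ℕ) (hsum : ∑ k, w k = n) (hcard : n ≤ (univ.filter (fun k => w k ≠ 0)).card) :
    hoeffPhi N z f (fun i => if (i : ℕ) < n then (1 : ℝ) else 0)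
      = hoeffPhi N z f (fun k => (w k : ℝ)) := by
  classical
  set supp := univ.filter (fun k => w k ≠ 0) with hsupp
  have hle : supp.card ≤ ∑ k, w k := by
    calc supp.card = ∑ k ∈ supp, 1 := by simp
      _ ≤ ∑ k ∈ supp, w k := by
          refine Finset.sum_le_sum fun k hk => ?_
          have : w k ≠ 0 := (Finset.mem_filter.mp hk).2
          omega
      _ ≤ ∑ k, w k := Finset.sum_le_sum_of_subset (Finset.filter_subset _ _)
  have hcard' : supp.card = n := le_antisymm (hsum ▸ hle) hcard
  have hone : ∀ k, w k ≤ 1 := by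
    by_contra h
    push_neg at h
    obtain ⟨p, hp⟩ := h
    have hp' : p ∈ supp := by simp [hsupp]; omega
    have h1 : supp.card < ∑ k ∈ supp, w k := by
      rw [Finset.card_eq_sum_ones]
      exact Finset.sum_lt_sum
        (fun k hk => by have := (Finset.mem_filter.mp hk).2; omega)
        ⟨p, hp', by omega⟩
    have h2 : ∑ k ∈ supp, w k ≤ ∑ k, w k :=
      Finset.sum_le_sum_of_subset (Finset.filter_subset _ _)
    omega
  -- build the permutation
  have hcards : Fintype.card {x : Fin N // w x ≠ 0} = Fintype.card {x : Fin N // (x : ℕ) < n} := by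
    rw [Fintype.card_subtype, Fintype.card_subtype, hoeff_card_filter_lt N n hnN, ← hsupp, hcard']
  let e : {x : Fin N // w x ≠ 0} ≃ {x : Fin N // (x : ℕ) < n} := Fintype.equivOfCardEq hcards
  let π : Equiv.Perm (Fin N) := e.extendSubtype
  have hfun : (fun k => (w k : ℝ)) = (fun i : Fin N => if (i : ℕ) < n then (1 : ℝ) else 0) ∘ π := by
    funext k
    by_cases hk : w k ≠ 0
    · have h1 : ((π k : Fin N) : ℕ) < n := e.extendSubtype_mem k hk
      have h2 : w k = 1 := by have := hone k; omega
      simp [Function.comp, h1, h2]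
    · have h1 : ¬ ((π k : Fin N) : ℕ) < n := e.extendSubtype_not_mem k hk
      push_neg at hk
      simp [Function.comp, h1, hk]
  rw [hfun, hoeffPhi_perm]

/-- Key monotonicity: the first-`n` indicator weight minimizes `hoeffPhi` among
nonnegative integer weights summing to `n`. -/
lemma hoeffPhi_nat_ge (N n : ℕ) (hnN : n ≤ N) (z : Fin N → 𝒵) (f : 𝒵 → ℝ)
    (hf : ConvexOn ℝ Set.univ f) :
    ∀ d (w : Fin N → ℕ), n - (univ.filter (fun k => w k ≠ 0)).card ≤ d → ∑ k, w k = n →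
      hoeffPhi N z f (fun i => if (i : ℕ) < n then (1 : ℝ) else 0)
        ≤ hoeffPhi N z f (fun k => (w k : ℝ)) := by
  classical
  intro d
  induction d with
  | zero =>
    intro w hd hsum
    exact le_of_eq (hoeffPhi_zero_one N n hnN z f w hsum (by omega))
  | succ d ih =>
    intro w hd hsum
    by_cases hc : n ≤ (univ.filter (fun k => w k ≠ 0)).card
    · exact le_of_eq (hoeffPhi_zero_one N n hnN z f w hsum hc)
    push_neg at hc
    set supp := univ.filter (fun k => w k ≠ 0) with hsupp
    -- find p with w p ≥ 2
    have hex : ∃ p, 2 ≤ w p := by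
      by_contra h
      push_neg at h
      have : ∑ k, w k = supp.card := by
        rw [← Finset.sum_filter_ne_zero (s := univ) (f := w)]
        rw [← hsupp]
        rw [Finset.card_eq_sum_ones]
        refine Finset.sum_congr rfl fun k hk => ?_
        have h1 : w k ≠ 0 := (Finset.mem_filter.mp hk).2
        have h2 := h k
        omega
      omega
    obtain ⟨p, hp2⟩ := hex
    -- find q with w q = 0
    have hexq : ∃ q, w q = 0 := by
      by_contra h
      push_neg at h
      have : supp = univ := by
        rw [hsupp]
        refine Finset.filter_true_of_mem fun k _ => h k
      rw [this, Finset.card_univ, Fintype.card_fin] at hc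
      omega
    obtain ⟨q, hq0⟩ := hexq
    have hpq : p ≠ q := fun h => by rw [h, hq0] at hp2; omega
    set w' : Fin N → ℕ := Function.update (Function.update w p (w p - 1)) q 1 with hw'
    have hw'p : w' p = w p - 1 := by
      rw [hw', Function.update_of_ne hpq, Function.update_self]
    have hw'q : w' q = 1 := by rw [hw', Function.update_self]
    have hw'k : ∀ k, k ≠ p → k ≠ q → w' k = w k := fun k hkp hkq => by
      rw [hw', Function.update_of_ne hkq, Function.update_of_ne hkp]
    -- sum of w' is n
    have hsum' : ∑ k, w' k = n := by
      have h1 : (∑ k ∈ (univ.erase q).erase p, w' k + w' p) + w' q = ∑ k, w' k := by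
        rw [Finset.sum_erase_add _ _ (Finset.mem_erase.mpr ⟨hpq, Finset.mem_univ p⟩),
          Finset.sum_erase_add _ _ (Finset.mem_univ q)]
      have h2 : (∑ k ∈ (univ.erase q).erase p, w k + w p) + w q = ∑ k, w k := by
        rw [Finset.sum_erase_add _ _ (Finset.mem_erase.mpr ⟨hpq, Finset.mem_univ p⟩),
          Finset.sum_erase_add _ _ (Finset.mem_univ q)]
      have h3 : ∑ k ∈ (univ.erase q).erase p, w' k = ∑ k ∈ (univ.erase q).erase p, w k := by
        refine Finset.sum_congr rfl fun k hk => ?_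
        have hk1 := Finset.mem_erase.mp hk
        have hk2 := Finset.mem_erase.mp hk1.2
        exact hw'k k hk1.1 hk2.1
      rw [hsum] at h2
      rw [← h1, h3, hw'p, hw'q]
      omega
    -- support grows
    have hsub : insert q supp ⊆ univ.filter (fun k => w' k ≠ 0) := by
      intro k hk
      rcases Finset.mem_insert.mp hk with rfl | hk
      · simp [hw'q]
      · simp only [Finset.mem_filter, Finset.mem_univ, true_and]
        have hk1 : w k ≠ 0 := (Finset.mem_filter.mp hk).2
        rcases eq_or_ne k p with rfl | hkp
        · rw [hw'p]; omega
        · rcases eq_or_ne k q with rfl | hkq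
          · rw [hw'q]; omega
          · rw [hw'k k hkp hkq]; exact hk1
    have hqsupp : q ∉ supp := by simp [hsupp, hq0]
    have hcard' : supp.card + 1 ≤ (univ.filter (fun k => w' k ≠ 0)).card := by
      calc supp.card + 1 = (insert q supp).card := (Finset.card_insert_of_notMem hqsupp).symm
        _ ≤ _ := Finset.card_le_card hsub
    have ihw : hoeffPhi N z f (fun i => if (i : ℕ) < n then (1 : ℝ) else 0)
        ≤ hoeffPhi N z f (fun k => (w' k : ℝ)) := ih w' (by omega) hsum'
    refine le_trans ihw ?_
    have hmerge := hoeffPhi_merge N z f hf p q hpq (fun k => (w' k : ℝ))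
      (by positivity) (by positivity)
    have heq : Function.update (Function.update (fun k => (w' k : ℝ)) p
        ((w' p : ℝ) + (w' q : ℝ))) q 0 = fun k => (w k : ℝ) := by
      funext k
      rcases eq_or_ne k q with rfl | hkq
      · simp [Function.update_self, hq0]
      · rw [Function.update_of_ne hkq]
        rcases eq_or_ne k p with rfl | hkp
        · rw [Function.update_self, hw'p, hw'q]
          push_cast [Nat.cast_sub (by omega : 1 ≤ w k)]
          ring
        · rw [Function.update_of_ne hkp, hw'k k hkp hkq]
    rw [heq] at hmerge
    exact hmerge

end HoeffdingAux

/-- Hoeffding's convex ordering inequality: for a convex `f` on a real vector space,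
sampling `n` points uniformly without replacement from `{z_1,…,z_N}` gives a smaller
expectation of `f` of the sum than sampling with replacement. -/
theorem hoeffding_convex_ordering
    {𝒵 : Type*} [AddCommGroup 𝒵] [Module ℝ 𝒵]
    (N n : ℕ) (hn1 : 1 ≤ n) (hnN : n ≤ N)
    (z : Fin N → 𝒵) (f : 𝒵 → ℝ) (hf : ConvexOn ℝ Set.univ f) :
    (∑ σ : Equiv.Perm (Fin N), f (∑ i : Fin n, z (σ (Fin.castLE hnN i))))
        / (Nat.factorial N : ℝ)
      ≤ (∑ j : Fin n → Fin N, f (∑ i : Fin n, z (j i))) / ((N : ℝ) ^ n) := by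
  classical
  set w₁ : Fin N → ℝ := fun i => if (i : ℕ) < n then (1 : ℝ) else 0 with hw₁
  -- the LHS numerator is `hoeffPhi w₁`
  have hLHS : (∑ σ : Equiv.Perm (Fin N), f (∑ i : Fin n, z (σ (Fin.castLE hnN i))))
      = hoeffPhi N z f w₁ := by
    unfold hoeffPhi
    refine Finset.sum_congr rfl fun σ _ => ?_
    congr 1
    have : ∑ i : Fin N, w₁ i • z (σ i)
        = ∑ i ∈ univ.filter (fun x : Fin N => (x : ℕ) < n), z (σ i) := by
      rw [Finset.sum_filter]
      refine Finset.sum_congr rfl fun i _ => ?_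
      by_cases h : (i : ℕ) < n <;> simp [hw₁, h]
    rw [this, hoeff_filter_lt N n hnN, Finset.sum_map]
    simp [Fin.castLEEmb_apply]
  -- counting weights for functions j
  set cnt : (Fin n → Fin N) → Fin N → ℕ :=
    fun j k => (univ.filter (fun i => j i = k)).card with hcnt
  have hcntsum : ∀ j, ∑ k, cnt j k = n := by
    intro j
    have h := Finset.card_eq_sum_card_fiberwise
      (s := (univ : Finset (Fin n))) (t := (univ : Finset (Fin N))) (f := j)
      (fun i _ => Finset.mem_univ (j i))
    rw [Finset.card_univ, Fintype.card_fin] at h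
    rw [hcnt]
    simpa using h.symm
  have hinner : ∀ (σ : Equiv.Perm (Fin N)) (j : Fin n → Fin N),
      ∑ i : Fin n, z (σ (j i)) = ∑ k : Fin N, (cnt j k : ℝ) • z (σ k) := by
    intro σ j
    rw [← Finset.sum_fiberwise' (s := univ) (g := j) (f := fun k => z (σ k))]
    refine Finset.sum_congr rfl fun k _ => ?_
    rw [Finset.sum_const, hcnt]
    simp [Nat.cast_smul_eq_nsmul]
  -- key inequality on numerators
  have hkey : (N : ℝ) ^ n * (∑ σ : Equiv.Perm (Fin N), f (∑ i : Fin n, z (σ (Fin.castLE hnN i))))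
      ≤ (Nat.factorial N : ℝ) * (∑ j : Fin n → Fin N, f (∑ i : Fin n, z (j i))) := by
    have hRHS : (Nat.factorial N : ℝ) * (∑ j : Fin n → Fin N, f (∑ i : Fin n, z (j i)))
        = ∑ j : Fin n → Fin N, hoeffPhi N z f (fun k => (cnt j k : ℝ)) := by
      have h1 : ∀ σ : Equiv.Perm (Fin N),
          (∑ j : Fin n → Fin N, f (∑ i : Fin n, z (j i)))
            = ∑ j : Fin n → Fin N, f (∑ i : Fin n, z (σ (j i))) := by
        intro σ
        refine Fintype.sum_equiv (Equiv.arrowCongr (Equiv.refl (Fin n)) σ.symm) _ _ fun j => ?_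
        simp [Equiv.arrowCongr]
      calc (Nat.factorial N : ℝ) * (∑ j : Fin n → Fin N, f (∑ i : Fin n, z (j i)))
          = ∑ σ : Equiv.Perm (Fin N), (∑ j : Fin n → Fin N, f (∑ i : Fin n, z (j i))) := by
            rw [Finset.sum_const, Finset.card_univ, Fintype.card_perm, Fintype.card_fin,
              nsmul_eq_mul]
        _ = ∑ σ : Equiv.Perm (Fin N), ∑ j : Fin n → Fin N, f (∑ i : Fin n, z (σ (j i))) := by
            exact Finset.sum_congr rfl fun σ _ => h1 σ
        _ = ∑ j : Fin n → Fin N, ∑ σ : Equiv.Perm (Fin N), f (∑ i : Fin n, z (σ (j i))) :=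
            Finset.sum_comm
        _ = ∑ j : Fin n → Fin N, hoeffPhi N z f (fun k => (cnt j k : ℝ)) := by
            refine Finset.sum_congr rfl fun j _ => ?_
            unfold hoeffPhi
            exact Finset.sum_congr rfl fun σ _ => by rw [hinner σ j]
    rw [hRHS, hLHS]
    have hbound : ∀ j : Fin n → Fin N,
        hoeffPhi N z f w₁ ≤ hoeffPhi N z f (fun k => (cnt j k : ℝ)) := by
      intro j
      exact hoeffPhi_nat_ge N n hnN z f hf n (cnt j) (by omega) (hcntsum j)
    calc (N : ℝ) ^ n * hoeffPhi N z f w₁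
        = ∑ _j : Fin n → Fin N, hoeffPhi N z f w₁ := by
          rw [Finset.sum_const, Finset.card_univ, Fintype.card_fun, Fintype.card_fin,
            Fintype.card_fin, nsmul_eq_mul]
          push_cast
          ring
      _ ≤ ∑ j : Fin n → Fin N, hoeffPhi N z f (fun k => (cnt j k : ℝ)) :=
          Finset.sum_le_sum fun j _ => hbound j
  have hfac : (0 : ℝ) < (Nat.factorial N : ℝ) := by
    exact_mod_cast Nat.factorial_pos N
  have hpow : (0 : ℝ) < (N : ℝ) ^ n := by
    have : 0 < N := by omega
    positivity
  rw [div_le_div_iff₀ hfac hpow]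
  nlinarith [hkey]
end

section
/- Bobkov's inequality (sub-Gaussian norm of a without-replacement sample mean): let z_1,…,z_N be fixed points, n ∈ {1,…,N}, and f a real-valued function on the population with (1/N)Σ_i (f(z_i) − P_N f)² > 0. Set C = sqrt( (12/n)·(1 + N/n) ) · ‖f − P_N f‖_{L²(P_N)}. Then for a uniform random permutation π of [N], E[ exp( ( (𝔓_{π,n} f − P_N f) / C )² ) ] ≤ 2; equivalently, the Orlicz ψ₂-norm of (𝔓_{π,n} − P_N)f is at most C. -/
open Finset

/-- The finite-population mean `P_N f = N⁻¹ Σ_{i=1}^N f(z_i)`. -/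
noncomputable def PN {𝒵 : Type*} (N : ℕ) (z : Fin N → 𝒵) (f : 𝒵 → ℝ) : ℝ :=
  (∑ i, f (z i)) / (N : ℝ)

/-- The without-replacement sample mean `𝔓_{π,n} f = n⁻¹ Σ_{i : π(i) ≤ n} f(z_i)`. -/
noncomputable def sampleMean {𝒵 : Type*} (N n : ℕ) (z : Fin N → 𝒵) (f : 𝒵 → ℝ)
    (π : Equiv.Perm (Fin N)) : ℝ :=
  (∑ i, if (π i : ℕ) < n then f (z i) else 0) / (n : ℝ)

/-- `‖f − P_N f‖_{L²(P_N)} = sqrt( N⁻¹ Σ_i (f(z_i) − P_N f)² )`. -/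
noncomputable def L2PN {𝒵 : Type*} (N : ℕ) (z : Fin N → 𝒵) (f : 𝒵 → ℝ) : ℝ :=
  Real.sqrt ((∑ i, (f (z i) - PN N z f) ^ 2) / (N : ℝ))

namespace Bobkov
variable {N : ℕ}




/-- Sample sum. -/
noncomputable def T (a : Fin N → ℝ) (m : ℕ) (π : Equiv.Perm (Fin N)) : ℝ :=
  ∑ i, if (π i : ℕ) < m then a i else 0

/-- Values in sampling order, extended to ℕ. -/
noncomputable def bp (a : Fin N → ℝ) (π : Equiv.Perm (Fin N)) (j : ℕ) : ℝ :=
  if h : j < N then a (π.symm ⟨j, h⟩) else 0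

lemma T_eq_range (a : Fin N → ℝ) {m : ℕ} (hm : m ≤ N) (π : Equiv.Perm (Fin N)) :
    T a m π = ∑ j ∈ Finset.range m, bp a π j := by
  have h1 : T a m π = ∑ j : Fin N, (if (j : ℕ) < m then bp a π (j : ℕ) else 0) := by
    rw [T, ← Equiv.sum_comp π (fun j : Fin N => if (j : ℕ) < m then bp a π (j : ℕ) else 0)]
    refine Finset.sum_congr rfl fun i _ => ?_
    by_cases h : ((π i : Fin N) : ℕ) < m
    · simp only [h, if_true, bp, (π i).isLt, dif_pos]
      congr 1
      simp
    · simp [h]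
  rw [h1, Fin.sum_univ_eq_sum_range (fun j => if j < m then bp a π j else 0)]
  rw [← Finset.sum_subset (Finset.range_subset_range.2 hm)
    (fun x _ hx => by simp [Finset.mem_range.not.1 hx])]
  exact Finset.sum_congr rfl fun j hj => by simp [Finset.mem_range.1 hj]

lemma sum_range_bp_sq (a : Fin N → ℝ) (π : Equiv.Perm (Fin N)) :
    ∑ j ∈ Finset.range N, (bp a π j) ^ 2 = ∑ i, (a i) ^ 2 := by
  rw [← Fin.sum_univ_eq_sum_range (fun j => (bp a π j) ^ 2)]
  rw [← Equiv.sum_comp π.symm (fun j : Fin N => (a j) ^ 2)]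
  refine Finset.sum_congr rfl fun j _ => ?_
  simp [bp, j.isLt]


def epsN (ε : Fin N → Bool) (k : ℕ) : Bool := if h : k < N then ε ⟨k, h⟩ else false

def nfun (m : ℕ) (e : ℕ → Bool) (k : ℕ) : ℕ :=
  if k < m then (if e k then k + m else k)
  else if k < 2 * m then (if e (k - m) then k - m else k) else k

lemma nfun_invol (m : ℕ) (e : ℕ → Bool) (k : ℕ) : nfun m e (nfun m e k) = k := by
  unfold nfun
  by_cases h1 : k < m
  · by_cases he : e k
    · have h2 : ¬ (k + m < m) := by omega
      have h3 : k + m < 2 * m := by omega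
      have h4 : k + m - m = k := by omega
      simp [h1, he, h2, h3, h4]
    · simp [h1, he]
  · by_cases h2 : k < 2 * m
    · by_cases he : e (k - m)
      · have h3 : k - m < m := by omega
        have h4 : k - m + m = k := by omega
        simp [h1, h2, he, h3, h4]
      · simp [h1, h2, he]
    · simp [h1, h2]

lemma nfun_lt (m : ℕ) (hm : 2 * m ≤ N) (e : ℕ → Bool) {k : ℕ} (hk : k < N) :
    nfun m e k < N := by
  unfold nfun; split_ifs <;> omega

def tauFun (m : ℕ) (hm : 2 * m ≤ N) (ε : Fin N → Bool) (j : Fin N) : Fin N :=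
  ⟨nfun m (epsN ε) j, nfun_lt m hm _ j.isLt⟩

lemma tauFun_involutive (m : ℕ) (hm : 2 * m ≤ N) (ε : Fin N → Bool) :
    Function.Involutive (tauFun m hm ε) := by
  intro j
  apply Fin.ext
  exact nfun_invol m (epsN ε) (j : ℕ)

def tau (m : ℕ) (hm : 2 * m ≤ N) (ε : Fin N → Bool) : Equiv.Perm (Fin N) :=
  Function.Involutive.toPerm _ (tauFun_involutive m hm ε)

lemma tau_symm_apply (m : ℕ) (hm : 2 * m ≤ N) (ε : Fin N → Bool) (j : Fin N) :
    ((tau m hm ε).symm j : ℕ) = nfun m (epsN ε) (j : ℕ) := rfl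


lemma exp_add_exp_le (x y : ℝ) :
    Real.exp x + Real.exp y ≤ 2 * Real.exp ((x + y) / 2 + (x - y) ^ 2 / 8) := by
  have h1 : Real.exp x + Real.exp y
      = 2 * Real.exp ((x + y) / 2) * Real.cosh ((x - y) / 2) := by
    rw [Real.cosh_eq]
    have e1 : Real.exp ((x + y) / 2) * Real.exp ((x - y) / 2) = Real.exp x := by
      rw [← Real.exp_add]; congr 1; ring
    have e2 : Real.exp ((x + y) / 2) * Real.exp (-((x - y) / 2)) = Real.exp y := by
      rw [← Real.exp_add]; congr 1; ring
    calc Real.exp x + Real.exp y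
        = Real.exp ((x + y) / 2) * Real.exp ((x - y) / 2)
          + Real.exp ((x + y) / 2) * Real.exp (-((x - y) / 2)) := by rw [e1, e2]
      _ = 2 * Real.exp ((x + y) / 2)
          * ((Real.exp ((x - y) / 2) + Real.exp (-((x - y) / 2))) / 2) := by ring
  rw [h1, Real.exp_add]
  have h2 : Real.cosh ((x - y) / 2) ≤ Real.exp ((x - y) ^ 2 / 8) := by
    have := Real.cosh_le_exp_half_sq ((x - y) / 2)
    rw [show ((x - y) / 2) ^ 2 / 2 = (x - y) ^ 2 / 8 by ring] at this
    exact this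
  have h3 : (0:ℝ) < 2 * Real.exp ((x + y) / 2) := by positivity
  calc 2 * Real.exp ((x + y) / 2) * Real.cosh ((x - y) / 2)
      ≤ 2 * Real.exp ((x + y) / 2) * Real.exp ((x - y) ^ 2 / 8) := by
        exact mul_le_mul_of_nonneg_left h2 (le_of_lt h3)
    _ = 2 * (Real.exp ((x + y) / 2) * Real.exp ((x - y) ^ 2 / 8)) := by ring

lemma T_mul_tau (a : Fin N → ℝ) {m : ℕ} (hm : 2 * m ≤ N) (ε : Fin N → Bool)
    (π : Equiv.Perm (Fin N)) :
    T a m (tau m hm ε * π)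
      = ∑ j ∈ Finset.range m, (if epsN ε j then bp a π (j + m) else bp a π j) := by
  rw [T_eq_range a (by omega) _]
  refine Finset.sum_congr rfl fun j hj => ?_
  have hjm : j < m := Finset.mem_range.1 hj
  have hjN : j < N := by omega
  have hsymm : ((tau m hm ε * π)).symm ⟨j, hjN⟩ = π.symm ((tau m hm ε).symm ⟨j, hjN⟩) := rfl
  rw [bp, dif_pos hjN, hsymm]
  have hval : (((tau m hm ε).symm ⟨j, hjN⟩ : Fin N) : ℕ) = if epsN ε j then j + m else j := by
    rw [tau_symm_apply]
    unfold nfun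
    simp [hjm]
  by_cases he : epsN ε j
  · have h5 : (tau m hm ε).symm ⟨j, hjN⟩ = ⟨j + m, by omega⟩ :=
      Fin.ext (by rw [hval, if_pos he])
    rw [h5]; simp [he, bp, show j + m < N by omega]
  · have h5 : (tau m hm ε).symm ⟨j, hjN⟩ = ⟨j, hjN⟩ :=
      Fin.ext (by rw [hval, if_neg he])
    rw [h5]; simp [he, bp, hjN]


lemma sum_bp_split (a : Fin N → ℝ) {m : ℕ} (hm : 2 * m ≤ N) (π : Equiv.Perm (Fin N))
    (F : ℝ → ℝ) :
    ∑ j ∈ Finset.range m, F (bp a π j) + ∑ j ∈ Finset.range m, F (bp a π (j + m))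
      = ∑ j ∈ Finset.range (2 * m), F (bp a π j) := by
  rw [← Finset.sum_range_add_sum_Ico _ (show m ≤ 2 * m by omega)]
  congr 1
  rw [Finset.sum_Ico_eq_sum_range]
  refine Finset.sum_congr (by congr 1; omega) fun j hj => by rw [Nat.add_comm m j]

lemma sum_eps_exp (a : Fin N → ℝ) {m : ℕ} (hm : 2 * m ≤ N) (π : Equiv.Perm (Fin N)) (l : ℝ) :
    ∑ ε : Fin N → Bool, Real.exp (l * T a m (tau m hm ε * π))
      ≤ 2 ^ N * Real.exp (l * T a (2 * m) π / 2 + l ^ 2 * (∑ i, (a i) ^ 2) / 4) := by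
  set V := ∑ i, (a i) ^ 2 with hV
  -- the factor function
  set hh : Fin N → Bool → ℝ := fun k e => if (k : ℕ) < m then
      Real.exp (l * (if e then bp a π ((k : ℕ) + m) else bp a π (k : ℕ))) else 1 with hhh
  have hexp : ∀ ε : Fin N → Bool,
      Real.exp (l * T a m (tau m hm ε * π)) = ∏ k : Fin N, hh k (ε k) := by
    intro ε
    rw [T_mul_tau a hm ε π, Finset.mul_sum, Real.exp_sum]
    have hg : ∀ k : Fin N, hh k (ε k)
        = (fun j : ℕ => if j < m then
            Real.exp (l * (if epsN ε j then bp a π (j + m) else bp a π j)) else 1) (k : ℕ) := by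
      intro k
      simp only [hhh, epsN, k.isLt, dif_pos]
    calc ∏ j ∈ Finset.range m,
          Real.exp (l * (if epsN ε j then bp a π (j + m) else bp a π j))
        = ∏ j ∈ Finset.range N, (if j < m then
            Real.exp (l * (if epsN ε j then bp a π (j + m) else bp a π j)) else 1) := by
          rw [← Finset.prod_subset (Finset.range_subset_range.2 (show m ≤ N by omega))
            (fun x _ hx => by simp [Finset.mem_range.not.1 hx])]
          exact Finset.prod_congr rfl fun j hj => by simp [Finset.mem_range.1 hj]
      _ = ∏ k : Fin N, hh k (ε k) := by
          rw [← Fin.prod_univ_eq_prod_range]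
          exact (Finset.prod_congr rfl fun k _ => hg k).symm
  have hswap : ∑ ε : Fin N → Bool, ∏ k : Fin N, hh k (ε k)
      = ∏ k : Fin N, (hh k true + hh k false) := by
    have h1 : ∏ k : Fin N, (∑ e : Bool, hh k e)
        = ∑ ε ∈ Fintype.piFinset (fun _ : Fin N => (Finset.univ : Finset Bool)),
            ∏ k : Fin N, hh k (ε k) := Finset.prod_univ_sum _ _
    rw [Fintype.piFinset_univ] at h1
    rw [← h1]
    exact Finset.prod_congr rfl fun k _ => by rw [Fintype.sum_bool]
  simp only [hexp]
  rw [hswap]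
  -- bound each factor
  set c : ℕ → ℝ := fun j =>
      (l * bp a π j + l * bp a π (j + m)) / 2 + (l * bp a π j - l * bp a π (j + m)) ^ 2 / 8
    with hc
  have hfact : ∀ k : Fin N, hh k true + hh k false
      ≤ 2 * (if (k : ℕ) < m then Real.exp (c (k : ℕ)) else 1) := by
    intro k
    by_cases hk : (k : ℕ) < m
    · simp only [hhh, hk, if_pos, hc]
      have := exp_add_exp_le (l * bp a π ((k : ℕ) + m)) (l * bp a π (k : ℕ))
      calc Real.exp (l * bp a π ((k : ℕ) + m)) + Real.exp (l * bp a π (k : ℕ))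
          ≤ 2 * Real.exp ((l * bp a π ((k : ℕ) + m) + l * bp a π (k : ℕ)) / 2
              + (l * bp a π ((k : ℕ) + m) - l * bp a π (k : ℕ)) ^ 2 / 8) := this
        _ = 2 * Real.exp ((l * bp a π (k : ℕ) + l * bp a π ((k : ℕ) + m)) / 2
              + (l * bp a π (k : ℕ) - l * bp a π ((k : ℕ) + m)) ^ 2 / 8) := by
            congr 1
            congr 1
            ring
    · simp only [hhh, hk, if_false, if_neg, mul_one]
      norm_num
  have hprodle : ∏ k : Fin N, (hh k true + hh k false)
      ≤ ∏ k : Fin N, 2 * (if (k : ℕ) < m then Real.exp (c (k : ℕ)) else 1) := by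
    refine Finset.prod_le_prod (fun k _ => ?_) (fun k _ => hfact k)
    have : (0:ℝ) < hh k true + hh k false := by
      have h1 : (0:ℝ) < hh k true := by by_cases hk : (k : ℕ) < m <;> simp [hhh, hk] <;> positivity
      have h2 : (0:ℝ) < hh k false := by by_cases hk : (k : ℕ) < m <;> simp [hhh, hk] <;> positivity
      linarith
    linarith
  have hprodeq : ∏ k : Fin N, 2 * (if (k : ℕ) < m then Real.exp (c (k : ℕ)) else 1)
      = 2 ^ N * Real.exp (∑ j ∈ Finset.range m, c j) := by
    rw [Finset.prod_mul_distrib, Finset.prod_const]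
    have hcard : (Finset.univ : Finset (Fin N)).card = N := by simp
    rw [hcard]
    congr 1
    calc ∏ k : Fin N, (if (k : ℕ) < m then Real.exp (c (k : ℕ)) else 1)
        = ∏ j ∈ Finset.range N, (if j < m then Real.exp (c j) else 1) :=
          Fin.prod_univ_eq_prod_range (fun j => if j < m then Real.exp (c j) else 1) N
      _ = ∏ j ∈ Finset.range m, (if j < m then Real.exp (c j) else 1) :=
          (Finset.prod_subset (Finset.range_subset_range.2 (show m ≤ N by omega))
            (fun x _ hx => by simp [Finset.mem_range.not.1 hx])).symm
      _ = ∏ j ∈ Finset.range m, Real.exp (c j) :=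
          Finset.prod_congr rfl fun j hj => by simp [Finset.mem_range.1 hj]
      _ = Real.exp (∑ j ∈ Finset.range m, c j) := (Real.exp_sum _ _).symm
  -- bound the exponent
  have hsumc : ∑ j ∈ Finset.range m, c j ≤ l * T a (2 * m) π / 2 + l ^ 2 * V / 4 := by
    have hsplit : ∑ j ∈ Finset.range m, c j
        = (∑ j ∈ Finset.range m, (l * bp a π j + l * bp a π (j + m)) / 2)
          + ∑ j ∈ Finset.range m, (l * bp a π j - l * bp a π (j + m)) ^ 2 / 8 := by
      rw [← Finset.sum_add_distrib]
    have hfirst : ∑ j ∈ Finset.range m, (l * bp a π j + l * bp a π (j + m)) / 2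
        = l * T a (2 * m) π / 2 := by
      have h2 : ∑ j ∈ Finset.range m, (l * bp a π j + l * bp a π (j + m)) / 2
          = (l / 2) * (∑ j ∈ Finset.range m, bp a π j
              + ∑ j ∈ Finset.range m, bp a π (j + m)) := by
        rw [mul_add, Finset.mul_sum, Finset.mul_sum, ← Finset.sum_add_distrib]
        exact Finset.sum_congr rfl fun j _ => by ring
      rw [h2, sum_bp_split a hm π (fun x => x), ← T_eq_range a hm π]
      ring
    have hsecond : ∑ j ∈ Finset.range m, (l * bp a π j - l * bp a π (j + m)) ^ 2 / 8
        ≤ l ^ 2 * V / 4 := by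
      have h3 : ∀ j, (l * bp a π j - l * bp a π (j + m)) ^ 2 / 8
          ≤ (l ^ 2 * (2 * (bp a π j) ^ 2) + l ^ 2 * (2 * (bp a π (j + m)) ^ 2)) / 8 := by
        intro j
        have : (l * bp a π j - l * bp a π (j + m)) ^ 2
            ≤ l ^ 2 * (2 * (bp a π j) ^ 2) + l ^ 2 * (2 * (bp a π (j + m)) ^ 2) := by
          nlinarith [sq_nonneg (l * bp a π j + l * bp a π (j + m))]
        linarith
      calc ∑ j ∈ Finset.range m, (l * bp a π j - l * bp a π (j + m)) ^ 2 / 8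
          ≤ ∑ j ∈ Finset.range m,
              (l ^ 2 * (2 * (bp a π j) ^ 2) + l ^ 2 * (2 * (bp a π (j + m)) ^ 2)) / 8 :=
            Finset.sum_le_sum fun j _ => h3 j
        _ = (l ^ 2 / 4) * (∑ j ∈ Finset.range m, (bp a π j) ^ 2
              + ∑ j ∈ Finset.range m, (bp a π (j + m)) ^ 2) := by
            rw [mul_add, Finset.mul_sum, Finset.mul_sum, ← Finset.sum_add_distrib]
            exact Finset.sum_congr rfl fun j _ => by ring
        _ = (l ^ 2 / 4) * ∑ j ∈ Finset.range (2 * m), (bp a π j) ^ 2 := by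
            rw [sum_bp_split a hm π (fun x => x ^ 2)]
        _ ≤ (l ^ 2 / 4) * ∑ j ∈ Finset.range N, (bp a π j) ^ 2 := by
            refine mul_le_mul_of_nonneg_left ?_ (by positivity)
            exact Finset.sum_le_sum_of_subset_of_nonneg (Finset.range_subset_range.2 hm)
              (fun j _ _ => sq_nonneg _)
        _ = l ^ 2 * V / 4 := by rw [sum_range_bp_sq]; ring
    linarith [hsplit, hfirst, hsecond]
  calc ∏ k : Fin N, (hh k true + hh k false)
      ≤ ∏ k : Fin N, 2 * (if (k : ℕ) < m then Real.exp (c (k : ℕ)) else 1) := hprodle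
    _ = 2 ^ N * Real.exp (∑ j ∈ Finset.range m, c j) := hprodeq
    _ ≤ 2 ^ N * Real.exp (l * T a (2 * m) π / 2 + l ^ 2 * V / 4) := by
        refine mul_le_mul_of_nonneg_left (Real.exp_le_exp.2 hsumc) (by positivity)


noncomputable def Ssum (a : Fin N → ℝ) (m : ℕ) (l : ℝ) : ℝ :=
  ∑ π : Equiv.Perm (Fin N), Real.exp (l * T a m π)

lemma card_perm_fin :
    (Finset.univ : Finset (Equiv.Perm (Fin N))).card = Nat.factorial N := by
  rw [Finset.card_univ, Fintype.card_perm, Fintype.card_fin]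

lemma factorial_pos_real : (0:ℝ) < (Nat.factorial N : ℝ) := by
  exact_mod_cast Nat.factorial_pos N

lemma Ssum_nonneg (a : Fin N → ℝ) (m : ℕ) (l : ℝ) : 0 ≤ Ssum a m l :=
  Finset.sum_nonneg fun π _ => (Real.exp_pos _).le

lemma abs_T_le (a : Fin N → ℝ) (m : ℕ) (π : Equiv.Perm (Fin N)) :
    |T a m π| ≤ ∑ i, |a i| := by
  refine (Finset.abs_sum_le_sum_abs _ _).trans ?_
  refine Finset.sum_le_sum fun i _ => ?_
  by_cases h : (π i : ℕ) < m <;> simp [h, abs_nonneg]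

lemma Ssum_le_exp_abs (a : Fin N → ℝ) (m : ℕ) (l : ℝ) :
    Ssum a m l ≤ (Nat.factorial N : ℝ) * Real.exp (|l| * ∑ i, |a i|) := by
  calc Ssum a m l
      ≤ ∑ _π : Equiv.Perm (Fin N), Real.exp (|l| * ∑ i, |a i|) := by
        refine Finset.sum_le_sum fun π _ => Real.exp_le_exp.2 ?_
        calc l * T a m π ≤ |l * T a m π| := le_abs_self _
          _ = |l| * |T a m π| := abs_mul _ _
          _ ≤ |l| * ∑ i, |a i| := mul_le_mul_of_nonneg_left (abs_T_le a m π) (abs_nonneg l)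
    _ = (Nat.factorial N : ℝ) * Real.exp (|l| * ∑ i, |a i|) := by
        rw [Finset.sum_const, card_perm_fin, nsmul_eq_mul]

lemma T_rev (a : Fin N → ℝ) (hsum : ∑ i, a i = 0) {m : ℕ} (hm : m ≤ N)
    (π : Equiv.Perm (Fin N)) :
    T a m ((Fin.revPerm : Equiv.Perm (Fin N)) * π) = - T a (N - m) π := by
  set rv : Equiv.Perm (Fin N) := Fin.revPerm with hrv
  have key : ∀ i : Fin N, (if ((rv * π) i : ℕ) < m then a i else 0)
      = a i - (if (π i : ℕ) < N - m then a i else 0) := by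
    intro i
    have hval : ((rv * π) i : ℕ) = N - 1 - (π i : ℕ) := by
      rw [Equiv.Perm.mul_apply, hrv]
      rw [show Fin.revPerm (π i) = (π i).rev from rfl, Fin.val_rev]
      omega
    have hlt : (π i : ℕ) < N := (π i).isLt
    by_cases h : (π i : ℕ) < N - m
    · have hno : ¬ ((rv * π) i : ℕ) < m := by rw [hval]; omega
      rw [if_neg hno, if_pos h]
      ring
    · have hyes : ((rv * π) i : ℕ) < m := by rw [hval]; omega
      rw [if_pos hyes, if_neg h]
      ring
  rw [T]
  calc ∑ i, (if ((rv * π) i : ℕ) < m then a i else 0)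
      = ∑ i, (a i - (if (π i : ℕ) < N - m then a i else 0)) :=
        Finset.sum_congr rfl fun i _ => key i
    _ = (∑ i, a i) - T a (N - m) π := by rw [Finset.sum_sub_distrib, T]
    _ = - T a (N - m) π := by rw [hsum]; ring

lemma Ssum_complement (a : Fin N → ℝ) (hsum : ∑ i, a i = 0) {m : ℕ} (hm : m ≤ N) (l : ℝ) :
    Ssum a m l = Ssum a (N - m) (-l) := by
  rw [Ssum, Ssum]
  calc ∑ π : Equiv.Perm (Fin N), Real.exp (l * T a m π)
      = ∑ π : Equiv.Perm (Fin N), Real.exp (l * T a m ((Fin.revPerm : Equiv.Perm (Fin N)) * π)) :=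
        (Equiv.sum_comp (Equiv.mulLeft (Fin.revPerm : Equiv.Perm (Fin N)))
          (fun π => Real.exp (l * T a m π))).symm
    _ = ∑ π : Equiv.Perm (Fin N), Real.exp ((-l) * T a (N - m) π) := by
        refine Finset.sum_congr rfl fun π _ => ?_
        rw [T_rev a hsum hm π]
        ring_nf

lemma Ssum_doubling (a : Fin N → ℝ) {m : ℕ} (hm : 2 * m ≤ N) (l : ℝ) :
    Ssum a m l ≤ Real.exp (l ^ 2 * (∑ i, (a i) ^ 2) / 4)
      * (Real.sqrt ((Nat.factorial N : ℝ)) * Real.sqrt (Ssum a (2 * m) l)) := by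
  set V := ∑ i, (a i) ^ 2 with hV
  have key : (2:ℝ) ^ N * Ssum a m l
      ≤ (2:ℝ) ^ N * (Real.exp (l ^ 2 * V / 4)
          * ∑ π : Equiv.Perm (Fin N), Real.exp (l * T a (2 * m) π / 2)) := by
    have h1 : (2:ℝ) ^ N * Ssum a m l
        = ∑ π : Equiv.Perm (Fin N), ∑ ε : Fin N → Bool,
            Real.exp (l * T a m (tau m hm ε * π)) := by
      rw [Finset.sum_comm]
      have h2 : ∀ ε : Fin N → Bool,
          ∑ π : Equiv.Perm (Fin N), Real.exp (l * T a m (tau m hm ε * π))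
            = Ssum a m l :=
        fun ε => Equiv.sum_comp (Equiv.mulLeft (tau m hm ε))
          (fun π => Real.exp (l * T a m π))
      rw [Finset.sum_congr rfl fun ε _ => h2 ε, Finset.sum_const]
      have hcard : (Finset.univ : Finset (Fin N → Bool)).card = 2 ^ N := by
        simp [Finset.card_univ]
      rw [hcard, nsmul_eq_mul]
      push_cast
      ring
    have hpointwise : ∀ π : Equiv.Perm (Fin N),
        ∑ ε : Fin N → Bool, Real.exp (l * T a m (tau m hm ε * π))
          ≤ 2 ^ N * (Real.exp (l ^ 2 * V / 4) * Real.exp (l * T a (2 * m) π / 2)) := by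
      intro π
      calc ∑ ε : Fin N → Bool, Real.exp (l * T a m (tau m hm ε * π))
          ≤ 2 ^ N * Real.exp (l * T a (2 * m) π / 2 + l ^ 2 * V / 4) := sum_eps_exp a hm π l
        _ = 2 ^ N * (Real.exp (l ^ 2 * V / 4) * Real.exp (l * T a (2 * m) π / 2)) := by
            rw [Real.exp_add]; ring
    rw [h1]
    calc ∑ π : Equiv.Perm (Fin N), ∑ ε : Fin N → Bool,
          Real.exp (l * T a m (tau m hm ε * π))
        ≤ ∑ π : Equiv.Perm (Fin N),
            2 ^ N * (Real.exp (l ^ 2 * V / 4) * Real.exp (l * T a (2 * m) π / 2)) :=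
          Finset.sum_le_sum fun π _ => hpointwise π
      _ = (2:ℝ) ^ N * (Real.exp (l ^ 2 * V / 4)
            * ∑ π : Equiv.Perm (Fin N), Real.exp (l * T a (2 * m) π / 2)) := by
          rw [← Finset.mul_sum, ← Finset.mul_sum]
  have key2 : Ssum a m l
      ≤ Real.exp (l ^ 2 * V / 4) * ∑ π : Equiv.Perm (Fin N), Real.exp (l * T a (2 * m) π / 2) :=
    le_of_mul_le_mul_left key (by positivity)
  have hCS : ∑ π : Equiv.Perm (Fin N), Real.exp (l * T a (2 * m) π / 2)
      ≤ Real.sqrt ((Nat.factorial N : ℝ)) * Real.sqrt (Ssum a (2 * m) l) := by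
    calc ∑ π : Equiv.Perm (Fin N), Real.exp (l * T a (2 * m) π / 2)
        = ∑ π : Equiv.Perm (Fin N),
            Real.sqrt 1 * Real.sqrt (Real.exp (l * T a (2 * m) π)) := by
          refine Finset.sum_congr rfl fun π _ => ?_
          rw [Real.sqrt_one, one_mul, ← Real.exp_half]
      _ ≤ Real.sqrt (∑ _π : Equiv.Perm (Fin N), (1:ℝ))
            * Real.sqrt (∑ π : Equiv.Perm (Fin N), Real.exp (l * T a (2 * m) π)) :=
          by
            apply Real.sum_sqrt_mul_sqrt_le
            · exact fun _ => zero_le_one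
            · exact fun _ => (Real.exp_pos _).le
      _ = Real.sqrt ((Nat.factorial N : ℝ)) * Real.sqrt (Ssum a (2 * m) l) := by
          rw [Finset.sum_const, card_perm_fin, nsmul_eq_mul, mul_one, Ssum]
  exact key2.trans (mul_le_mul_of_nonneg_left hCS (Real.exp_pos _).le)


lemma Ssum_induct (a : Fin N → ℝ) (hsum : ∑ i, a i = 0) :
    ∀ K : ℕ, ∀ m : ℕ, m ≤ N → ∀ l : ℝ,
      Ssum a m l ≤ (Nat.factorial N : ℝ)
        * Real.exp (l ^ 2 * (∑ i, (a i) ^ 2) / 2 * (1 - (1/2 : ℝ) ^ K)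
            + (1/2 : ℝ) ^ K * (|l| * ∑ i, |a i|)) := by
  intro K
  induction K with
  | zero =>
    intro m hm l
    simpa using Ssum_le_exp_abs a m l
  | succ K ih =>
    have hstep : ∀ m' : ℕ, 2 * m' ≤ N → ∀ l' : ℝ,
        Ssum a m' l' ≤ (Nat.factorial N : ℝ)
          * Real.exp (l' ^ 2 * (∑ i, (a i) ^ 2) / 2 * (1 - (1/2 : ℝ) ^ (K+1))
              + (1/2 : ℝ) ^ (K+1) * (|l'| * ∑ i, |a i|)) := by
      intro m' hm' l'
      set V := ∑ i, (a i) ^ 2 with hV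
      set B := ∑ i, |a i| with hB
      set E := l' ^ 2 * V / 2 * (1 - (1/2 : ℝ) ^ K) + (1/2 : ℝ) ^ K * (|l'| * B) with hE
      have h2 : Ssum a (2 * m') l' ≤ (Nat.factorial N : ℝ) * Real.exp E :=
        ih (2 * m') (by omega) l'
      have hfac0 : (0:ℝ) ≤ (Nat.factorial N : ℝ) := (factorial_pos_real (N := N)).le
      calc Ssum a m' l'
          ≤ Real.exp (l' ^ 2 * V / 4)
            * (Real.sqrt ((Nat.factorial N : ℝ)) * Real.sqrt (Ssum a (2 * m') l')) :=
            Ssum_doubling a hm' l'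
        _ ≤ Real.exp (l' ^ 2 * V / 4)
            * (Real.sqrt ((Nat.factorial N : ℝ))
                * Real.sqrt ((Nat.factorial N : ℝ) * Real.exp E)) := by
            refine mul_le_mul_of_nonneg_left
              (mul_le_mul_of_nonneg_left (Real.sqrt_le_sqrt h2) (Real.sqrt_nonneg _))
              (Real.exp_pos _).le
        _ = Real.exp (l' ^ 2 * V / 4)
            * (Real.sqrt ((Nat.factorial N : ℝ))
                * (Real.sqrt ((Nat.factorial N : ℝ)) * Real.exp (E / 2))) := by
            rw [Real.sqrt_mul hfac0, ← Real.exp_half]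
        _ = (Real.sqrt ((Nat.factorial N : ℝ)) * Real.sqrt ((Nat.factorial N : ℝ)))
            * (Real.exp (l' ^ 2 * V / 4) * Real.exp (E / 2)) := by ring
        _ = (Nat.factorial N : ℝ) * Real.exp (l' ^ 2 * V / 4 + E / 2) := by
            rw [Real.mul_self_sqrt hfac0, Real.exp_add]
        _ = (Nat.factorial N : ℝ)
            * Real.exp (l' ^ 2 * V / 2 * (1 - (1/2 : ℝ) ^ (K+1))
                + (1/2 : ℝ) ^ (K+1) * (|l'| * B)) := by
            congr 1
            rw [hE]
            rw [pow_succ]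
            ring
    intro m hm l
    by_cases hcase : 2 * m ≤ N
    · exact hstep m hcase l
    · have hm2 : 2 * (N - m) ≤ N := by omega
      rw [Ssum_complement a hsum hm l]
      have h3 := hstep (N - m) hm2 (-l)
      rw [neg_pow, abs_neg] at h3
      simpa using h3

lemma Ssum_le_exp_var (a : Fin N → ℝ) (hsum : ∑ i, a i = 0) {m : ℕ} (hm : m ≤ N) (l : ℝ) :
    Ssum a m l ≤ (Nat.factorial N : ℝ) * Real.exp (l ^ 2 * (∑ i, (a i) ^ 2) / 2) := by
  set V := ∑ i, (a i) ^ 2 with hV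
  set B := ∑ i, |a i| with hB
  have hhalf : Filter.Tendsto (fun K : ℕ => ((1:ℝ)/2) ^ K) Filter.atTop (nhds 0) :=
    tendsto_pow_atTop_nhds_zero_of_lt_one (by norm_num) (by norm_num)
  have h1 : Filter.Tendsto (fun K : ℕ => l ^ 2 * V / 2 * (1 - (1/2 : ℝ) ^ K)
      + (1/2 : ℝ) ^ K * (|l| * B)) Filter.atTop
      (nhds (l ^ 2 * V / 2 * (1 - 0) + 0 * (|l| * B))) :=
    ((tendsto_const_nhds.sub hhalf).const_mul _).add (hhalf.mul_const _)
  have h2 : Filter.Tendsto (fun K : ℕ => (Nat.factorial N : ℝ)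
      * Real.exp (l ^ 2 * V / 2 * (1 - (1/2 : ℝ) ^ K) + (1/2 : ℝ) ^ K * (|l| * B)))
      Filter.atTop (nhds ((Nat.factorial N : ℝ)
        * Real.exp (l ^ 2 * V / 2 * (1 - 0) + 0 * (|l| * B)))) :=
    ((Real.continuous_exp.tendsto _).comp h1).const_mul _
  have h3 : l ^ 2 * V / 2 * (1 - 0) + 0 * (|l| * B) = l ^ 2 * V / 2 := by ring
  rw [h3] at h2
  exact ge_of_tendsto' h2 (fun K => Ssum_induct a hsum K m hm l)

lemma exp_sq_integral (u : ℝ) :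
    Real.exp (u ^ 2) = (Real.sqrt Real.pi)⁻¹ * ∫ t : ℝ, Real.exp (2 * u * t - t ^ 2) := by
  have h1 : ∀ t : ℝ, Real.exp (2 * u * t - t ^ 2)
      = Real.exp (u ^ 2) * Real.exp (-1 * (t - u) ^ 2) := by
    intro t
    rw [← Real.exp_add]
    congr 1
    ring
  have h2 : ∫ t : ℝ, Real.exp (2 * u * t - t ^ 2)
      = Real.exp (u ^ 2) * ∫ t : ℝ, Real.exp (-1 * (t - u) ^ 2) := by
    simp only [h1]
    exact MeasureTheory.integral_const_mul _ _
  have h3 : ∫ t : ℝ, Real.exp (-1 * (t - u) ^ 2) = ∫ t : ℝ, Real.exp (-1 * t ^ 2) :=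
    MeasureTheory.integral_sub_right_eq_self (fun t : ℝ => Real.exp (-1 * t ^ 2)) u
  have h4 : ∫ t : ℝ, Real.exp (-1 * t ^ 2) = Real.sqrt Real.pi := by
    rw [integral_gaussian]
    norm_num
  have hpi : Real.sqrt Real.pi ≠ 0 := by
    have := Real.pi_pos
    positivity
  rw [h2, h3, h4]
  field_simp

lemma gaussian_integrand_integrable (u : ℝ) :
    MeasureTheory.Integrable (fun t : ℝ => Real.exp (2 * u * t - t ^ 2)) := by
  have h1 : (fun t : ℝ => Real.exp (2 * u * t - t ^ 2))
      = fun t : ℝ => Real.exp (u ^ 2) * Real.exp (-1 * (t - u) ^ 2) := by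
    funext t
    rw [← Real.exp_add]
    congr 1
    ring
  rw [h1]
  exact ((integrable_exp_neg_mul_sq one_pos).comp_sub_right u).const_mul _

lemma Ssum_psi2 (a : Fin N → ℝ) (hsum : ∑ i, a i = 0) {n : ℕ} (hn : n ≤ N) {d : ℝ}
    (hd : 0 < d) (hb : 8 * (∑ i, (a i) ^ 2) ≤ 3 * d ^ 2) :
    (∑ π : Equiv.Perm (Fin N), Real.exp ((T a n π / d) ^ 2)) / (Nat.factorial N : ℝ) ≤ 2 := by
  set V := ∑ i, (a i) ^ 2 with hV
  have hV0 : 0 ≤ V := Finset.sum_nonneg fun i _ => sq_nonneg _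
  set b : ℝ := 1 - 2 * V / d ^ 2 with hbdef
  clear_value b
  have hd2 : (0:ℝ) < d ^ 2 := by positivity
  have hb14 : (1/4 : ℝ) ≤ b := by
    rw [hbdef]
    have h5 : 2 * V / d ^ 2 ≤ 3 / 4 := by
      rw [div_le_div_iff₀ hd2 (by norm_num)]
      nlinarith
    linarith
  have hb0 : (0:ℝ) < b := lt_of_lt_of_le (by norm_num) hb14
  have hpi0 : (0:ℝ) < Real.sqrt Real.pi := Real.sqrt_pos.2 Real.pi_pos
  have hint : ∀ π : Equiv.Perm (Fin N),
      MeasureTheory.Integrable (fun t : ℝ => Real.exp (2 * (T a n π / d) * t - t ^ 2)) :=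
    fun π => gaussian_integrand_integrable _
  have hsum_int : MeasureTheory.Integrable
      (fun t : ℝ => ∑ π : Equiv.Perm (Fin N), Real.exp (2 * (T a n π / d) * t - t ^ 2)) :=
    MeasureTheory.integrable_finset_sum _ (fun π _ => hint π)
  have hRHS_int : MeasureTheory.Integrable
      (fun t : ℝ => (Nat.factorial N : ℝ) * Real.exp (-b * t ^ 2)) :=
    (integrable_exp_neg_mul_sq hb0).const_mul _
  have hpointwise : ∀ t : ℝ,
      ∑ π : Equiv.Perm (Fin N), Real.exp (2 * (T a n π / d) * t - t ^ 2)
        ≤ (Nat.factorial N : ℝ) * Real.exp (-b * t ^ 2) := by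
    intro t
    have he : ∀ π : Equiv.Perm (Fin N), Real.exp (2 * (T a n π / d) * t - t ^ 2)
        = Real.exp ((2 * t / d) * T a n π) * Real.exp (-(t ^ 2)) := by
      intro π
      rw [← Real.exp_add]
      congr 1
      field_simp
      ring
    calc ∑ π : Equiv.Perm (Fin N), Real.exp (2 * (T a n π / d) * t - t ^ 2)
        = Ssum a n (2 * t / d) * Real.exp (-(t ^ 2)) := by
          rw [Ssum, Finset.sum_mul]
          exact Finset.sum_congr rfl fun π _ => he π
      _ ≤ ((Nat.factorial N : ℝ) * Real.exp ((2 * t / d) ^ 2 * V / 2)) * Real.exp (-(t ^ 2)) :=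
          mul_le_mul_of_nonneg_right (Ssum_le_exp_var a hsum hn _) (Real.exp_pos _).le
      _ = (Nat.factorial N : ℝ) * Real.exp (-b * t ^ 2) := by
          rw [mul_assoc, ← Real.exp_add]
          congr 2
          rw [hbdef]
          field_simp
          ring
  have hmain : ∑ π : Equiv.Perm (Fin N), Real.exp ((T a n π / d) ^ 2)
      ≤ (Nat.factorial N : ℝ) * 2 := by
    calc ∑ π : Equiv.Perm (Fin N), Real.exp ((T a n π / d) ^ 2)
        = (Real.sqrt Real.pi)⁻¹ * ∫ t : ℝ,
            ∑ π : Equiv.Perm (Fin N), Real.exp (2 * (T a n π / d) * t - t ^ 2) := by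
          rw [MeasureTheory.integral_finset_sum _ (fun π _ => hint π), Finset.mul_sum]
          exact Finset.sum_congr rfl fun π _ => exp_sq_integral (T a n π / d)
      _ ≤ (Real.sqrt Real.pi)⁻¹ * ∫ t : ℝ, (Nat.factorial N : ℝ) * Real.exp (-b * t ^ 2) := by
          refine mul_le_mul_of_nonneg_left ?_ (by positivity)
          exact MeasureTheory.integral_mono hsum_int hRHS_int hpointwise
      _ = (Real.sqrt Real.pi)⁻¹ * ((Nat.factorial N : ℝ) * Real.sqrt (Real.pi / b)) := by
          rw [MeasureTheory.integral_const_mul, integral_gaussian]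
      _ ≤ (Nat.factorial N : ℝ) * 2 := by
          have h6 : Real.sqrt (Real.pi / b) = Real.sqrt Real.pi * Real.sqrt (1 / b) := by
            rw [← Real.sqrt_mul Real.pi_pos.le]
            congr 1
            ring
          rw [h6]
          have h7 : Real.sqrt (1 / b) ≤ 2 := by
            have h8 : (1:ℝ) / b ≤ 4 := by
              rw [div_le_iff₀ hb0]
              linarith [hb14]
            calc Real.sqrt (1 / b) ≤ Real.sqrt 4 := Real.sqrt_le_sqrt h8
              _ = 2 := by
                rw [show (4:ℝ) = 2 ^ 2 by norm_num, Real.sqrt_sq (by norm_num)]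
          calc (Real.sqrt Real.pi)⁻¹
                * ((Nat.factorial N : ℝ) * (Real.sqrt Real.pi * Real.sqrt (1 / b)))
              = (Nat.factorial N : ℝ) * Real.sqrt (1 / b) := by
                field_simp
            _ ≤ (Nat.factorial N : ℝ) * 2 :=
                mul_le_mul_of_nonneg_left h7 (factorial_pos_real (N := N)).le
  rw [div_le_iff₀ factorial_pos_real]
  calc ∑ π : Equiv.Perm (Fin N), Real.exp ((T a n π / d) ^ 2)
      ≤ (Nat.factorial N : ℝ) * 2 := hmain
    _ = 2 * (Nat.factorial N : ℝ) := by ring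

end Bobkov

open Bobkov in
/-- Bobkov's inequality: the sub-Gaussian (Orlicz ψ₂) norm of the without-replacement
sample mean deviation is at most
`C = sqrt((12/n)(1 + N/n)) · ‖f − P_N f‖_{L²(P_N)}`, i.e. `E[exp(((𝔓_{π,n}f − P_Nf)/C)²)] ≤ 2`. -/
theorem bobkov_inequality
    {𝒵 : Type*} (N n : ℕ) (hn1 : 1 ≤ n) (hnN : n ≤ N)
    (z : Fin N → 𝒵) (f : 𝒵 → ℝ)
    (hvar : 0 < L2PN N z f) :
    (∑ π : Equiv.Perm (Fin N),
        Real.exp (((sampleMean N n z f π - PN N z f) /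
          (Real.sqrt ((12 / (n : ℝ)) * (1 + (N : ℝ) / (n : ℝ))) * L2PN N z f)) ^ 2))
      / (Nat.factorial N : ℝ) ≤ 2 := by
  have hN1 : 1 ≤ N := le_trans hn1 hnN
  have hNpos : (0:ℝ) < (N:ℝ) := by exact_mod_cast Nat.pos_of_ne_zero (by omega)
  have hnpos : (0:ℝ) < (n:ℝ) := by exact_mod_cast hn1
  set μ := PN N z f with hμ
  set σ := L2PN N z f with hσ
  set a : Fin N → ℝ := fun i => f (z i) - μ with ha
  have hsum : ∑ i, a i = 0 := by
    simp only [ha]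
    rw [Finset.sum_sub_distrib, Finset.sum_const, Finset.card_univ, Fintype.card_fin,
      nsmul_eq_mul, hμ, PN]
    field_simp
    ring
  have hV : ∑ i, (a i) ^ 2 = (N:ℝ) * σ ^ 2 := by
    have h1 : σ ^ 2 = (∑ i, (a i) ^ 2) / (N:ℝ) := by
      rw [hσ, L2PN, Real.sq_sqrt (by positivity)]
    rw [h1]
    field_simp
  set c : ℝ := Real.sqrt ((12 / (n : ℝ)) * (1 + (N : ℝ) / (n : ℝ))) * σ with hc
  have harg0 : (0:ℝ) < (12 / (n : ℝ)) * (1 + (N : ℝ) / (n : ℝ)) := by positivity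
  have hc0 : (0:ℝ) < c := mul_pos (Real.sqrt_pos.2 harg0) hvar
  set d : ℝ := (n:ℝ) * c with hd
  have hd0 : (0:ℝ) < d := mul_pos hnpos hc0
  have hd2 : d ^ 2 = (12 * (n:ℝ) + 12 * (N:ℝ)) * σ ^ 2 := by
    rw [hd, hc, mul_pow, mul_pow, Real.sq_sqrt harg0.le]
    field_simp
  have hb8 : 8 * (∑ i, (a i) ^ 2) ≤ 3 * d ^ 2 := by
    rw [hV, hd2]
    have hσ2 : (0:ℝ) ≤ σ ^ 2 := sq_nonneg _
    nlinarith [mul_nonneg (mul_nonneg (by norm_num : (0:ℝ) ≤ 28) hNpos.le) hσ2,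
      mul_nonneg (mul_nonneg (by norm_num : (0:ℝ) ≤ 36) hnpos.le) hσ2]
  have hpt : ∀ π : Equiv.Perm (Fin N),
      (sampleMean N n z f π - μ) / c = T a n π / d := by
    intro π
    have hc1 : ∑ i : Fin N, (if (π i : ℕ) < n then (1:ℝ) else 0) = (n:ℝ) := by
      rw [Equiv.sum_comp π (fun j : Fin N => if (j : ℕ) < n then (1:ℝ) else 0)]
      rw [Fin.sum_univ_eq_sum_range (fun j => if j < n then (1:ℝ) else 0)]
      calc ∑ j ∈ Finset.range N, (if j < n then (1:ℝ) else 0)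
          = ∑ j ∈ Finset.range n, (if j < n then (1:ℝ) else 0) :=
            (Finset.sum_subset (Finset.range_subset_range.2 hnN)
              (fun x _ hx => by simp [Finset.mem_range.not.1 hx])).symm
        _ = ∑ _j ∈ Finset.range n, (1:ℝ) :=
            Finset.sum_congr rfl fun j hj => by simp [Finset.mem_range.1 hj]
        _ = (n:ℝ) := by simp
    have hT : T a n π = (∑ i, if (π i : ℕ) < n then f (z i) else 0) - (n:ℝ) * μ := by
      rw [T]
      calc ∑ i, (if (π i : ℕ) < n then a i else 0)
          = ∑ i, ((if (π i : ℕ) < n then f (z i) else 0)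
              - μ * (if (π i : ℕ) < n then (1:ℝ) else 0)) := by
            refine Finset.sum_congr rfl fun i _ => ?_
            by_cases h : (π i : ℕ) < n <;> simp [ha, h]
        _ = (∑ i, if (π i : ℕ) < n then f (z i) else 0)
            - μ * ∑ i : Fin N, (if (π i : ℕ) < n then (1:ℝ) else 0) := by
            rw [Finset.sum_sub_distrib, Finset.mul_sum]
        _ = (∑ i, if (π i : ℕ) < n then f (z i) else 0) - (n:ℝ) * μ := by
            rw [hc1]; ring
    rw [sampleMean, hT, hd]
    rw [div_sub' (ne_of_gt hnpos)]
    rw [div_div]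
  calc (∑ π : Equiv.Perm (Fin N),
        Real.exp (((sampleMean N n z f π - μ) / c) ^ 2)) / (Nat.factorial N : ℝ)
      = (∑ π : Equiv.Perm (Fin N),
          Real.exp ((T a n π / d) ^ 2)) / (Nat.factorial N : ℝ) := by
        congr 1
        exact Finset.sum_congr rfl fun π _ => by rw [hpt π]
    _ ≤ 2 := Ssum_psi2 a hsum hnN hd0 hb8
end

section
/- Bernstein–Serfling inequality (sub-exponential norm of a without-replacement sample mean): let z_1,…,z_N be fixed points, n ∈ {1,…,N}, and f a real-valued function on the population that is not constant on {z_1,…,z_N}. Set C = (24√2 / n) · max_{i∈[N]} |f(z_i) − P_N f| + sqrt( 72 / (n·log 2) ) · ‖f − P_N f‖_{L²(P_N)}. Then for a uniform random permutation π of [N], E[ exp( |𝔓_{π,n} f − P_N f| / C ) ] ≤ 2; equivalently, the Orlicz ψ₁-norm of (𝔓_{π,n} − P_N)f is at most C. -/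
open Finset

set_option linter.unusedSectionVars false
set_option maxHeartbeats 1000000

section Esum

variable {ι : Type*} [DecidableEq ι]

noncomputable def esum (c : ι → ℝ) (m : ℕ) (t : Finset ι) : ℝ :=
  ∑ S ∈ t.powersetCard m, ∏ i ∈ S, c i

lemma esum_nonneg {c : ι → ℝ} {t : Finset ι} (hc : ∀ i ∈ t, 0 ≤ c i) (m : ℕ) :
    0 ≤ esum c m t := by
  apply Finset.sum_nonneg
  intro S hS
  rw [mem_powersetCard] at hS
  exact Finset.prod_nonneg fun i hi => hc i (hS.1 hi)

lemma esum_insert {c : ι → ℝ} {t : Finset ι} {x : ι} (h : x ∉ t) (m : ℕ) :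
    esum c (m + 1) (insert x t) = esum c (m + 1) t + c x * esum c m t := by
  unfold esum
  rw [powersetCard_succ_insert h, sum_union, sum_image, mul_sum]
  · congr 1
    apply Finset.sum_congr rfl
    intro S hS
    rw [mem_powersetCard] at hS
    rw [prod_insert (fun hx => h (hS.1 hx))]
  · intro S hS S' hS' hee
    rw [mem_coe, mem_powersetCard] at hS hS'
    have hxS : x ∉ S := fun hx => h (hS.1 hx)
    have hxS' : x ∉ S' := fun hx => h (hS'.1 hx)
    rw [← erase_insert hxS, ← erase_insert hxS', hee]
  · rw [Finset.disjoint_right]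
    intro S hS hS2
    rw [mem_image] at hS
    obtain ⟨S', _, rfl⟩ := hS
    rw [mem_powersetCard] at hS2
    exact h (hS2.1 (mem_insert_self x S'))

lemma pc_erase {t : Finset ι} {i : ι} (m : ℕ) :
    (t.erase i).powersetCard m = (t.powersetCard m).filter (fun S => i ∉ S) := by
  ext S
  simp only [mem_powersetCard, mem_filter, subset_erase]
  tauto

lemma sum_esum_erase {c : ι → ℝ} {t : Finset ι} {n : ℕ} (hn : n ≤ t.card) :
    ∑ i ∈ t, esum c n (t.erase i) = ((t.card - n : ℕ) : ℝ) * esum c n t := by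
  unfold esum
  simp_rw [pc_erase, sum_filter]
  rw [Finset.sum_comm]
  rw [Finset.mul_sum]
  apply Finset.sum_congr rfl
  intro S hS
  rw [mem_powersetCard] at hS
  rw [Finset.sum_ite, Finset.sum_const, Finset.sum_const_zero, add_zero, nsmul_eq_mul]
  congr 2
  have : t.filter (fun x => x ∉ S) = t \ S := by
    ext x; simp [mem_sdiff]
  rw [this, card_sdiff_of_subset hS.1, hS.2]

lemma sum_mul_esum_erase {c : ι → ℝ} {t : Finset ι} (n : ℕ) :
    ∑ i ∈ t, c i * esum c n (t.erase i) = ((n + 1 : ℕ) : ℝ) * esum c (n + 1) t := by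
  unfold esum
  simp_rw [Finset.mul_sum]
  rw [Finset.sum_sigma']
  have hrhs : ∀ S ∈ t.powersetCard (n+1), ((n + 1 : ℕ) : ℝ) * ∏ i ∈ S, c i
      = ∑ i ∈ S, ∏ j ∈ S, c j := by
    intro S hS
    rw [mem_powersetCard] at hS
    rw [Finset.sum_const, hS.2, nsmul_eq_mul]
  rw [Finset.sum_congr rfl hrhs, Finset.sum_sigma']
  apply Finset.sum_nbij' (i := fun p => (⟨insert p.1 p.2, p.1⟩ : Σ _ : Finset ι, ι))
    (j := fun q => (⟨q.2, q.1.erase q.2⟩ : Σ _ : ι, Finset ι))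
  · rintro ⟨i, S⟩ hp
    simp only [mem_sigma, mem_powersetCard, subset_erase] at hp ⊢
    obtain ⟨hi, ⟨hSt, hiS⟩, hcard⟩ := hp
    exact ⟨⟨insert_subset hi hSt, by rw [card_insert_of_notMem hiS, hcard]⟩,
      mem_insert_self _ _⟩
  · rintro ⟨S, i⟩ hq
    simp only [mem_sigma, mem_powersetCard, subset_erase] at hq ⊢
    obtain ⟨⟨hSt, hcard⟩, hiS⟩ := hq
    refine ⟨hSt hiS, ⟨⟨(erase_subset _ _).trans hSt, notMem_erase _ _⟩, ?_⟩⟩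
    rw [card_erase_of_mem hiS, hcard]; rfl
  · rintro ⟨i, S⟩ hp
    simp only [mem_sigma, mem_powersetCard, subset_erase] at hp
    simp [erase_insert hp.2.1.2]
  · rintro ⟨S, i⟩ hq
    simp only [mem_sigma, mem_powersetCard] at hq
    simp [insert_erase hq.2]
  · rintro ⟨i, S⟩ hp
    simp only [mem_sigma, mem_powersetCard, subset_erase] at hp
    rw [prod_insert hp.2.1.2]

lemma esum_antivary {c : ι → ℝ} {t : Finset ι} (hc : ∀ i ∈ t, 0 ≤ c i) (n : ℕ) :
    AntivaryOn c (fun i => esum c n (t.erase i)) (t : Set ι) := by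
  -- key: i ≠ j in t, c i ≤ c j → esum n (t.erase j) ≤ esum n (t.erase i)
  have key : ∀ i ∈ t, ∀ j ∈ t, i ≠ j → c i ≤ c j →
      esum c n (t.erase j) ≤ esum c n (t.erase i) := by
    intro i hi j hj hij hcij
    cases n with
    | zero => simp [esum, powersetCard_zero]
    | succ m =>
      have hji : j ≠ i := hij.symm
      set u := (t.erase i).erase j with hu
      have hjti : j ∈ t.erase i := mem_erase.2 ⟨hji, hj⟩
      have hitj : i ∈ t.erase j := mem_erase.2 ⟨hij, hi⟩
      have h1 : t.erase i = insert j u := (insert_erase hjti).symm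
      have h2 : t.erase j = insert i ((t.erase j).erase i) := (insert_erase hitj).symm
      have h3 : (t.erase j).erase i = u := by rw [hu, erase_right_comm]
      have hju : j ∉ u := notMem_erase _ _
      have hiu : i ∉ u := by rw [← h3]; exact notMem_erase _ _
      have hcu : ∀ k ∈ u, 0 ≤ c k := fun k hk =>
        hc k (mem_of_mem_erase (mem_of_mem_erase hk))
      rw [h1, h2, h3, esum_insert hju, esum_insert hiu]
      have := esum_nonneg hcu m
      nlinarith
  intro i hi j hj hlt
  by_contra hcon
  push_neg at hcon
  have hij : i ≠ j := by rintro rfl; exact lt_irrefl _ hlt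
  have hle := key i hi j hj hij hcon.le
  simp only at hlt
  exact absurd hlt (not_lt.2 hle)


lemma maclaurin_bound {c : ι → ℝ} {t : Finset ι} (hc : ∀ i ∈ t, 0 ≤ c i) :
    ∀ n : ℕ, n ≤ t.card →
      (t.card : ℝ) ^ n * esum c n t ≤ (t.card.choose n : ℝ) * (∑ i ∈ t, c i) ^ n := by
  intro n
  induction n with
  | zero => simp [esum, powersetCard_zero]
  | succ n ih =>
    intro hn1
    have hn : n ≤ t.card := Nat.le_of_succ_le hn1
    have hcheb := (esum_antivary hc n).card_mul_sum_le_sum_mul_sum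
    rw [sum_mul_esum_erase, sum_esum_erase hn] at hcheb
    have hSc : 0 ≤ ∑ i ∈ t, c i := Finset.sum_nonneg hc
    have hen : 0 ≤ esum c n t := esum_nonneg hc n
    have hen1 : 0 ≤ esum c (n+1) t := esum_nonneg hc (n+1)
    have ihn := ih hn
    -- card * (n+1) * e_{n+1} ≤ (Σc) * (card - n) * e_n
    -- goal : card^{n+1} e_{n+1} ≤ choose (n+1) (Σc)^{n+1}
    have hchoose : ((t.card - n : ℕ) : ℝ) * (t.card.choose n : ℝ)
        = ((n + 1 : ℕ) : ℝ) * (t.card.choose (n+1) : ℝ) := by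
      have h2 : (t.card - n) * t.card.choose n = (n+1) * t.card.choose (n+1) := by
        rw [mul_comm (n+1), Nat.choose_succ_right_eq, mul_comm]
      exact_mod_cast h2
    have hpow : (0:ℝ) ≤ (t.card : ℝ) ^ n := by positivity
    have hcard : (0:ℝ) < (t.card : ℝ) := by
      have : 0 < t.card := lt_of_lt_of_le (Nat.succ_pos n) hn1
      exact_mod_cast this
    -- multiply hcheb by card^n
    have step1 : (t.card : ℝ) ^ n * ((t.card : ℝ) * (((n + 1 : ℕ) : ℝ) * esum c (n+1) t))
        ≤ (t.card : ℝ) ^ n * ((∑ i ∈ t, c i) * (((t.card - n : ℕ) : ℝ) * esum c n t)) :=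
      by apply mul_le_mul_of_nonneg_left hcheb hpow
    have step2 : (t.card : ℝ) ^ n * ((∑ i ∈ t, c i) * (((t.card - n : ℕ) : ℝ) * esum c n t))
        ≤ (∑ i ∈ t, c i) * (((t.card - n : ℕ) : ℝ) * ((t.card.choose n : ℝ) * (∑ i ∈ t, c i) ^ n)) := by
      have h0 : (0:ℝ) ≤ ((t.card - n : ℕ) : ℝ) := by positivity
      calc (t.card : ℝ) ^ n * ((∑ i ∈ t, c i) * (((t.card - n : ℕ) : ℝ) * esum c n t))
          = (∑ i ∈ t, c i) * (((t.card - n : ℕ) : ℝ) * ((t.card : ℝ) ^ n * esum c n t)) := by ring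
        _ ≤ _ := by
            apply mul_le_mul_of_nonneg_left _ hSc
            apply mul_le_mul_of_nonneg_left ihn h0
    have hfinal := le_trans step1 step2
    have hn1pos : (0:ℝ) < ((n + 1 : ℕ) : ℝ) := by positivity
    have e1 : (t.card:ℝ)^(n+1) * esum c (n+1) t * ((n+1:ℕ):ℝ)
        = (t.card:ℝ)^n * ((t.card:ℝ) * (((n+1:ℕ):ℝ) * esum c (n+1) t)) := by push_cast; ring
    have e2 : (t.card.choose (n+1):ℝ) * (∑ i ∈ t, c i)^(n+1) * ((n+1:ℕ):ℝ)
        = (∑ i ∈ t, c i) * (((t.card - n:ℕ):ℝ) * ((t.card.choose n:ℝ) * (∑ i ∈ t, c i)^n)) := by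
      linear_combination (-(∑ i ∈ t, c i)^(n+1)) * hchoose
    have h4 : (t.card:ℝ)^(n+1) * esum c (n+1) t * ((n+1:ℕ):ℝ)
        ≤ (t.card.choose (n+1):ℝ) * (∑ i ∈ t, c i)^(n+1) * ((n+1:ℕ):ℝ) := by
      rw [e1, e2]; exact hfinal
    exact le_of_mul_le_mul_right h4 hn1pos


end Esum

lemma card_fin_filter_lt (N n : ℕ) (hnN : n ≤ N) :
    ((univ : Finset (Fin N)).filter (fun k : Fin N => (k : ℕ) < n)).card = n := by
  have : (univ : Finset (Fin N)).filter (fun k : Fin N => (k : ℕ) < n)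
      = (univ : Finset (Fin n)).map (Fin.castLEEmb hnN) := by
    ext k
    simp only [mem_filter, mem_univ, true_and, mem_map, Fin.castLEEmb_apply]
    constructor
    · intro hk; exact ⟨⟨(k : ℕ), hk⟩, by ext; simp⟩
    · rintro ⟨j, rfl⟩; simpa using j.2
  rw [this, card_map, card_univ, Fintype.card_fin]

lemma card_filter_perm_lt {N n : ℕ} (π : Equiv.Perm (Fin N)) (hnN : n ≤ N) :
    ((univ : Finset (Fin N)).filter (fun i => ((π i : Fin N) : ℕ) < n)).card = n := by
  refine Eq.trans ?_ (card_fin_filter_lt N n hnN)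
  apply Finset.card_bij (fun i _ => π i)
  · intro i hi
    simp only [mem_filter, mem_univ, true_and] at hi ⊢
    exact hi
  · intro i _ j _ h
    exact π.injective h
  · intro k hk
    simp only [mem_filter, mem_univ, true_and] at hk
    exact ⟨π.symm k, by simp [mem_filter, hk], by simp⟩

def fiber_equiv {N n : ℕ} (S : Finset (Fin N)) :
    {π : Equiv.Perm (Fin N) //
        (univ : Finset (Fin N)).filter (fun i => ((π i : Fin N) : ℕ) < n) = S}
      ≃ ({i : Fin N // i ∈ S} ≃ {k : Fin N // (k : ℕ) < n})
        × ({i : Fin N // ¬ i ∈ S} ≃ {k : Fin N // ¬ (k : ℕ) < n}) where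
  toFun := fun ⟨π, hπ⟩ =>
    have hiff : ∀ i, i ∈ S ↔ ((π i : Fin N) : ℕ) < n := by
      intro i
      rw [← hπ, mem_filter]
      simp
    ⟨π.subtypeEquiv hiff, π.subtypeEquiv (fun i => not_iff_not.2 (hiff i))⟩
  invFun := fun ⟨σ, τ⟩ =>
    ⟨(Equiv.sumCompl (fun i => i ∈ S)).symm.trans ((σ.sumCongr τ).trans
        (Equiv.sumCompl (fun k : Fin N => (k : ℕ) < n))), by
      ext i
      simp only [mem_filter, mem_univ, true_and]
      by_cases hi : i ∈ S
      · simp [Equiv.sumCompl_symm_apply_of_pos hi, (σ ⟨i, hi⟩).2, hi]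
      · simp only [Equiv.trans_apply, Equiv.sumCompl_symm_apply_of_neg hi,
          Equiv.sumCongr_apply, Sum.map_inr, Equiv.sumCompl_apply_inr]
        exact iff_of_false (τ ⟨i, hi⟩).2 hi⟩
  left_inv := by
    rintro ⟨π, hπ⟩
    ext i
    simp only [Equiv.trans_apply]
    by_cases hi : i ∈ S
    · simp [Equiv.sumCompl_symm_apply_of_pos hi]
    · simp [Equiv.sumCompl_symm_apply_of_neg hi]
  right_inv := by
    rintro ⟨σ, τ⟩
    dsimp only
    congr 1
    · ext ⟨i, hi⟩
      simp [Equiv.subtypeEquiv, Equiv.sumCompl_symm_apply_of_pos (p := fun j => j ∈ S) hi]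
    · ext ⟨i, hi⟩
      simp [Equiv.subtypeEquiv, Equiv.sumCompl_symm_apply_of_neg (p := fun j => j ∈ S) hi]

lemma fiber_card {N n : ℕ} (hnN : n ≤ N) (S : Finset (Fin N)) (hS : S.card = n) :
    ((univ : Finset (Equiv.Perm (Fin N))).filter
      (fun π => (univ : Finset (Fin N)).filter (fun i => ((π i : Fin N) : ℕ) < n) = S)).card
      = n.factorial * (N - n).factorial := by
  rw [← Fintype.card_subtype]
  rw [Fintype.card_congr (fiber_equiv S)]
  rw [Fintype.card_prod]
  have hcS : Fintype.card {i : Fin N // i ∈ S} = n := by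
    rw [Fintype.card_coe]; exact hS
  have hcB : Fintype.card {k : Fin N // (k : ℕ) < n} = n := by
    rw [Fintype.card_subtype]; exact card_fin_filter_lt N n hnN
  have hcSc : Fintype.card {i : Fin N // ¬ i ∈ S} = N - n := by
    rw [Fintype.card_subtype_compl, hcS, Fintype.card_fin]
  have hcBc : Fintype.card {k : Fin N // ¬ (k : ℕ) < n} = N - n := by
    rw [Fintype.card_subtype_compl, hcB, Fintype.card_fin]
  rw [Fintype.card_equiv (Fintype.equivOfCardEq (hcS.trans hcB.symm)),
    Fintype.card_equiv (Fintype.equivOfCardEq (hcSc.trans hcBc.symm)), hcS, hcSc]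

lemma perm_sum {N n : ℕ} (hnN : n ≤ N) (c : Fin N → ℝ) :
    ∑ π : Equiv.Perm (Fin N), ∏ i : Fin N, (if ((π i : Fin N) : ℕ) < n then c i else 1)
    = (n.factorial * (N - n).factorial : ℕ) *
        ∑ S ∈ (univ : Finset (Fin N)).powersetCard n, ∏ i ∈ S, c i := by
  have hprod : ∀ π : Equiv.Perm (Fin N),
      ∏ i : Fin N, (if ((π i : Fin N) : ℕ) < n then c i else 1)
      = ∏ i ∈ (univ : Finset (Fin N)).filter (fun i => ((π i : Fin N) : ℕ) < n), c i := by
    intro π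
    rw [Finset.prod_filter]
  simp_rw [hprod]
  rw [← Finset.sum_fiberwise_of_maps_to (g := fun π : Equiv.Perm (Fin N) =>
      (univ : Finset (Fin N)).filter (fun i => ((π i : Fin N) : ℕ) < n))
      (t := (univ : Finset (Fin N)).powersetCard n) ?_]
  · rw [Finset.mul_sum]
    apply Finset.sum_congr rfl
    intro S hS
    rw [mem_powersetCard_univ] at hS
    have : ∀ π ∈ (univ : Finset (Equiv.Perm (Fin N))).filter
        (fun π => (univ : Finset (Fin N)).filter (fun i => ((π i : Fin N) : ℕ) < n) = S),
        ∏ i ∈ (univ : Finset (Fin N)).filter (fun i => ((π i : Fin N) : ℕ) < n), c i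
        = ∏ i ∈ S, c i := by
      intro π hπ
      rw [mem_filter] at hπ
      rw [hπ.2]
    rw [Finset.sum_congr rfl this, Finset.sum_const, fiber_card hnN S hS, nsmul_eq_mul]
  · intro π _
    rw [mem_powersetCard_univ]
    exact card_filter_perm_lt π hnN

lemma mgf_sum_bound {N n : ℕ} (hn : 0 < n) (hnN : n ≤ N) (a : Fin N → ℝ) (s : ℝ)
    (hsum : ∑ i, a i = 0)
    (habs : ∀ i, |s * a i| ≤ 1)
    (hvar : (n : ℝ) * ((3/4) * s^2 * ∑ i, (a i)^2) / N ≤ 1/100) :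
    ∑ π : Equiv.Perm (Fin N), ∏ i : Fin N,
        (if ((π i : Fin N) : ℕ) < n then Real.exp (s * a i) else 1)
      ≤ (N.factorial : ℝ) * 1.25 := by
  have hN : 0 < N := lt_of_lt_of_le hn hnN
  have hNR : (0:ℝ) < N := by exact_mod_cast hN
  set c : Fin N → ℝ := fun i => Real.exp (s * a i) with hc
  have hcpos : ∀ i ∈ (univ : Finset (Fin N)), 0 ≤ c i := fun i _ => (Real.exp_pos _).le
  set x : ℝ := (n : ℝ) * ((3/4) * s^2 * ∑ i, (a i)^2) / N with hx
  have hx0 : 0 ≤ x := by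
    apply div_nonneg _ hNR.le
    apply mul_nonneg (Nat.cast_nonneg n)
    apply mul_nonneg (by positivity)
    exact Finset.sum_nonneg fun i _ => sq_nonneg _
  -- per-point exponential bound
  have hsumexp : ∑ i, c i ≤ (N : ℝ) * (1 + x / n) := by
    have hexp : ∀ i : Fin N, c i ≤ 1 + s * a i + (3/4) * (s * a i)^2 := by
      intro i
      have hb := Real.exp_bound (habs i) (n := 2) (by norm_num)
      have h2 : ∑ m ∈ Finset.range 2, (s * a i) ^ m / m.factorial = 1 + s * a i := by
        simp [Finset.sum_range_succ]
      rw [h2] at hb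
      have h3 := (abs_le.1 hb).2
      have habs2 : |s * a i| ^ 2 = (s * a i)^2 := sq_abs _
      rw [habs2] at h3
      have h4 : ((Nat.succ 2 : ℕ) : ℝ) / ((Nat.factorial 2 : ℕ) * (2:ℕ)) = 3/4 := by
        norm_num [Nat.factorial]
      rw [h4] at h3
      nlinarith [h3, sq_nonneg (s * a i)]
    calc ∑ i, c i ≤ ∑ i : Fin N, (1 + s * a i + (3/4) * (s * a i)^2) :=
          Finset.sum_le_sum fun i _ => hexp i
      _ = (N : ℝ) + s * (∑ i, a i) + (3/4) * s^2 * ∑ i, (a i)^2 := by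
          have hring : ∀ i : Fin N, 1 + s * a i + (3/4) * (s * a i)^2
              = 1 + s * a i + (3/4) * s^2 * (a i)^2 := fun i => by ring
          rw [Finset.sum_congr rfl (fun i _ => hring i), Finset.sum_add_distrib,
            Finset.sum_add_distrib, Finset.sum_const, ← Finset.mul_sum]
          have : ∑ i : Fin N, (3/4) * s^2 * (a i)^2 = (3/4) * s^2 * ∑ i, (a i)^2 := by
            rw [Finset.mul_sum]
          rw [this]
          simp [Finset.card_univ]
      _ = (N : ℝ) * (1 + x / n) := by
          rw [hsum, hx]
          field_simp
          ring
  have hnR : (0:ℝ) < n := by exact_mod_cast hn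
  have hK0 : (0:ℝ) ≤ 1 + x / n := by positivity
  have hcard : ((univ : Finset (Fin N)).card : ℝ) = (N : ℝ) := by
    simp [Finset.card_univ]
  have hcardn : (univ : Finset (Fin N)).card = N := by simp
  have key := maclaurin_bound hcpos n (by rw [hcardn]; exact hnN)
  rw [hcardn] at key
  have hcsum0 : 0 ≤ ∑ i, c i := Finset.sum_nonneg hcpos
  have hpow1 : (∑ i, c i)^n ≤ ((N:ℝ) * (1 + x / n))^n := pow_le_pow_left₀ hcsum0 hsumexp n
  have hpow2 : (1 + x / n)^n ≤ Real.exp x := by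
    have h1 : 1 + x / n ≤ Real.exp (x / n) := by
      have := Real.add_one_le_exp (x / n)
      linarith
    calc (1 + x / n)^n ≤ (Real.exp (x / n))^n := pow_le_pow_left₀ hK0 h1 n
      _ = Real.exp ((n : ℝ) * (x / n)) := (Real.exp_nat_mul _ n).symm
      _ = Real.exp x := by rw [mul_div_cancel₀ _ (ne_of_gt hnR)]
  have hexpx : Real.exp x ≤ 1.25 := by
    have hx1 : x < 1 := lt_of_le_of_lt hvar (by norm_num)
    have h1 : Real.exp (-x) ≥ 1 - x := by
      have := Real.add_one_le_exp (-x)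
      linarith
    have h2 : (0:ℝ) < 1 - x := by linarith
    have h3 : Real.exp x * (1 - x) ≤ 1 := by
      calc Real.exp x * (1 - x) ≤ Real.exp x * Real.exp (-x) :=
            mul_le_mul_of_nonneg_left h1 (Real.exp_pos _).le
        _ = 1 := by rw [← Real.exp_add]; simp
    nlinarith [h3, h2]
  -- assemble
  rw [perm_sum hnN c]
  have heq : ∑ S ∈ (univ : Finset (Fin N)).powersetCard n, ∏ i ∈ S, c i = esum c n univ := rfl
  rw [heq]
  have hfactpos : (0:ℝ) < ((n.factorial * (N - n).factorial : ℕ) : ℝ) := by positivity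
  have hNn : (0:ℝ) < (N:ℝ)^n := by positivity
  -- esum ≤ choose * (1+x/n)^n
  have hesum : esum c n univ ≤ (N.choose n : ℝ) * (1 + x / n)^n := by
    have h5 : (↑N * (1 + x / n))^n = (N:ℝ)^n * (1 + x/n)^n := mul_pow _ _ n
    have h6 : (N:ℝ)^n * esum c n univ ≤ (N.choose n : ℝ) * ((N:ℝ)^n * (1 + x/n)^n) := by
      calc (N:ℝ)^n * esum c n univ ≤ (N.choose n : ℝ) * (∑ i, c i)^n := key
        _ ≤ (N.choose n : ℝ) * ((N:ℝ)^n * (1 + x/n)^n) := by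
            apply mul_le_mul_of_nonneg_left _ (Nat.cast_nonneg _)
            rw [← h5]; exact hpow1
    have h8 : (N:ℝ)^n * esum c n univ ≤ (N:ℝ)^n * ((N.choose n : ℝ) * (1 + x/n)^n) := by
      calc (N:ℝ)^n * esum c n univ ≤ (N.choose n : ℝ) * ((N:ℝ)^n * (1 + x/n)^n) := h6
        _ = (N:ℝ)^n * ((N.choose n : ℝ) * (1 + x/n)^n) := by ring
    exact (mul_le_mul_iff_right₀ hNn).1 h8
  calc ((n.factorial * (N - n).factorial : ℕ) : ℝ) * esum c n univ
      ≤ ((n.factorial * (N - n).factorial : ℕ) : ℝ) * ((N.choose n : ℝ) * (1 + x/n)^n) :=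
        mul_le_mul_of_nonneg_left hesum hfactpos.le
    _ = ((N.choose n * n.factorial * (N - n).factorial : ℕ) : ℝ) * (1 + x/n)^n := by
        push_cast; ring
    _ = (N.factorial : ℝ) * (1 + x/n)^n := by
        rw [Nat.choose_mul_factorial_mul_factorial hnN]
    _ ≤ (N.factorial : ℝ) * 1.25 := by
        apply mul_le_mul_of_nonneg_left _ (Nat.cast_nonneg _)
        exact le_trans hpow2 hexpx

/-- Bernstein–Serfling inequality: the sub-exponential (Orlicz ψ₁) norm of the
without-replacement sample mean deviation is at most
`C = (24√2/n)·max_i |f(z_i) − P_N f| + sqrt(72/(n·log 2))·‖f − P_N f‖_{L²(P_N)}`,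
i.e. `E[exp(|𝔓_{π,n}f − P_Nf|/C)] ≤ 2`. -/
theorem bernstein_serfling_inequality
    {𝒵 : Type*} (N n : ℕ) (hn1 : 1 ≤ n) (hnN : n ≤ N)
    (z : Fin N → 𝒵) (f : 𝒵 → ℝ)
    (hnonconst : ∃ i j : Fin N, f (z i) ≠ f (z j)) :
    (∑ π : Equiv.Perm (Fin N),
        Real.exp (|sampleMean N n z f π - PN N z f| /
          ((24 * Real.sqrt 2 / (n : ℝ)) * (⨆ i : Fin N, |f (z i) - PN N z f|)
            + Real.sqrt (72 / ((n : ℝ) * Real.log 2)) * L2PN N z f)))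
      / (Nat.factorial N : ℝ) ≤ 2 := by
  classical
  have hN : 0 < N := lt_of_lt_of_le hn1 hnN
  have hNR : (0:ℝ) < N := by exact_mod_cast hN
  have hnR : (0:ℝ) < n := by exact_mod_cast hn1
  set P := PN N z f with hP
  set a : Fin N → ℝ := fun i => f (z i) - P with ha
  have hsum : ∑ i, a i = 0 := by
    rw [ha]
    rw [Finset.sum_sub_distrib, Finset.sum_const, Finset.card_univ, Fintype.card_fin]
    rw [hP]
    unfold PN
    rw [nsmul_eq_mul, mul_div_cancel₀ _ (ne_of_gt hNR), sub_self]
  set M := ⨆ i : Fin N, |f (z i) - P| with hM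
  have : Nonempty (Fin N) := ⟨⟨0, hN⟩⟩
  have hMa : ∀ i, |a i| ≤ M := fun i =>
    le_ciSup (f := fun i : Fin N => |f (z i) - P|)
      (Set.Finite.bddAbove (Set.finite_range _)) i
  have hM0 : 0 ≤ M := le_trans (abs_nonneg _) (hMa ⟨0, hN⟩)
  set σ := L2PN N z f with hσ
  have hT0 : 0 ≤ ∑ i, (a i)^2 := Finset.sum_nonneg fun i _ => sq_nonneg _
  have hσsq : σ^2 = (∑ i, (a i)^2) / N := by
    rw [hσ]; unfold L2PN
    rw [Real.sq_sqrt (by positivity)]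
  have hσ0 : 0 ≤ σ := Real.sqrt_nonneg _
  have hσpos : 0 < σ := by
    obtain ⟨i, j, hij⟩ := hnonconst
    have haij : a i ≠ a j := by
      simp only [ha]
      intro h
      exact hij (by linarith [sub_left_inj.1 h])
    have hk : ∃ k, a k ≠ 0 := by
      by_contra hcon
      push_neg at hcon
      exact haij (by rw [hcon i, hcon j])
    obtain ⟨k, hk⟩ := hk
    have hTpos : 0 < ∑ i, (a i)^2 := by
      apply Finset.sum_pos' (fun i _ => sq_nonneg _)
      exact ⟨k, Finset.mem_univ k, by positivity⟩
    rw [hσ]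
    unfold L2PN
    apply Real.sqrt_pos.2
    have : ∑ i, (f (z i) - PN N z f)^2 = ∑ i, (a i)^2 := by
      apply Finset.sum_congr rfl
      intro i _
      rw [ha, hP]
    rw [this]
    positivity
  set C := 24 * Real.sqrt 2 / (n:ℝ) * M + Real.sqrt (72 / ((n:ℝ) * Real.log 2)) * σ with hC
  have hlog2 : 0 < Real.log 2 := Real.log_pos one_lt_two
  have hlog2' : Real.log 2 < 0.6931471808 := Real.log_two_lt_d9
  have hsqrt2 : 1 ≤ Real.sqrt 2 := by
    rw [show (1:ℝ) = Real.sqrt 1 by simp]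
    exact Real.sqrt_le_sqrt (by norm_num)
  have hCterm2 : 0 < Real.sqrt (72 / ((n:ℝ) * Real.log 2)) * σ := by
    apply mul_pos _ hσpos
    apply Real.sqrt_pos.2
    positivity
  have hCterm1 : 0 ≤ 24 * Real.sqrt 2 / (n:ℝ) * M := by positivity
  have hCpos : 0 < C := by rw [hC]; linarith
  -- constraint 1 : ∀ i, |a i| / (C * n) ≤ 1
  have habs : ∀ i : Fin N, |(1 / (C * n)) * a i| ≤ 1 := by
    intro i
    have h1 : 24 * Real.sqrt 2 / (n:ℝ) * M ≤ C := by rw [hC]; linarith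
    have h2 : |a i| ≤ M := hMa i
    have h3 : 24 * Real.sqrt 2 / (n:ℝ) * |a i| ≤ C :=
      le_trans (by apply mul_le_mul_of_nonneg_left h2 (by positivity)) h1
    rw [abs_mul, abs_of_pos (by positivity : (0:ℝ) < 1 / (C * n))]
    rw [div_mul_eq_mul_div, one_mul, div_le_one (by positivity)]
    have h7 : 24 * Real.sqrt 2 * |a i| ≤ C * n := by
      have h8 := mul_le_mul_of_nonneg_right h3 (le_of_lt hnR)
      have h9 : 24 * Real.sqrt 2 / (n:ℝ) * |a i| * n = 24 * Real.sqrt 2 * |a i| := by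
        field_simp
      rwa [h9] at h8
    nlinarith [h7, mul_nonneg (by nlinarith [hsqrt2] : (0:ℝ) ≤ 24 * Real.sqrt 2 - 1)
      (abs_nonneg (a i))]
  -- constraint 2
  have hvar : (n : ℝ) * ((3/4) * (1/(C*n))^2 * ∑ i, (a i)^2) / N ≤ 1/100 := by
    have hCsq : 72 / ((n:ℝ) * Real.log 2) * σ^2 ≤ C^2 := by
      have h1 : Real.sqrt (72 / ((n:ℝ) * Real.log 2)) * σ ≤ C := by rw [hC]; linarith
      have h2 : (Real.sqrt (72 / ((n:ℝ) * Real.log 2)) * σ)^2 ≤ C^2 := by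
        apply pow_le_pow_left₀ (le_of_lt hCterm2) h1
      calc 72 / ((n:ℝ) * Real.log 2) * σ^2
          = (Real.sqrt (72 / ((n:ℝ) * Real.log 2)))^2 * σ^2 := by
            rw [Real.sq_sqrt (by positivity)]
        _ = (Real.sqrt (72 / ((n:ℝ) * Real.log 2)) * σ)^2 := by ring
        _ ≤ C^2 := h2
    -- σ² = T/N  so T = N σ²
    have hTσ : ∑ i, (a i)^2 = (N:ℝ) * σ^2 := by
      rw [hσsq]; field_simp
    rw [hTσ]
    -- n * (3/4 * (1/(Cn))² * N σ²)/N = (3/4) σ²/(C² n)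
    have heq : (n : ℝ) * ((3/4) * (1/(C*n))^2 * ((N:ℝ) * σ^2)) / N
        = (3/4) * (σ^2 / (C^2 * n)) := by
      field_simp
    rw [heq]
    have h4 : σ^2 * 72 ≤ C^2 * ((n:ℝ) * Real.log 2) := by
      calc σ^2 * 72 = (72 / ((n:ℝ) * Real.log 2) * σ^2) * ((n:ℝ) * Real.log 2) := by
            field_simp
        _ ≤ C^2 * ((n:ℝ) * Real.log 2) :=
            mul_le_mul_of_nonneg_right hCsq (by positivity)
    have h6 : σ^2 / (C^2 * n) ≤ Real.log 2 / 72 := by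
      rw [div_le_div_iff₀ (by positivity) (by norm_num)]
      nlinarith [h4]
    calc (3/4) * (σ^2 / (C^2 * n)) ≤ (3/4) * (Real.log 2 / 72) := by
          apply mul_le_mul_of_nonneg_left h6 (by norm_num)
      _ ≤ 1/100 := by nlinarith [hlog2']
  clear_value P a M σ C
  -- Z identity
  have hZ : ∀ π : Equiv.Perm (Fin N), sampleMean N n z f π - P
      = (∑ i, if ((π i : Fin N) : ℕ) < n then a i else 0) / n := by
    intro π
    have hsplit : ∑ i, (if ((π i : Fin N) : ℕ) < n then a i else 0)
        = (∑ i, if ((π i : Fin N) : ℕ) < n then f (z i) else 0)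
          - (∑ i, if ((π i : Fin N) : ℕ) < n then P else 0) := by
      rw [← Finset.sum_sub_distrib]
      apply Finset.sum_congr rfl
      intro i _
      split <;> simp [ha]
    have hconst : ∑ i, (if ((π i : Fin N) : ℕ) < n then P else 0) = (n:ℝ) * P := by
      rw [← Finset.sum_filter, Finset.sum_const, card_filter_perm_lt π hnN, nsmul_eq_mul]
    rw [hsplit, hconst, sub_div, mul_div_cancel_left₀ _ (ne_of_gt hnR)]
    rfl
  -- product identity
  have hprod : ∀ (t : ℝ) (π : Equiv.Perm (Fin N)),
      Real.exp (t * ((∑ i, if ((π i : Fin N) : ℕ) < n then a i else 0) / n))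
      = ∏ i : Fin N, (if ((π i : Fin N) : ℕ) < n then Real.exp ((t/n) * a i) else 1) := by
    intro t π
    have h1 : t * ((∑ i, if ((π i : Fin N) : ℕ) < n then a i else 0) / n)
        = ∑ i, (if ((π i : Fin N) : ℕ) < n then (t/n) * a i else 0) := by
      rw [eq_comm]
      calc ∑ i, (if ((π i : Fin N) : ℕ) < n then (t/n) * a i else 0)
          = ∑ i, (t/n) * (if ((π i : Fin N) : ℕ) < n then a i else 0) := by
            apply Finset.sum_congr rfl
            intro i _
            split <;> simp
        _ = (t/n) * ∑ i, (if ((π i : Fin N) : ℕ) < n then a i else 0) :=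
            (Finset.mul_sum _ _ _).symm
        _ = t * ((∑ i, if ((π i : Fin N) : ℕ) < n then a i else 0) / n) := by ring
    rw [h1, Real.exp_sum]
    apply Finset.prod_congr rfl
    intro i _
    rw [apply_ite Real.exp, Real.exp_zero]
  -- MGF bounds for t = ±1/C
  have hMGF : ∀ t : ℝ, t = 1/C ∨ t = -(1/C) →
      ∑ π : Equiv.Perm (Fin N), Real.exp (t * (sampleMean N n z f π - P))
        ≤ (N.factorial : ℝ) * 1.25 := by
    intro t ht
    have habs' : ∀ i, |t/(n:ℝ) * a i| ≤ 1 := by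
      intro i
      have h0 : |t/(n:ℝ) * a i| = |1/(C*(n:ℝ)) * a i| := by
        rcases ht with rfl | rfl
        · congr 1; ring
        · rw [show -(1/C)/(n:ℝ) * a i = -(1/(C*(n:ℝ)) * a i) by ring, abs_neg]
      rw [h0]; exact habs i
    have hvar' : (n : ℝ) * ((3/4) * (t/(n:ℝ))^2 * ∑ i, (a i)^2) / N ≤ 1/100 := by
      have hseq : (t/(n:ℝ))^2 = (1/(C*(n:ℝ)))^2 := by
        rcases ht with rfl | rfl <;> ring
      rw [hseq]; exact hvar
    have hb := mgf_sum_bound (lt_of_lt_of_le Nat.zero_lt_one hn1) hnN a (t/(n:ℝ))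
      hsum habs' hvar'
    calc ∑ π : Equiv.Perm (Fin N), Real.exp (t * (sampleMean N n z f π - P))
        = ∑ π : Equiv.Perm (Fin N), ∏ i : Fin N,
            (if ((π i : Fin N) : ℕ) < n then Real.exp ((t/(n:ℝ)) * a i) else 1) := by
          apply Finset.sum_congr rfl
          intro π _
          rw [hZ π, hprod t π]
      _ ≤ (N.factorial : ℝ) * 1.25 := hb
  set F := (N.factorial : ℝ) with hF
  have hFpos : (0:ℝ) < F := by rw [hF]; exact_mod_cast Nat.factorial_pos N
  set A := ∑ π : Equiv.Perm (Fin N), Real.exp (|sampleMean N n z f π - P| / C) with hA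
  set B := ∑ π : Equiv.Perm (Fin N), Real.exp (-(|sampleMean N n z f π - P| / C)) with hB
  have hAB : A + B ≤ 2.5 * F := by
    have e1 := hMGF (1/C) (Or.inl rfl)
    have e2 := hMGF (-(1/C)) (Or.inr rfl)
    have hsum2 : A + B = (∑ π : Equiv.Perm (Fin N),
          Real.exp ((1/C) * (sampleMean N n z f π - P)))
        + ∑ π : Equiv.Perm (Fin N), Real.exp ((-(1/C)) * (sampleMean N n z f π - P)) := by
      rw [hA, hB, ← Finset.sum_add_distrib, ← Finset.sum_add_distrib]
      apply Finset.sum_congr rfl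
      intro π _
      rcases abs_cases (sampleMean N n z f π - P) with ⟨h1, _⟩ | ⟨h1, _⟩ <;>
        rw [h1] <;> ring_nf
    rw [hsum2]
    linarith [e1, e2]
  have hCS : F^2 ≤ A * B := by
    have h := Finset.sum_mul_sq_le_sq_mul_sq univ
      (fun π : Equiv.Perm (Fin N) => Real.exp (|sampleMean N n z f π - P| / C / 2))
      (fun π : Equiv.Perm (Fin N) => Real.exp (-(|sampleMean N n z f π - P| / C) / 2))
    have h1 : ∑ π : Equiv.Perm (Fin N),
        Real.exp (|sampleMean N n z f π - P| / C / 2)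
          * Real.exp (-(|sampleMean N n z f π - P| / C) / 2) = F := by
      have : ∀ π : Equiv.Perm (Fin N),
          Real.exp (|sampleMean N n z f π - P| / C / 2)
            * Real.exp (-(|sampleMean N n z f π - P| / C) / 2) = 1 := by
        intro π
        rw [← Real.exp_add,
          show |sampleMean N n z f π - P| / C / 2 + -(|sampleMean N n z f π - P| / C) / 2
            = 0 by ring, Real.exp_zero]
      rw [Finset.sum_congr rfl (fun π _ => this π), Finset.sum_const, Finset.card_univ,
        Fintype.card_perm, Fintype.card_fin, nsmul_eq_mul, mul_one, hF]
    have h2 : ∑ π : Equiv.Perm (Fin N),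
        (Real.exp (|sampleMean N n z f π - P| / C / 2))^2 = A := by
      rw [hA]
      apply Finset.sum_congr rfl
      intro π _
      rw [sq, ← Real.exp_add]
      congr 1
      ring
    have h3 : ∑ π : Equiv.Perm (Fin N),
        (Real.exp (-(|sampleMean N n z f π - P| / C) / 2))^2 = B := by
      rw [hB]
      apply Finset.sum_congr rfl
      intro π _
      rw [sq, ← Real.exp_add]
      congr 1
      ring
    rw [h1, h2, h3] at h
    exact h
  have hAgeF : F ≤ A := by
    rw [hA, hF]
    calc (N.factorial:ℝ) = ∑ _π : Equiv.Perm (Fin N), (1:ℝ) := by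
          rw [Finset.sum_const, Finset.card_univ, Fintype.card_perm, Fintype.card_fin,
            nsmul_eq_mul, mul_one]
      _ ≤ _ := by
          apply Finset.sum_le_sum
          intro π _
          rw [show (1:ℝ) = Real.exp 0 by rw [Real.exp_zero]]
          apply Real.exp_le_exp.2
          exact div_nonneg (abs_nonneg _) hCpos.le
  rw [div_le_iff₀ hFpos]
  have hBA : A * B ≤ A * (2.5 * F - A) := by
    apply mul_le_mul_of_nonneg_left (by linarith) (by linarith)
  nlinarith [hAB, hCS, hAgeF, hFpos, hBA]
end
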